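/- arXiv:1703.02919 — 4 statements merged into one kernel-verified Lean document; each statement's English description precedes it below -/
import Mathlib

section
/- Let X and Y be Banach spaces and let N be an absolute normalized norm on ℝ² with N(1,1) > 1. Then the direct sum X ⊕_N Y (with norm ‖(x,y)‖ = N(‖x‖,‖y‖)) contains a finite convex combination of slices of its closed unit ball that is not open in the relative weak topology of the closed unit ball. -/
open scoped Pointwise

noncomputable section

section AbsoluteSum

variable (X Y : Type*) [NormedAddCommGroup X] [NormedSpace ℝ X]
  [NormedAddCommGroup Y] [NormedSpace ℝ Y] (N : ℝ × ℝ → ℝ)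

/-- The closed unit ball of `X ⊕_N Y`, the direct sum equipped with the norm
`‖(x, y)‖ = N(‖x‖, ‖y‖)`. -/
def NBall : Set (X × Y) := {p | N (‖p.1‖, ‖p.2‖) ≤ 1}

/-- A functional on `X ⊕_N Y` (identified with a pair of functionals) lies on the
dual unit sphere: it is bounded by `1` on the unit ball and its supremum there is `1`. -/
def NDualSphere (f : StrongDual ℝ X × StrongDual ℝ Y) : Prop :=
  (∀ p ∈ NBall X Y N, f.1 p.1 + f.2 p.2 ≤ 1) ∧
    ∀ ε > 0, ∃ p ∈ NBall X Y N, 1 - ε < f.1 p.1 + f.2 p.2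

/-- The slice `S(f, α)` of the closed unit ball of `X ⊕_N Y`. -/
def NSlice (f : StrongDual ℝ X × StrongDual ℝ Y) (α : ℝ) : Set (X × Y) :=
  {p ∈ NBall X Y N | 1 - α < f.1 p.1 + f.2 p.2}

/-- `z` is an interior point of `C` in the relative weak topology of the closed unit
ball of `X ⊕_N Y` (whose continuous functionals are exactly the pairs of continuous
functionals on `X` and on `Y`, since `N` is equivalent to the product norm). -/
def NRelWeakInteriorPt (C : Set (X × Y)) (z : X × Y) : Prop :=
  ∃ (F : Finset (StrongDual ℝ X × StrongDual ℝ Y)) (δ : ℝ), 0 < δ ∧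
    {w ∈ NBall X Y N | ∀ g ∈ F,
      |g.1 w.1 + g.2 w.2 - (g.1 z.1 + g.2 z.2)| < δ} ⊆ C

end AbsoluteSum



section MyAux

variable {N : ℝ × ℝ → ℝ}

private lemma myN_conv (hNadd : ∀ p q : ℝ × ℝ, N (p + q) ≤ N p + N q)
    (hNsmul : ∀ (c : ℝ) (p : ℝ × ℝ), N (c • p) = |c| * N p)
    (p q : ℝ × ℝ) {s t : ℝ} (hs : 0 ≤ s) (ht : 0 ≤ t) :
    N (s • p + t • q) ≤ s * N p + t * N q := by
  calc N (s • p + t • q) ≤ N (s • p) + N (t • q) := hNadd _ _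
  _ = s * N p + t * N q := by rw [hNsmul, hNsmul, abs_of_nonneg hs, abs_of_nonneg ht]

private lemma myN_mono1 (hNadd : ∀ p q : ℝ × ℝ, N (p + q) ≤ N p + N q)
    (hNsmul : ∀ (c : ℝ) (p : ℝ × ℝ), N (c • p) = |c| * N p)
    (habs : ∀ a b : ℝ, N (a, b) = N (|a|, |b|))
    {a a' : ℝ} (c : ℝ) (ha : 0 ≤ a) (h : a ≤ a') : N (a, c) ≤ N (a', c) := by
  rcases eq_or_lt_of_le (ha.trans h) with h0 | h0
  · have ha0 : a = 0 := le_antisymm (h.trans h0.symm.le) ha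
    rw [ha0, ← h0]
  · set t : ℝ := (1 + a / a') / 2 with hts
    have hd : 0 ≤ a / a' := div_nonneg ha h0.le
    have hd1 : a / a' ≤ 1 := (div_le_one h0).mpr h
    have ht0 : 0 ≤ t := by positivity
    have ht1 : t ≤ 1 := by rw [hts]; linarith
    have key : (a, c) = t • ((a', c) : ℝ × ℝ) + (1 - t) • ((-a', c) : ℝ × ℝ) := by
      have : t * a' + (1 - t) * (-a') = a := by
        have : (2 * t - 1) * a' = a := by
          rw [hts]; field_simp; ring
          
        nlinarith [this]
      simp only [Prod.smul_mk, smul_eq_mul, Prod.mk_add_mk]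
      rw [this]
      congr 1
      ring
    have hneg : N (-a', c) = N (a', c) := by
      rw [habs (-a') c, habs a' c, abs_neg]
    calc N (a, c) = N (t • ((a', c) : ℝ × ℝ) + (1 - t) • ((-a', c) : ℝ × ℝ)) := by rw [← key]
    _ ≤ t * N (a', c) + (1 - t) * N (-a', c) :=
        myN_conv hNadd hNsmul _ _ ht0 (by linarith)
    _ = N (a', c) := by rw [hneg]; ring

private lemma myN_mono2 (hNadd : ∀ p q : ℝ × ℝ, N (p + q) ≤ N p + N q)
    (hNsmul : ∀ (c : ℝ) (p : ℝ × ℝ), N (c • p) = |c| * N p)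
    (habs : ∀ a b : ℝ, N (a, b) = N (|a|, |b|))
    {b b' : ℝ} (c : ℝ) (hb : 0 ≤ b) (h : b ≤ b') : N (c, b) ≤ N (c, b') := by
  rcases eq_or_lt_of_le (hb.trans h) with h0 | h0
  · have hb0 : b = 0 := le_antisymm (h.trans h0.symm.le) hb
    rw [hb0, ← h0]
  · set t : ℝ := (1 + b / b') / 2 with hts
    have hd : 0 ≤ b / b' := div_nonneg hb h0.le
    have hd1 : b / b' ≤ 1 := (div_le_one h0).mpr h
    have ht0 : 0 ≤ t := by positivity
    have ht1 : t ≤ 1 := by rw [hts]; linarith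
    have key : (c, b) = t • ((c, b') : ℝ × ℝ) + (1 - t) • ((c, -b') : ℝ × ℝ) := by
      have : t * b' + (1 - t) * (-b') = b := by
        have : (2 * t - 1) * b' = b := by
          rw [hts]; field_simp; ring
        nlinarith [this]
      simp only [Prod.smul_mk, smul_eq_mul, Prod.mk_add_mk]
      rw [this]
      congr 1
      ring
    have hneg : N (c, -b') = N (c, b') := by
      rw [habs c (-b'), habs c b', abs_neg]
    calc N (c, b) = N (t • ((c, b') : ℝ × ℝ) + (1 - t) • ((c, -b') : ℝ × ℝ)) := by rw [← key]
    _ ≤ t * N (c, b') + (1 - t) * N (c, -b') :=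
        myN_conv hNadd hNsmul _ _ ht0 (by linarith)
    _ = N (c, b') := by rw [hneg]; ring

private lemma myNorming {X : Type*} [NormedAddCommGroup X] [NormedSpace ℝ X]
    (f : StrongDual ℝ X) (hf : ‖f‖ = 1) {ε : ℝ} (hε : 0 < ε) :
    ∃ x : X, ‖x‖ ≤ 1 ∧ 1 - ε < f x := by
  have hr : 1 - min ε 1 / 2 < ‖f‖ := by
    rw [hf]
    have : 0 < min ε 1 := lt_min hε one_pos
    linarith
  obtain ⟨x, hx1, hx2⟩ := f.exists_lt_apply_of_lt_opNorm hr
  have hmin : min ε 1 / 2 ≤ ε := by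
    have := min_le_left ε (1 : ℝ); linarith
  rcases le_or_gt 0 (f x) with hfx | hfx
  · refine ⟨x, hx1.le, ?_⟩
    rw [Real.norm_eq_abs, abs_of_nonneg hfx] at hx2
    linarith
  · refine ⟨-x, by simpa using hx1.le, ?_⟩
    rw [Real.norm_eq_abs, abs_of_neg hfx] at hx2
    rw [map_neg]
    linarith

private lemma myKer {X Y : Type*} [NormedAddCommGroup Y] [NormedSpace ℝ Y]
    [NormedAddCommGroup X] [NormedSpace ℝ X]
    (hYinf : ¬ FiniteDimensional ℝ Y)
    (F : Finset (StrongDual ℝ X × StrongDual ℝ Y)) :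
    ∃ k : Y, k ≠ 0 ∧ ∀ g ∈ F, g.2 k = 0 := by
  by_contra hcon
  push_neg at hcon
  let L : Y →ₗ[ℝ] (F → ℝ) :=
    { toFun := fun y g => (g : StrongDual ℝ X × StrongDual ℝ Y).2 y
      map_add' := by intro y z; funext g; simp
      map_smul' := by intro c y; funext g; simp }
  have hinj : Function.Injective L := by
    rw [← LinearMap.ker_eq_bot]
    rw [Submodule.eq_bot_iff]
    intro y hy
    by_contra hy0
    obtain ⟨g, hgF, hg⟩ := hcon y hy0
    have : L y ⟨g, hgF⟩ = 0 := by rw [hy]; rfl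
    exact hg this
  exact hYinf (Module.Finite.of_injective L hinj)

end MyAux

/-- If `N` is an absolute normalized norm on `ℝ²` with `N(1,1) > 1`,
then the closed unit ball of `X ⊕_N Y` admits a finite convex combination of slices
which is not open in the relative weak topology of the closed unit ball. -/
theorem exists_ccs_not_relWeaklyOpen_N_sum
    {X Y : Type*} [NormedAddCommGroup X] [NormedSpace ℝ X] [CompleteSpace X]
    [NormedAddCommGroup Y] [NormedSpace ℝ Y] [CompleteSpace Y]
    (hXinf : ¬ FiniteDimensional ℝ X) (hYinf : ¬ FiniteDimensional ℝ Y)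
    (N : ℝ × ℝ → ℝ)
    (hN0 : ∀ p : ℝ × ℝ, N p = 0 ↔ p = 0)
    (hNadd : ∀ p q : ℝ × ℝ, N (p + q) ≤ N p + N q)
    (hNsmul : ∀ (c : ℝ) (p : ℝ × ℝ), N (c • p) = |c| * N p)
    (habs : ∀ a b : ℝ, N (a, b) = N (|a|, |b|))
    (hnorm1 : N (1, 0) = 1) (hnorm2 : N (0, 1) = 1)
    (h11 : 1 < N (1, 1)) :
    ∃ (n : ℕ) (f : Fin n → StrongDual ℝ X × StrongDual ℝ Y)
      (α lam : Fin n → ℝ), 0 < n ∧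
      (∀ i, NDualSphere X Y N (f i)) ∧ (∀ i, 0 < α i) ∧ (∀ i, 0 ≤ lam i) ∧
      (∑ i, lam i) = 1 ∧
      ∃ z ∈ ∑ i, lam i • NSlice X Y N (f i) (α i),
        ¬ NRelWeakInteriorPt X Y N (∑ i, lam i • NSlice X Y N (f i) (α i)) z := by

  classical
  set m := N (1, 1) with hmdef
  have hm : (1:ℝ) < m := h11
  have hm0 : (0:ℝ) < m := lt_trans one_pos hm
  have hmi0 : 0 < m⁻¹ := inv_pos.mpr hm0
  have hmi1 : m⁻¹ < 1 := by
    rw [inv_lt_one_iff₀]; right; exact hm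
  set β : ℝ := (1 + m⁻¹) / 2 with hβdef
  have hβ0 : 0 < β := by rw [hβdef]; linarith
  have hβ1 : β < 1 := by rw [hβdef]; linarith
  have hβm : 1 < β * m := by
    have hmm : m⁻¹ * m = 1 := inv_mul_cancel₀ (ne_of_gt hm0)
    rw [hβdef]; nlinarith
  set α : ℝ := 1 - β with hαdef
  have hα0 : 0 < α := by rw [hαdef]; linarith
  -- scalar facts about N
  have hN10 : ∀ t : ℝ, 0 ≤ t → N (t, 0) = t := by
    intro t ht
    have h1 : (t • ((1, 0) : ℝ × ℝ)) = (t, 0) := by simp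
    have := hNsmul t (1, 0)
    rw [h1, hnorm1, abs_of_nonneg ht, mul_one] at this
    exact this
  have hN01 : ∀ t : ℝ, 0 ≤ t → N (0, t) = t := by
    intro t ht
    have h1 : (t • ((0, 1) : ℝ × ℝ)) = (0, t) := by simp
    have := hNsmul t (0, 1)
    rw [h1, hnorm2, abs_of_nonneg ht, mul_one] at this
    exact this
  have hNββ : N (β, β) = β * m := by
    have h1 : (β • ((1, 1) : ℝ × ℝ)) = (β, β) := by rw [Prod.smul_mk]; norm_num
    have := hNsmul β (1, 1)
    rw [h1, abs_of_nonneg hβ0.le, ← hmdef] at this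
    exact this
  -- points of the ball have first coordinate of norm ≤ 1
  have hball1 : ∀ p : X × Y, p ∈ NBall X Y N → ‖p.1‖ ≤ 1 := by
    intro p hp
    have h1 : N (‖p.1‖, 0) ≤ N (‖p.1‖, ‖p.2‖) :=
      myN_mono2 hNadd hNsmul habs _ le_rfl (norm_nonneg _)
    rw [hN10 _ (norm_nonneg _)] at h1
    exact h1.trans hp
  -- in the ball, first coordinate big forces second coordinate small
  have hsmall : ∀ p : X × Y, p ∈ NBall X Y N → β < ‖p.1‖ → ‖p.2‖ < β := by
    intro p hp h1
    by_contra h2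
    push_neg at h2
    have e1 : N (β, β) ≤ N (‖p.1‖, β) :=
      myN_mono1 hNadd hNsmul habs _ hβ0.le h1.le
    have e2 : N (‖p.1‖, β) ≤ N (‖p.1‖, ‖p.2‖) :=
      myN_mono2 hNadd hNsmul habs _ hβ0.le h2
    have : N (‖p.1‖, ‖p.2‖) ≤ 1 := hp
    rw [hNββ] at e1
    linarith
  -- a norm-one functional on X
  have hnt : Nontrivial X := by
    by_contra hns
    rw [not_nontrivial_iff_subsingleton] at hns
    exact hXinf (Module.Finite.of_surjective (0 : (Fin 0 → ℝ) →ₗ[ℝ] X)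
      (fun x => ⟨0, Subsingleton.elim _ _⟩))
  obtain ⟨x1, hx1⟩ := exists_ne (0 : X)
  obtain ⟨xs, hxs, -⟩ := exists_dual_vector ℝ x1 (norm_ne_zero_iff.mpr hx1)
  -- pairs (g, 0) with ‖g‖ = 1 lie on the dual sphere
  have hfun_le : ∀ (g : StrongDual ℝ X), ‖g‖ = 1 → ∀ x : X, g x ≤ ‖x‖ := by
    intro g hg x
    calc g x ≤ |g x| := le_abs_self _
    _ = ‖g x‖ := (Real.norm_eq_abs _).symm
    _ ≤ ‖g‖ * ‖x‖ := g.le_opNorm x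
    _ = ‖x‖ := by rw [hg, one_mul]
  have hsphere : ∀ (g : StrongDual ℝ X), ‖g‖ = 1 →
      NDualSphere X Y N (g, (0 : StrongDual ℝ Y)) := by
    intro g hg
    constructor
    · intro p hp
      have h1 : ‖p.1‖ ≤ 1 := hball1 p hp
      have h2 : g p.1 ≤ ‖p.1‖ := hfun_le g hg p.1
      simp only [ContinuousLinearMap.zero_apply]
      linarith
    · intro ε hε
      obtain ⟨x, hx, hgx⟩ := myNorming g hg hε
      refine ⟨(x, 0), ?_, ?_⟩
      · show N (‖x‖, ‖(0 : Y)‖) ≤ 1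
        rw [norm_zero, hN10 _ (norm_nonneg _)]
        exact hx
      · simp only [ContinuousLinearMap.zero_apply, add_zero]
        exact hgx
  -- members of the slices have small second coordinate
  have hslice_small : ∀ (g : StrongDual ℝ X), ‖g‖ = 1 →
      ∀ p ∈ NSlice X Y N (g, (0 : StrongDual ℝ Y)) α, ‖p.2‖ < β := by
    intro g hg p hp
    obtain ⟨hpball, hpval⟩ := hp
    simp only [ContinuousLinearMap.zero_apply, add_zero] at hpval
    have h1 : β < g p.1 := by rw [hαdef] at hpval; linarith
    have h2 : g p.1 ≤ ‖p.1‖ := hfun_le g hg p.1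
    exact hsmall p hpball (lt_of_lt_of_le h1 h2)
  have hxs' : ‖-xs‖ = 1 := by rw [norm_neg]; exact hxs
  refine ⟨2, ![(xs, 0), (-xs, 0)], ![α, α], ![1/2, 1/2], two_pos, ?_, ?_, ?_, ?_, ?_⟩
  · intro i
    fin_cases i
    · exact hsphere xs hxs
    · exact hsphere (-xs) hxs'
  · intro i; fin_cases i <;> exact hα0
  · intro i; fin_cases i <;> norm_num
  · rw [Fin.sum_univ_two]; norm_num
  · have hsum : (∑ i : Fin 2, (![1/2, 1/2] : Fin 2 → ℝ) i •
        NSlice X Y N ((![(xs, 0), (-xs, 0)] :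
          Fin 2 → StrongDual ℝ X × StrongDual ℝ Y) i)
          ((![α, α] : Fin 2 → ℝ) i)) =
        (1/2 : ℝ) • NSlice X Y N (xs, (0 : StrongDual ℝ Y)) α +
        (1/2 : ℝ) • NSlice X Y N (-xs, (0 : StrongDual ℝ Y)) α := by
      rw [Fin.sum_univ_two]
      simp only [Matrix.cons_val_zero, Matrix.cons_val_one, Matrix.head_cons]
    rw [hsum]
    obtain ⟨x0, hx0, hx0v⟩ := myNorming xs hxs hα0
    have hpmem : ((x0, 0) : X × Y) ∈ NSlice X Y N (xs, (0 : StrongDual ℝ Y)) α := by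
      refine ⟨?_, ?_⟩
      · show N (‖x0‖, ‖(0 : Y)‖) ≤ 1
        rw [norm_zero, hN10 _ (norm_nonneg _)]
        exact hx0
      · simp only [ContinuousLinearMap.zero_apply, add_zero]
        exact hx0v
    have hqmem : ((-x0, 0) : X × Y) ∈ NSlice X Y N (-xs, (0 : StrongDual ℝ Y)) α := by
      refine ⟨?_, ?_⟩
      · show N (‖-x0‖, ‖(0 : Y)‖) ≤ 1
        rw [norm_neg, norm_zero, hN10 _ (norm_nonneg _)]
        exact hx0
      · simp only [ContinuousLinearMap.zero_apply, add_zero, ContinuousLinearMap.neg_apply,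
          map_neg, neg_neg]
        exact hx0v
    refine ⟨0, ?_, ?_⟩
    · have hmem := Set.add_mem_add (Set.smul_mem_smul_set (a := (1/2 : ℝ)) hpmem)
        (Set.smul_mem_smul_set (a := (1/2 : ℝ)) hqmem)
      have heq : (1/2 : ℝ) • ((x0, 0) : X × Y) + (1/2 : ℝ) • ((-x0, 0) : X × Y) = 0 := by
        rw [Prod.smul_mk, Prod.smul_mk, Prod.mk_add_mk]
        simp
      rw [heq] at hmem
      exact hmem
    · rintro ⟨F, δ, hδ, hsub⟩
      obtain ⟨k0, hk0, hker⟩ := myKer hYinf F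
      have hk0n : (0:ℝ) < ‖k0‖ := norm_pos_iff.mpr hk0
      set c : ℝ := ((1 + β) / 2) / ‖k0‖ with hcdef
      have hc0 : 0 ≤ c := by positivity
      set w : X × Y := (0, c • k0) with hwdef
      have hknorm : ‖c • k0‖ = (1 + β) / 2 := by
        rw [norm_smul, Real.norm_eq_abs, abs_of_nonneg hc0, hcdef]
        field_simp
      have hwball : w ∈ NBall X Y N := by
        show N (‖(0 : X)‖, ‖c • k0‖) ≤ 1
        rw [norm_zero, hknorm, hN01 _ (by linarith)]
        linarith
      have hw : w ∈ {w ∈ NBall X Y N | ∀ g ∈ F,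
          |g.1 w.1 + g.2 w.2 - (g.1 (0 : X × Y).1 + g.2 (0 : X × Y).2)| < δ} := by
        refine ⟨hwball, ?_⟩
        intro g hg
        have h0 : g.2 (c • k0) = 0 := by rw [map_smul, hker g hg, smul_zero]
        have hval : g.1 w.1 + g.2 w.2 - (g.1 (0 : X × Y).1 + g.2 (0 : X × Y).2) = 0 := by
          show g.1 0 + g.2 (c • k0) - (g.1 0 + g.2 0) = 0
          rw [map_zero, map_zero, h0]
          ring
        rw [hval, abs_zero]
        exact hδ
      have hwC := hsub hw
      rw [Set.mem_add] at hwC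
      obtain ⟨a, ha, b, hb, hab⟩ := hwC
      rw [Set.mem_smul_set] at ha hb
      obtain ⟨p, hp, rfl⟩ := ha
      obtain ⟨q, hq, rfl⟩ := hb
      have hp2 : ‖p.2‖ < β := hslice_small xs hxs p hp
      have hq2 : ‖q.2‖ < β := hslice_small (-xs) hxs' q hq
      have hw2 : w.2 = (1/2 : ℝ) • p.2 + (1/2 : ℝ) • q.2 := by
        rw [← hab]; rfl
      have hbound : ‖w.2‖ < β := by
        rw [hw2]
        calc ‖(1/2 : ℝ) • p.2 + (1/2 : ℝ) • q.2‖
            ≤ ‖(1/2 : ℝ) • p.2‖ + ‖(1/2 : ℝ) • q.2‖ := norm_add_le _ _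
        _ = (1/2) * ‖p.2‖ + (1/2) * ‖q.2‖ := by
            rw [norm_smul, norm_smul]; norm_num
        _ < β := by linarith
      have hwn : ‖w.2‖ = (1 + β) / 2 := hknorm
      rw [hwn] at hbound
      linarith
end
end

section
/- Let X and Y be infinite-dimensional Banach spaces, each with the property that every finite convex combination of slices of its closed unit ball intersects its unit sphere, and let N be an absolute normalized norm on ℝ² with the positive strong diameter 2 property. Then every finite convex combination of slices of the closed unit ball of X ⊕_N Y intersects the unit sphere of X ⊕_N Y. -/
open scoped Pointwise

noncomputable section

/-- The slice `S(f, α)` of the closed unit ball of `Z`. -/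
def ballSlice (Z : Type*) [NormedAddCommGroup Z] [NormedSpace ℝ Z]
    (f : StrongDual ℝ Z) (α : ℝ) : Set Z :=
  {z ∈ Metric.closedBall (0 : Z) 1 | 1 - α < f z}

/-- `C` is a finite convex combination of slices of the closed unit ball of `Z`. -/
def IsCCS (Z : Type*) [NormedAddCommGroup Z] [NormedSpace ℝ Z] (C : Set Z) : Prop :=
  ∃ (n : ℕ) (f : Fin n → StrongDual ℝ Z) (α lam : Fin n → ℝ),
    0 < n ∧ (∀ i, ‖f i‖ = 1) ∧ (∀ i, 0 < α i) ∧ (∀ i, 0 ≤ lam i) ∧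
    (∑ i, lam i) = 1 ∧ C = ∑ i, lam i • ballSlice Z (f i) (α i)

/-- `z` is an interior point of `C` in the relative weak topology of the closed
unit ball of `Z`: some basic weak neighbourhood of `z`, intersected with the
closed unit ball, is contained in `C`. -/
def RelWeakInteriorPt (Z : Type*) [NormedAddCommGroup Z] [NormedSpace ℝ Z]
    (C : Set Z) (z : Z) : Prop :=
  ∃ (F : Finset (StrongDual ℝ Z)) (δ : ℝ), 0 < δ ∧
    {w ∈ Metric.closedBall (0 : Z) 1 | ∀ f ∈ F, |f w - f z| < δ} ⊆ C


/-- `C` is relatively weakly open in the closed unit ball of `Z`. -/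
def RelWeaklyOpen (Z : Type*) [NormedAddCommGroup Z] [NormedSpace ℝ Z] (C : Set Z) : Prop :=
  ∀ z ∈ C, RelWeakInteriorPt Z C z

/-- (P1): every finite convex combination of slices of the closed unit ball of `Z`
is relatively weakly open in the closed unit ball. -/
def PropP1 (Z : Type*) [NormedAddCommGroup Z] [NormedSpace ℝ Z] : Prop :=
  ∀ C : Set Z, IsCCS Z C → RelWeaklyOpen Z C

/-- (P2): every finite convex combination of slices of the closed unit ball of `Z`
has nonempty interior in the relative weak topology of the closed unit ball. -/
def PropP2 (Z : Type*) [NormedAddCommGroup Z] [NormedSpace ℝ Z] : Prop :=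
  ∀ C : Set Z, IsCCS Z C → ∃ z ∈ C, RelWeakInteriorPt Z C z

/-- (P3): every finite convex combination of slices of the closed unit ball of `Z`
intersects the unit sphere of `Z`. -/
def PropP3 (Z : Type*) [NormedAddCommGroup Z] [NormedSpace ℝ Z] : Prop :=
  ∀ C : Set Z, IsCCS Z C → ∃ z ∈ C, ‖z‖ = 1
/-- An absolute normalized norm `N` on `ℝ²` has the positive strong diameter 2
property: for positive norm-one functionals `fᵢ` on `(ℝ², N)`, `αᵢ > 0` and convex
coefficients `λᵢ`, there are positive points `(aᵢ, bᵢ)` of the slices `S(fᵢ, αᵢ)` of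
the unit ball of `(ℝ², N)` with `N(Σᵢ λᵢ (aᵢ, bᵢ)) = 1`. -/
def PositiveSD2P (N : ℝ × ℝ → ℝ) : Prop :=
  ∀ (n : ℕ) (f : Fin n → ℝ × ℝ) (α lam : Fin n → ℝ),
    (∀ i, 0 ≤ (f i).1 ∧ 0 ≤ (f i).2) →
    (∀ i, (∀ a b : ℝ, N (a, b) ≤ 1 → (f i).1 * a + (f i).2 * b ≤ 1) ∧
      ∀ ε > 0, ∃ a b : ℝ, N (a, b) ≤ 1 ∧ 1 - ε < (f i).1 * a + (f i).2 * b) →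
    (∀ i, 0 < α i) → (∀ i, 0 ≤ lam i) → (∑ i, lam i) = 1 →
    ∃ a b : Fin n → ℝ,
      (∀ i, 0 ≤ a i ∧ 0 ≤ b i ∧ N (a i, b i) ≤ 1 ∧
        1 - α i < (f i).1 * a i + (f i).2 * b i) ∧
      N (∑ i, lam i * a i, ∑ i, lam i * b i) = 1


lemma N_mono' {N : ℝ × ℝ → ℝ}
    (hNadd : ∀ p q : ℝ × ℝ, N (p + q) ≤ N p + N q)
    (hNsmul : ∀ (c : ℝ) (p : ℝ × ℝ), N (c • p) = |c| * N p)
    (habs : ∀ a b : ℝ, N (a, b) = N (|a|, |b|))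
    {a a' b b' : ℝ} (ha : 0 ≤ a) (ha' : a ≤ a') (hb : 0 ≤ b) (hb' : b ≤ b') :
    N (a, b) ≤ N (a', b') := by
  have key1 : ∀ w u v : ℝ, 0 ≤ u → u ≤ v → N (u, w) ≤ N (v, w) := by
    intro w u v hu huv
    rcases eq_or_lt_of_le (hu.trans huv) with hv | hv
    · have h1 : u = 0 := le_antisymm (huv.trans hv.symm.le) hu
      rw [h1, ← hv]
    · have hv0 : v ≠ 0 := hv.ne'
      have htn : 0 ≤ (v + u) / (2 * v) := by positivity
      have hsn : 0 ≤ (v - u) / (2 * v) := by apply div_nonneg <;> linarith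
      have hts : (v + u) / (2 * v) + (v - u) / (2 * v) = 1 := by field_simp; ring
      have hdec : ((u, w) : ℝ × ℝ)
          = ((v + u) / (2 * v)) • ((v, w) : ℝ × ℝ) + ((v - u) / (2 * v)) • ((-v, w) : ℝ × ℝ) := by
        refine Prod.ext ?_ ?_ <;> simp only [Prod.smul_mk, Prod.mk_add_mk, smul_eq_mul]
        · field_simp; ring
        · field_simp; ring
      have hneg : N (-v, w) = N (v, w) := by
        rw [habs (-v) w, abs_neg, ← habs]
      calc N (u, w) ≤ N (((v + u) / (2 * v)) • ((v, w) : ℝ × ℝ))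
            + N (((v - u) / (2 * v)) • ((-v, w) : ℝ × ℝ)) := by
            nth_rewrite 1 [hdec]; exact hNadd _ _
        _ = (v + u) / (2 * v) * N (v, w) + (v - u) / (2 * v) * N (v, w) := by
            rw [hNsmul, hNsmul, abs_of_nonneg htn, abs_of_nonneg hsn, hneg]
        _ = N (v, w) := by rw [← add_mul, hts, one_mul]
  have key2 : ∀ w u v : ℝ, 0 ≤ u → u ≤ v → N (w, u) ≤ N (w, v) := by
    intro w u v hu huv
    rcases eq_or_lt_of_le (hu.trans huv) with hv | hv
    · have h1 : u = 0 := le_antisymm (huv.trans hv.symm.le) hu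
      rw [h1, ← hv]
    · have hv0 : v ≠ 0 := hv.ne'
      have htn : 0 ≤ (v + u) / (2 * v) := by positivity
      have hsn : 0 ≤ (v - u) / (2 * v) := by apply div_nonneg <;> linarith
      have hts : (v + u) / (2 * v) + (v - u) / (2 * v) = 1 := by field_simp; ring
      have hdec : ((w, u) : ℝ × ℝ)
          = ((v + u) / (2 * v)) • ((w, v) : ℝ × ℝ) + ((v - u) / (2 * v)) • ((w, -v) : ℝ × ℝ) := by
        refine Prod.ext ?_ ?_ <;> simp only [Prod.smul_mk, Prod.mk_add_mk, smul_eq_mul]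
        · field_simp; ring
        · field_simp; ring
      have hneg : N (w, -v) = N (w, v) := by
        rw [habs w (-v), abs_neg, ← habs]
      calc N (w, u) ≤ N (((v + u) / (2 * v)) • ((w, v) : ℝ × ℝ))
            + N (((v - u) / (2 * v)) • ((w, -v) : ℝ × ℝ)) := by
            nth_rewrite 1 [hdec]; exact hNadd _ _
        _ = (v + u) / (2 * v) * N (w, v) + (v - u) / (2 * v) * N (w, v) := by
            rw [hNsmul, hNsmul, abs_of_nonneg htn, abs_of_nonneg hsn, hneg]
        _ = N (w, v) := by rw [← add_mul, hts, one_mul]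
  exact (key1 b a a' ha ha').trans (key2 a' b b' hb hb')

lemma dual_exists_le' {X : Type*} [NormedAddCommGroup X] [NormedSpace ℝ X]
    (g : StrongDual ℝ X) {r : ℝ} (hr : r < ‖g‖) :
    ∃ x : X, ‖x‖ ≤ 1 ∧ r < g x := by
  obtain ⟨x, hx1, hx2⟩ := g.exists_lt_apply_of_lt_opNorm hr
  rcases le_or_gt 0 (g x) with hs | hs
  · exact ⟨x, hx1.le, by rwa [Real.norm_eq_abs, abs_of_nonneg hs] at hx2⟩
  · refine ⟨-x, by simpa using hx1.le, ?_⟩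
    rw [map_neg]
    rwa [Real.norm_eq_abs, abs_of_neg hs] at hx2

lemma space_point' {X : Type*} [NormedAddCommGroup X] [NormedSpace ℝ X]
    (hnt : ∃ x0 : X, x0 ≠ 0) (hX : PropP3 X) {n : ℕ} (hn : 0 < n)
    (g : Fin n → StrongDual ℝ X) (β : Fin n → ℝ) (hβ : ∀ i, 0 < β i)
    (c : Fin n → ℝ) (hc : ∀ i, 0 ≤ c i) :
    ∃ x : Fin n → X, (∀ i, ‖x i‖ ≤ 1 ∧ ‖g i‖ * (1 - β i) ≤ g i (x i)) ∧
      ‖∑ i, c i • x i‖ = ∑ i, c i := by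
  classical
  obtain ⟨x0, hx0⟩ := hnt
  obtain ⟨g0, hg0, -⟩ := exists_dual_vector ℝ x0 (norm_ne_zero_iff.2 hx0)
  set φ : Fin n → StrongDual ℝ X := fun i => if g i = 0 then g0 else ‖g i‖⁻¹ • g i with hφ
  have hφ1 : ∀ i, ‖φ i‖ = 1 := by
    intro i
    by_cases hgi : g i = 0
    · simp [hφ, hgi, hg0]
    · have hg : (0:ℝ) < ‖g i‖ := norm_pos_iff.2 hgi
      rw [hφ]
      simp only [hgi, if_false]
      rw [norm_smul, Real.norm_eq_abs, abs_of_nonneg (by positivity), inv_mul_cancel₀ hg.ne']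
  have hslice : ∀ i, ∀ x ∈ ballSlice X (φ i) (β i),
      ‖x‖ ≤ 1 ∧ ‖g i‖ * (1 - β i) ≤ g i x := by
    intro i x hx
    obtain ⟨hx1, hx2⟩ := hx
    rw [Metric.mem_closedBall, dist_zero_right] at hx1
    refine ⟨hx1, ?_⟩
    by_cases hgi : g i = 0
    · simp [hgi]
    · have hg : (0:ℝ) < ‖g i‖ := norm_pos_iff.2 hgi
      have h2 : (1 - β i) < ‖g i‖⁻¹ * g i x := by
        have : φ i = ‖g i‖⁻¹ • g i := by rw [hφ]; simp [hgi]
        rw [this] at hx2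
        simpa using hx2
      have := mul_lt_mul_of_pos_left h2 hg
      calc ‖g i‖ * (1 - β i) ≤ ‖g i‖ * (‖g i‖⁻¹ * g i x) := this.le
        _ = g i x := by field_simp
  have hne : ∀ i, ∃ x, x ∈ ballSlice X (φ i) (β i) := by
    intro i
    obtain ⟨x, hx1, hx2⟩ := dual_exists_le' (φ i)
      (show 1 - β i < ‖φ i‖ by rw [hφ1]; linarith [hβ i])
    exact ⟨x, by rw [Metric.mem_closedBall, dist_zero_right]; exact hx1, hx2⟩
  by_cases hA : (∑ i, c i) = 0
  · choose x hx using hne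
    refine ⟨x, fun i => hslice i (x i) (hx i), ?_⟩
    have hz : ∀ i ∈ Finset.univ, c i • x i = 0 := by
      intro i _
      have : c i = 0 := by
        have := (Finset.sum_eq_zero_iff_of_nonneg (fun j _ => hc j)).1 hA i (Finset.mem_univ i)
        exact this
      simp [this]
    rw [Finset.sum_congr rfl hz, hA]
    simp
  · have hApos : 0 < ∑ i, c i :=
      lt_of_le_of_ne (Finset.sum_nonneg fun i _ => hc i) (Ne.symm hA)
    have hCCS : IsCCS X (∑ i, (c i / (∑ j, c j)) • ballSlice X (φ i) (β i)) :=
      ⟨n, φ, β, fun i => c i / (∑ j, c j), hn, hφ1, hβ,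
        fun i => div_nonneg (hc i) hApos.le,
        by rw [← Finset.sum_div]; field_simp, rfl⟩
    obtain ⟨u, hu, hunorm⟩ := hX _ hCCS
    rw [Set.mem_fintype_sum] at hu
    obtain ⟨w, hw, hwsum⟩ := hu
    have hdecomp : ∀ i, ∃ x ∈ ballSlice X (φ i) (β i), (c i / (∑ j, c j)) • x = w i :=
      fun i => Set.mem_smul_set.1 (hw i)
    choose x hx hxw using hdecomp
    refine ⟨x, fun i => hslice i (x i) (hx i), ?_⟩
    have hsum : ∑ i, c i • x i = (∑ j, c j) • u := by
      rw [← hwsum, Finset.smul_sum]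
      refine Finset.sum_congr rfl fun i _ => ?_
      rw [← hxw i, smul_smul]
      congr 1
      field_simp
    rw [hsum, norm_smul, hunorm, Real.norm_eq_abs, abs_of_pos hApos, mul_one]

/-- If the infinite-dimensional Banach spaces `X` and `Y` both have
the property that every finite convex combination of slices of the closed unit ball
meets the unit sphere, and `N` is an absolute normalized norm on `ℝ²` with the
positive strong diameter 2 property, then every finite convex combination of slices
of the closed unit ball of `X ⊕_N Y` meets the unit sphere of `X ⊕_N Y`. -/
theorem ccs_meets_sphere_N_sum
    {X Y : Type*} [NormedAddCommGroup X] [NormedSpace ℝ X] [CompleteSpace X]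
    [NormedAddCommGroup Y] [NormedSpace ℝ Y] [CompleteSpace Y]
    (hXinf : ¬ FiniteDimensional ℝ X) (hYinf : ¬ FiniteDimensional ℝ Y)
    (hX : PropP3 X) (hY : PropP3 Y)
    (N : ℝ × ℝ → ℝ)
    (hN0 : ∀ p : ℝ × ℝ, N p = 0 ↔ p = 0)
    (hNadd : ∀ p q : ℝ × ℝ, N (p + q) ≤ N p + N q)
    (hNsmul : ∀ (c : ℝ) (p : ℝ × ℝ), N (c • p) = |c| * N p)
    (habs : ∀ a b : ℝ, N (a, b) = N (|a|, |b|))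
    (hnorm1 : N (1, 0) = 1) (hnorm2 : N (0, 1) = 1)
    (hsd2p : PositiveSD2P N)
    (n : ℕ) (hn : 0 < n)
    (f : Fin n → StrongDual ℝ X × StrongDual ℝ Y)
    (hf : ∀ i, NDualSphere X Y N (f i))
    (α : Fin n → ℝ) (hα : ∀ i, 0 < α i)
    (lam : Fin n → ℝ) (hlam : ∀ i, 0 ≤ lam i) (hsum : (∑ i, lam i) = 1) :
    ∃ z ∈ ∑ i, lam i • NSlice X Y N (f i) (α i), N (‖z.1‖, ‖z.2‖) = 1 := by
  classical
  have hXnt : ∃ x0 : X, x0 ≠ 0 := by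
    by_contra hcon
    push_neg at hcon
    haveI : Subsingleton X := ⟨fun u v => by rw [hcon u, hcon v]⟩
    exact hXinf inferInstance
  have hYnt : ∃ y0 : Y, y0 ≠ 0 := by
    by_contra hcon
    push_neg at hcon
    haveI : Subsingleton Y := ⟨fun u v => by rw [hcon u, hcon v]⟩
    exact hYinf inferInstance
  have mono : ∀ {a a' b b' : ℝ}, 0 ≤ a → a ≤ a' → 0 ≤ b → b ≤ b' → N (a, b) ≤ N (a', b') :=
    fun {a a' b b'} => N_mono' hNadd hNsmul habs
  have hub0 : ∀ i, ∀ a b : ℝ, 0 ≤ a → 0 ≤ b → N (a, b) ≤ 1 →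
      ‖(f i).1‖ * a + ‖(f i).2‖ * b ≤ 1 := by
    intro i a b ha hb hN1
    refine le_of_forall_pos_le_add fun ε hε => ?_
    have hd : (0:ℝ) < a + b + 1 := by linarith
    have hε' : 0 < ε / (a + b + 1) := div_pos hε hd
    obtain ⟨x, hx1, hx2⟩ := dual_exists_le' (f i).1
      (show ‖(f i).1‖ - ε / (a + b + 1) < ‖(f i).1‖ by linarith)
    obtain ⟨y, hy1, hy2⟩ := dual_exists_le' (f i).2
      (show ‖(f i).2‖ - ε / (a + b + 1) < ‖(f i).2‖ by linarith)
    have hball : (a • x, b • y) ∈ NBall X Y N := by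
      show N (‖a • x‖, ‖b • y‖) ≤ 1
      refine le_trans (mono (norm_nonneg _) ?_ (norm_nonneg _) ?_) hN1
      · rw [norm_smul, Real.norm_eq_abs, abs_of_nonneg ha]
        exact mul_le_of_le_one_right ha hx1
      · rw [norm_smul, Real.norm_eq_abs, abs_of_nonneg hb]
        exact mul_le_of_le_one_right hb hy1
    have hle := (hf i).1 _ hball
    simp only [map_smul, smul_eq_mul] at hle
    have h1 := mul_le_mul_of_nonneg_left hx2.le ha
    have h2 := mul_le_mul_of_nonneg_left hy2.le hb
    have heq : ε / (a + b + 1) * (a + b + 1) = ε := div_mul_cancel₀ ε hd.ne'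
    nlinarith [hε'.le]
  have hub : ∀ i, ∀ a b : ℝ, N (a, b) ≤ 1 → ‖(f i).1‖ * a + ‖(f i).2‖ * b ≤ 1 := by
    intro i a b hN1
    have h1 : ‖(f i).1‖ * a ≤ ‖(f i).1‖ * |a| :=
      mul_le_mul_of_nonneg_left (le_abs_self a) (norm_nonneg _)
    have h2 : ‖(f i).2‖ * b ≤ ‖(f i).2‖ * |b| :=
      mul_le_mul_of_nonneg_left (le_abs_self b) (norm_nonneg _)
    have h3 := hub0 i |a| |b| (abs_nonneg a) (abs_nonneg b) (by rwa [← habs])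
    linarith
  have hlb : ∀ i, ∀ ε > (0:ℝ), ∃ a b : ℝ, N (a, b) ≤ 1 ∧
      1 - ε < ‖(f i).1‖ * a + ‖(f i).2‖ * b := by
    intro i ε hε
    obtain ⟨p, hp, hp2⟩ := (hf i).2 ε hε
    refine ⟨‖p.1‖, ‖p.2‖, hp, ?_⟩
    have h1 : (f i).1 p.1 ≤ ‖(f i).1‖ * ‖p.1‖ :=
      le_trans (le_abs_self _) (by rw [← Real.norm_eq_abs]; exact (f i).1.le_opNorm p.1)
    have h2 : (f i).2 p.2 ≤ ‖(f i).2‖ * ‖p.2‖ :=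
      le_trans (le_abs_self _) (by rw [← Real.norm_eq_abs]; exact (f i).2.le_opNorm p.2)
    linarith
  obtain ⟨a, b, hab, hNab⟩ := hsd2p n (fun i => (‖(f i).1‖, ‖(f i).2‖)) (fun i => α i / 2) lam
    (fun i => ⟨norm_nonneg _, norm_nonneg _⟩)
    (fun i => ⟨fun u v hN1 => hub i u v hN1, hlb i⟩)
    (fun i => half_pos (hα i)) hlam hsum
  obtain ⟨x, hx, hxnorm⟩ := space_point' hXnt hX hn (fun i => (f i).1) (fun i => α i / 4)
    (fun i => by linarith [hα i]) (fun i => lam i * a i)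
    (fun i => mul_nonneg (hlam i) (hab i).1)
  obtain ⟨y, hy, hynorm⟩ := space_point' hYnt hY hn (fun i => (f i).2) (fun i => α i / 4)
    (fun i => by linarith [hα i]) (fun i => lam i * b i)
    (fun i => mul_nonneg (hlam i) (hab i).2.1)
  have hmem : ∀ i, (a i • x i, b i • y i) ∈ NSlice X Y N (f i) (α i) := by
    intro i
    obtain ⟨ha0, hb0, hN1, hfab⟩ := hab i
    have hub1 := hub i (a i) (b i) hN1
    have hga : ‖(f i).1‖ * a i ≤ 1 := by
      nlinarith [mul_nonneg (norm_nonneg (f i).2) hb0]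
    have hhb : ‖(f i).2‖ * b i ≤ 1 := by
      nlinarith [mul_nonneg (norm_nonneg (f i).1) ha0]
    refine ⟨?_, ?_⟩
    · show N (‖a i • x i‖, ‖b i • y i‖) ≤ 1
      refine le_trans (mono (norm_nonneg _) ?_ (norm_nonneg _) ?_) hN1
      · rw [norm_smul, Real.norm_eq_abs, abs_of_nonneg ha0]
        exact mul_le_of_le_one_right ha0 (hx i).1
      · rw [norm_smul, Real.norm_eq_abs, abs_of_nonneg hb0]
        exact mul_le_of_le_one_right hb0 (hy i).1
    · show 1 - α i < (f i).1 (a i • x i) + (f i).2 (b i • y i)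
      simp only [map_smul, smul_eq_mul]
      have h1 := mul_le_mul_of_nonneg_left (hx i).2 ha0
      have h2 := mul_le_mul_of_nonneg_left (hy i).2 hb0
      nlinarith [hα i]
  refine ⟨(∑ i, (lam i * a i) • x i, ∑ i, (lam i * b i) • y i), ?_, ?_⟩
  · have hzeq : ((∑ i, (lam i * a i) • x i, ∑ i, (lam i * b i) • y i) : X × Y)
        = ∑ i, lam i • (a i • x i, b i • y i) := by
      refine Prod.ext ?_ ?_ <;> simp [Prod.fst_sum, Prod.snd_sum, smul_smul]
    rw [hzeq]
    exact Set.finset_sum_mem_finset_sum Finset.univ _ _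
      (fun i _ => Set.smul_mem_smul_set (hmem i))
  · show N (‖∑ i, (lam i * a i) • x i‖, ‖∑ i, (lam i * b i) • y i‖) = 1
    rw [hxnorm, hynorm]
    exact hNab
end
end

section
/- Let X and Y be Banach spaces, each with the property that every norm-one element in a finite convex combination of slices of its closed unit ball is an interior point of that combination in the relative weak topology of the closed unit ball. Then the 1-sum X ⊕₁ Y (with norm ‖(x,y)‖ = ‖x‖ + ‖y‖) also has this property. -/
open scoped Pointwise

noncomputable section

/-- Every norm-one element of a finite convex combination of slices of the closed
unit ball is an interior point of that combination in the relative weak topology. -/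
def NormOneCCSInteriorProp (Z : Type*) [NormedAddCommGroup Z] [NormedSpace ℝ Z] : Prop :=
  ∀ C : Set Z, IsCCS Z C → ∀ z ∈ C, ‖z‖ = 1 → RelWeakInteriorPt Z C z


open NormedSpace

lemma mem_setSum_iff' {Z : Type*} [AddCommMonoid Z] {ι : Type*} (s : Finset ι)
    (S : ι → Set Z) (z : Z) :
    z ∈ ∑ i ∈ s, S i ↔ ∃ g : ι → Z, (∀ i ∈ s, g i ∈ S i) ∧ ∑ i ∈ s, g i = z := by
  classical
  induction s using Finset.cons_induction generalizing z with
  | empty =>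
    simp only [Finset.sum_empty, Set.mem_zero]
    constructor
    · rintro rfl; exact ⟨fun _ => 0, by simp, rfl⟩
    · rintro ⟨g, -, rfl⟩; rfl
  | cons i s his ih =>
    rw [Finset.sum_cons, Set.mem_add]
    constructor
    · rintro ⟨a, ha, b, hb, rfl⟩
      obtain ⟨g, hg, rfl⟩ := (ih b).1 hb
      refine ⟨Function.update g i a, ?_, ?_⟩
      · intro j hj
        rcases Finset.mem_cons.1 hj with rfl | hj
        · simp [ha]
        · rw [Function.update_of_ne (fun h => his (by rw [← h]; exact hj))]
          exact hg j hj
      · rw [Finset.sum_cons, Function.update_self]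
        congr 1
        exact Finset.sum_congr rfl fun j hj =>
          Function.update_of_ne (fun h => his (by rw [← h]; exact hj)) _ _
    · rintro ⟨g, hg, rfl⟩
      rw [Finset.sum_cons]
      exact ⟨g i, hg i (Finset.mem_cons_self i s), ∑ j ∈ s, g j,
        (ih _).2 ⟨g, fun j hj => hg j (Finset.mem_cons.2 (Or.inr hj)), rfl⟩, rfl⟩

lemma mem_ballSlice_iff' {X : Type*} [NormedAddCommGroup X] [NormedSpace ℝ X]
    {g : StrongDual ℝ X} {β : ℝ} {z : X} :
    z ∈ ballSlice X g β ↔ ‖z‖ ≤ 1 ∧ 1 - β < g z := by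
  simp [ballSlice, Metric.mem_closedBall, dist_zero_right]

lemma slice_nonempty' {X : Type*} [NormedAddCommGroup X] [NormedSpace ℝ X]
    (g : StrongDual ℝ X) (hg : ‖g‖ = 1) (β : ℝ) (hβ : 0 < β) :
    ∃ p, p ∈ ballSlice X g β := by
  have h : (1 - β : ℝ) < ‖g‖ := by rw [hg]; linarith
  obtain ⟨p, hp1, hp2⟩ := g.exists_lt_apply_of_lt_opNorm h
  rw [Real.norm_eq_abs] at hp2
  rcases le_or_gt 0 (g p) with h0 | h0
  · exact ⟨p, mem_ballSlice_iff'.2 ⟨hp1.le, by rwa [abs_of_nonneg h0] at hp2⟩⟩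
  · refine ⟨-p, mem_ballSlice_iff'.2 ⟨by simpa using hp1.le, ?_⟩⟩
    rw [map_neg]
    rwa [abs_of_neg h0] at hp2

lemma redistribute' {Z : Type*} [NormedAddCommGroup Z] [NormedSpace ℝ Z]
    {n : ℕ} (lam : Fin n → ℝ) (hlam0 : ∀ i, 0 ≤ lam i) (hlam1 : ∑ i, lam i = 1)
    (w : Fin n → Z) (t : Fin n → ℝ) (f : Fin n → StrongDual ℝ Z)
    (α : Fin n → ℝ) (ρ : Z) (ε c : ℝ) (hε : 0 < ε) (hc : 0 < c)
    (hcl : ∀ i, 0 < lam i → c ≤ lam i)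
    (ht0 : ∀ i, 0 ≤ t i) (hwt : ∀ i, ‖w i‖ ≤ t i)
    (hsum : ∑ i, lam i * t i + ‖ρ‖ ≤ 1)
    (hf : ∀ i, ‖f i‖ ≤ 1)
    (hfw : ∀ i, 0 < lam i → 1 - α i + ε < f i (w i))
    (htup : ∀ i, t i ≤ 1 + ε / 4)
    (hEs : ‖ρ‖ + ∑ i, lam i * max (t i - 1) 0 ≤ ε * c / 4) :
    ∃ w' : Fin n → Z, ∑ i, lam i • w' i = (∑ i, lam i • w i) + ρ ∧
      ∀ i, 0 < lam i → ‖w' i‖ ≤ 1 ∧ 1 - α i < f i (w' i) := by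
  classical
  set s : Fin n → ℝ := fun i => min (t i) 1 with hs_def
  set σ : Fin n → ℝ := fun i => if t i ≤ 1 then 1 else (t i)⁻¹ with hσ_def
  have hts : ∀ i, σ i * t i = s i := by
    intro i; by_cases h : t i ≤ 1
    · simp [hσ_def, hs_def, h, min_eq_left h]
    · have h1 : 1 < t i := lt_of_not_ge h
      simp [hσ_def, hs_def, h, min_eq_right (le_of_lt h1),
        inv_mul_cancel₀ (by linarith : t i ≠ 0)]
  have hσ01 : ∀ i, 0 ≤ σ i ∧ σ i ≤ 1 := by
    intro i; by_cases h : t i ≤ 1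
    · simp [hσ_def, h]
    · have h1 : 1 < t i := lt_of_not_ge h
      simp only [hσ_def, if_neg h]
      constructor
      · positivity
      · rw [inv_le_one_iff₀]; right; linarith
  have hs01 : ∀ i, 0 ≤ s i ∧ s i ≤ 1 := fun i =>
    ⟨le_min (ht0 i) zero_le_one, min_le_right _ _⟩
  have hkey : ∀ i, (1 - σ i) * t i = max (t i - 1) 0 := by
    intro i; by_cases h : t i ≤ 1
    · simp [hσ_def, h, max_eq_right (by linarith : t i - 1 ≤ 0)]
    · have h1 : 1 < t i := lt_of_not_ge h
      rw [hσ_def]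
      simp only [if_neg h]
      rw [max_eq_left (by linarith : (0:ℝ) ≤ t i - 1), sub_mul, one_mul,
        inv_mul_cancel₀ (by linarith : t i ≠ 0)]
  have hkey2 : ∀ i, t i - s i = max (t i - 1) 0 := by
    intro i
    rcases le_total (t i) 1 with h | h
    · simp [hs_def, min_eq_left h, max_eq_right (by linarith : t i - 1 ≤ 0)]
    · simp [hs_def, min_eq_right h, max_eq_left (by linarith : (0:ℝ) ≤ t i - 1)]
  set D : ℝ := ∑ i, lam i * (1 - s i) with hD_def
  set E : ℝ := ‖ρ‖ + ∑ i, lam i * max (t i - 1) 0 with hE_def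
  have hE0 : 0 ≤ E := by
    apply add_nonneg (norm_nonneg _)
    exact Finset.sum_nonneg fun i _ =>
      mul_nonneg (hlam0 i) (le_max_right _ _)
  have hD0 : 0 ≤ D :=
    Finset.sum_nonneg fun i _ => mul_nonneg (hlam0 i) (by linarith [(hs01 i).2])
  have hED : E ≤ D := by
    have hrepr : D = 1 - (∑ i, lam i * t i) + ∑ i, lam i * max (t i - 1) 0 := by
      rw [hD_def]
      have : ∀ i ∈ Finset.univ, lam i * (1 - s i)
          = (lam i - lam i * t i) + lam i * max (t i - 1) 0 := by
        intro i _
        have h2 := hkey2 i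
        rw [← h2]; ring
      rw [Finset.sum_congr rfl this, Finset.sum_add_distrib, Finset.sum_sub_distrib, hlam1]
    rw [hE_def, hrepr]
    linarith
  set r : Z := ρ + ∑ i, lam i • ((1 - σ i) • w i) with hr_def
  have hrE : ‖r‖ ≤ E := by
    rw [hr_def, hE_def]
    refine le_trans (norm_add_le _ _) (add_le_add_right ?_ _)
    refine le_trans (norm_sum_le _ _) (Finset.sum_le_sum fun i _ => ?_)
    rw [norm_smul, norm_smul, Real.norm_eq_abs, Real.norm_eq_abs,
      abs_of_nonneg (hlam0 i), abs_of_nonneg (by linarith [(hσ01 i).2] : (0:ℝ) ≤ 1 - σ i)]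
    refine mul_le_mul_of_nonneg_left ?_ (hlam0 i)
    calc (1 - σ i) * ‖w i‖ ≤ (1 - σ i) * t i :=
          mul_le_mul_of_nonneg_left (hwt i) (by linarith [(hσ01 i).2])
      _ = max (t i - 1) 0 := hkey i
  set cc : Fin n → ℝ := fun i => if D = 0 then 0 else (1 - s i) / D with hcc_def
  set w' : Fin n → Z := fun i => σ i • w i + cc i • r with hw'_def
  have hsum1 : ∑ i, lam i • (σ i • w i) = ((∑ i, lam i • w i) + ρ) - r := by
    rw [hr_def]
    have : ∀ i ∈ Finset.univ, lam i • (σ i • w i)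
        = lam i • w i - lam i • ((1 - σ i) • w i) := by
      intro i _
      rw [smul_smul, smul_smul, ← sub_smul]
      ring_nf
    rw [Finset.sum_congr rfl this, Finset.sum_sub_distrib]
    abel
  refine ⟨w', ?_, ?_⟩
  · have h2 : ∑ i, lam i • (cc i • r) = (∑ i, lam i * cc i) • r := by
      rw [Finset.sum_smul]
      exact Finset.sum_congr rfl fun i _ => (smul_smul _ _ _)
    rw [show ∑ i, lam i • w' i = (∑ i, lam i • (σ i • w i)) + ∑ i, lam i • (cc i • r) by
      rw [← Finset.sum_add_distrib]; exact Finset.sum_congr rfl fun i _ => smul_add _ _ _]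
    rw [hsum1, h2]
    by_cases hD0' : D = 0
    · have hEzero : E = 0 := le_antisymm (hD0' ▸ hED) hE0
      have hrzero : r = 0 := norm_le_zero_iff.1 (hEzero ▸ hrE)
      simp [hrzero]
    · have : ∑ i, lam i * cc i = 1 := by
        rw [hcc_def]
        simp only [if_neg hD0']
        have hstep : ∑ x : Fin n, lam x * ((1 - s x) / D) = (∑ x : Fin n, lam x * (1 - s x)) / D := by
          rw [Finset.sum_div]
          exact Finset.sum_congr rfl fun x _ => by ring
        rw [hstep, ← hD_def, div_self hD0']
      rw [this, one_smul]
      abel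
  · intro i hli
    have hcc0 : 0 ≤ cc i := by
      by_cases hD0' : D = 0
      · simp [hcc_def, hD0']
      · have hDpos : 0 < D := lt_of_le_of_ne hD0 (Ne.symm hD0')
        have h1si : 0 ≤ 1 - s i := by linarith [(hs01 i).2]
        rw [hcc_def]; simp only [if_neg hD0']; positivity
    have hccr : cc i * ‖r‖ ≤ ε / 4 := by
      by_cases hD0' : D = 0
      · simp only [hcc_def, if_pos hD0', zero_mul]
        positivity
      · have hDpos : 0 < D := lt_of_le_of_ne hD0 (Ne.symm hD0')
        have h1si : 0 ≤ 1 - s i := by linarith [(hs01 i).2]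
        have hterm : lam i * (1 - s i) ≤ D :=
          Finset.single_le_sum (f := fun j => lam j * (1 - s j))
            (fun j _ => mul_nonneg (hlam0 j) (by linarith [(hs01 j).2])) (Finset.mem_univ i)
        have hcci : cc i ≤ 1 / lam i := by
          rw [hcc_def]
          simp only [if_neg hD0']
          rw [div_le_div_iff₀ hDpos hli]
          nlinarith
        calc cc i * ‖r‖ ≤ (1 / lam i) * E :=
              mul_le_mul hcci hrE (norm_nonneg _) (by positivity)
          _ ≤ (1 / c) * (ε * c / 4) :=
              mul_le_mul (one_div_le_one_div_of_le hc (hcl i hli)) hEs hE0 (by positivity)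
          _ = ε / 4 * (c / c) := by ring
          _ = ε / 4 := by rw [div_self (ne_of_gt hc), mul_one]
    have hccrD : cc i * ‖r‖ ≤ 1 - s i := by
      by_cases hD0' : D = 0
      · simp only [hcc_def, if_pos hD0', zero_mul]
        linarith [(hs01 i).2]
      · have hDpos : 0 < D := lt_of_le_of_ne hD0 (Ne.symm hD0')
        have h1si : 0 ≤ 1 - s i := by linarith [(hs01 i).2]
        rw [hcc_def]; simp only [if_neg hD0']
        calc (1 - s i) / D * ‖r‖ ≤ (1 - s i) / D * D := by
              exact mul_le_mul_of_nonneg_left (hrE.trans hED) (by positivity)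
          _ = 1 - s i := div_mul_cancel₀ _ hD0'
    have hσi := hσ01 i
    have hmax : max (t i - 1) 0 ≤ ε / 4 := max_le (by linarith [htup i]) (by positivity)
    have hfa : |f i (w i)| ≤ t i := by
      calc |f i (w i)| = ‖f i (w i)‖ := (Real.norm_eq_abs _).symm
        _ ≤ ‖f i‖ * ‖w i‖ := (f i).le_opNorm _
        _ ≤ 1 * t i := mul_le_mul (hf i) (hwt i) (norm_nonneg _) zero_le_one
        _ = t i := one_mul _
    have hfr : |f i r| ≤ ‖r‖ := by
      calc |f i r| = ‖f i r‖ := (Real.norm_eq_abs _).symm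
        _ ≤ ‖f i‖ * ‖r‖ := (f i).le_opNorm _
        _ ≤ 1 * ‖r‖ := mul_le_mul_of_nonneg_right (hf i) (norm_nonneg _)
        _ = ‖r‖ := one_mul _
    constructor
    · have h1 : ‖w' i‖ ≤ σ i * ‖w i‖ + cc i * ‖r‖ := by
        rw [hw'_def]
        refine le_trans (norm_add_le _ _) ?_
        rw [norm_smul, norm_smul, Real.norm_eq_abs, Real.norm_eq_abs,
          abs_of_nonneg hσi.1, abs_of_nonneg hcc0]
      have h2 : σ i * ‖w i‖ ≤ s i := by
        calc σ i * ‖w i‖ ≤ σ i * t i := mul_le_mul_of_nonneg_left (hwt i) hσi.1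
          _ = s i := hts i
      linarith
    · have hval : f i (w' i) = σ i * f i (w i) + cc i * f i r := by
        simp only [hw'_def, map_add, map_smul, smul_eq_mul]
      have p1 : (1 - σ i) * f i (w i) ≤ ε / 4 := by
        calc (1 - σ i) * f i (w i) ≤ (1 - σ i) * t i :=
              mul_le_mul_of_nonneg_left (le_trans (le_abs_self _) hfa)
                (by linarith [hσi.2])
          _ = max (t i - 1) 0 := hkey i
          _ ≤ ε / 4 := hmax
      have p2 : -(ε / 4) ≤ cc i * f i r := by
        have : -‖r‖ ≤ f i r := by
          have := neg_abs_le (f i r)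
          linarith [hfr]
        calc -(ε / 4) ≤ -(cc i * ‖r‖) := by linarith
          _ = cc i * (-‖r‖) := by ring
          _ ≤ cc i * f i r := mul_le_mul_of_nonneg_left this hcc0
      have hw := hfw i hli
      have : f i (w' i) ≥ f i (w i) - ε / 4 - ε / 4 := by
        rw [hval]
        nlinarith
      linarith

set_option maxHeartbeats 2000000 in
lemma oneSideDecomp' {X : Type*} [NormedAddCommGroup X] [NormedSpace ℝ X]
    (hX : NormOneCCSInteriorProp X) {n : ℕ} (hn : 0 < n)
    (lam : Fin n → ℝ) (hlam0 : ∀ i, 0 ≤ lam i)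
    (xv : Fin n → X) (g : Fin n → StrongDual ℝ X)
    (hg : ∀ i, ‖g i‖ ≤ 1) (hxv : ∀ i, ‖xv i‖ ≤ 1)
    {x : X} (hxsum : ∑ i, lam i • xv i = x)
    {a : ℝ} (ha : 0 < a) (hna : ∑ i, lam i * ‖xv i‖ = a) (hxa : ‖x‖ = a)
    (ε : ℝ) (hε : 0 < ε) (hε1 : ε ≤ 1) :
    ∃ (F : Finset (StrongDual ℝ X)) (δ : ℝ), 0 < δ ∧ δ ≤ ε ∧
      ∀ u : X, ‖u‖ ≤ 1 → a - δ < ‖u‖ → ‖u‖ < a + δ →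
        (∀ φ ∈ F, |φ u - φ x| < δ) →
        ∃ uu : Fin n → X, (∑ i, lam i • uu i) = u ∧
          (∀ i, lam i = 0 → uu i = 0) ∧
          ∀ i, 0 < lam i → ‖uu i‖ ≤ ‖u‖ / a * ‖xv i‖ ∧ g i (xv i) - ε < g i (uu i) := by
  classical
  have hx0 : x ≠ 0 := by
    rw [← norm_pos_iff, hxa]; exact ha
  obtain ⟨g₀, hg₀, hg₀x⟩ := exists_dual_vector ℝ x (norm_ne_zero_iff.2 hx0)
  set gg : Fin n → StrongDual ℝ X := fun i =>
    if hgi : g i = (0 : StrongDual ℝ X) then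
      (if hxi : xv i = (0 : X) then g₀
       else Classical.choose (exists_dual_vector ℝ (xv i) (norm_ne_zero_iff.2 hxi)))
    else ‖g i‖⁻¹ • g i with hgg_def
  have hgg1 : ∀ i, ‖gg i‖ = 1 := by
    intro i
    rw [hgg_def]
    by_cases hgi : g i = (0 : StrongDual ℝ X)
    · by_cases hxi : xv i = (0 : X)
      · simp [hgi, hxi, hg₀]
      · simp only [dif_pos hgi, dif_neg hxi]
        exact (Classical.choose_spec (exists_dual_vector ℝ (xv i) (norm_ne_zero_iff.2 hxi))).1
    · have hgpos : 0 < ‖g i‖ := norm_pos_iff.2 hgi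
      simp only [dif_neg hgi]
      rw [norm_smul, Real.norm_eq_abs, abs_of_pos (inv_pos.2 hgpos),
        inv_mul_cancel₀ (ne_of_gt hgpos)]
  set β : Fin n → ℝ := fun i =>
    if g i = (0 : StrongDual ℝ X) ∨ xv i = (0 : X) then 1
    else (‖g i‖ * ‖xv i‖ - g i (xv i) + ε / 2) / (‖g i‖ * ‖xv i‖) with hβ_def
  have hgx_le : ∀ i, g i (xv i) ≤ ‖g i‖ * ‖xv i‖ := fun i =>
    le_trans (le_abs_self _) (by rw [← Real.norm_eq_abs]; exact (g i).le_opNorm _)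
  have hβpos : ∀ i, 0 < β i := by
    intro i
    rw [hβ_def]
    by_cases h : g i = (0 : StrongDual ℝ X) ∨ xv i = (0 : X)
    · simp [h]
    · push_neg at h
      simp only [if_neg (not_or.2 h)]
      have h1 : 0 < ‖g i‖ := norm_pos_iff.2 h.1
      have h2 : 0 < ‖xv i‖ := norm_pos_iff.2 h.2
      have h3 := hgx_le i
      apply div_pos (by linarith) (by positivity)
  have hkey : ∀ i (p : X), ‖p‖ ≤ 1 → 1 - β i < gg i p →
      g i (xv i) - ε / 2 < ‖xv i‖ * g i p := by
    intro i p hp hgp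
    by_cases hgi : g i = (0 : StrongDual ℝ X)
    · rw [hgi]
      simp only [ContinuousLinearMap.zero_apply, mul_zero, zero_sub]
      linarith
    · by_cases hxi : xv i = (0 : X)
      · rw [hxi]
        simp only [map_zero, norm_zero, zero_mul, zero_sub]
        linarith
      · have hG : 0 < ‖g i‖ := norm_pos_iff.2 hgi
        have hN : 0 < ‖xv i‖ := norm_pos_iff.2 hxi
        have hβeq : β i = (‖g i‖ * ‖xv i‖ - g i (xv i) + ε / 2) / (‖g i‖ * ‖xv i‖) := by
          rw [hβ_def]; simp [hgi, hxi]
        have hggp : gg i p = ‖g i‖⁻¹ * g i p := by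
          rw [hgg_def]; simp [hgi]
        rw [hggp] at hgp
        have h2 : ‖g i‖ * (1 - β i) < g i p := by
          have h := (mul_lt_mul_iff_right₀ hG).2 hgp
          rwa [← mul_assoc, mul_inv_cancel₀ (ne_of_gt hG), one_mul] at h
        have h3 : ‖xv i‖ * (‖g i‖ * (1 - β i)) = g i (xv i) - ε / 2 := by
          rw [hβeq]; field_simp; ring
        nlinarith [mul_lt_mul_of_pos_left h2 hN]
  have hmem : ∀ i, xv i ≠ 0 → (‖xv i‖⁻¹ • xv i) ∈ ballSlice X (gg i) (β i) := by
    intro i hxi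
    have hN : 0 < ‖xv i‖ := norm_pos_iff.2 hxi
    refine mem_ballSlice_iff'.2 ⟨?_, ?_⟩
    · rw [norm_smul, Real.norm_eq_abs, abs_of_pos (inv_pos.2 hN),
        inv_mul_cancel₀ (ne_of_gt hN)]
    · by_cases hgi : g i = (0 : StrongDual ℝ X)
      · have hβ1 : β i = 1 := by rw [hβ_def]; simp [hgi]
        have : gg i (xv i) = ‖xv i‖ := by
          rw [hgg_def]; simp only [dif_pos hgi, dif_neg hxi]
          exact (Classical.choose_spec (exists_dual_vector ℝ (xv i) (norm_ne_zero_iff.2 hxi))).2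
        rw [map_smul, smul_eq_mul, this, inv_mul_cancel₀ (ne_of_gt hN), hβ1]
        norm_num
      · have hG : 0 < ‖g i‖ := norm_pos_iff.2 hgi
        have hβeq : β i = (‖g i‖ * ‖xv i‖ - g i (xv i) + ε / 2) / (‖g i‖ * ‖xv i‖) := by
          rw [hβ_def]; simp [hgi, hxi]
        have hggv : gg i (xv i) = ‖g i‖⁻¹ * g i (xv i) := by
          rw [hgg_def]; simp [hgi]
        rw [map_smul, smul_eq_mul, hggv]
        have e : 1 - β i = (g i (xv i) - ε / 2) / (‖g i‖ * ‖xv i‖) := by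
          rw [hβeq]
          field_simp
          ring
        have e2 : ‖xv i‖⁻¹ * (‖g i‖⁻¹ * g i (xv i)) * (‖g i‖ * ‖xv i‖) = g i (xv i) := by
          field_simp
        rw [e, div_lt_iff₀ (by positivity), e2]
        linarith
  set pt : Fin n → X := fun i =>
    if hxi : xv i = (0 : X) then
      Classical.choose (slice_nonempty' (gg i) (hgg1 i) (β i) (hβpos i))
    else ‖xv i‖⁻¹ • xv i with hpt_def
  have hpt : ∀ i, pt i ∈ ballSlice X (gg i) (β i) := by
    intro i
    rw [hpt_def]
    by_cases hxi : xv i = (0 : X)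
    · simp only [dif_pos hxi]
      exact Classical.choose_spec (slice_nonempty' (gg i) (hgg1 i) (β i) (hβpos i))
    · simp only [dif_neg hxi]
      exact hmem i hxi
  set μ : Fin n → ℝ := fun i => lam i * ‖xv i‖ / a with hμ_def
  have hμ0 : ∀ i, 0 ≤ μ i := fun i => by
    rw [hμ_def]
    exact div_nonneg (mul_nonneg (hlam0 i) (norm_nonneg _)) ha.le
  have hμ1 : ∑ i, μ i = 1 := by
    rw [hμ_def, ← Finset.sum_div, hna, div_self (ne_of_gt ha)]
  set CX : Set X := ∑ i, μ i • ballSlice X (gg i) (β i) with hCX_def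
  have hCCS : IsCCS X CX := ⟨n, gg, β, μ, hn, hgg1, hβpos, hμ0, hμ1, rfl⟩
  have hmemCX : a⁻¹ • x ∈ CX := by
    rw [hCX_def]
    refine (mem_setSum_iff' _ _ _).2 ⟨fun i => μ i • pt i,
      fun i _ => Set.smul_mem_smul_set (hpt i), ?_⟩
    have : ∀ i ∈ Finset.univ, μ i • pt i = a⁻¹ • (lam i • xv i) := by
      intro i _
      by_cases hxi : xv i = (0 : X)
      · rw [hμ_def]
        simp [hxi]
      · have hN : 0 < ‖xv i‖ := norm_pos_iff.2 hxi
        rw [hpt_def]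
        simp only [dif_neg hxi]
        rw [smul_smul, smul_smul]
        congr 1
        rw [hμ_def]
        field_simp
    rw [Finset.sum_congr rfl this, ← Finset.smul_sum, hxsum]
  have hx1 : ‖a⁻¹ • x‖ = 1 := by
    rw [norm_smul, Real.norm_eq_abs, abs_of_pos (inv_pos.2 ha), hxa,
      inv_mul_cancel₀ (ne_of_gt ha)]
  obtain ⟨F₀, δ₀, hδ₀, hsub⟩ := hX CX hCCS _ hmemCX hx1
  set M : ℝ := ∑ φ ∈ F₀, ‖φ‖ with hM_def
  have hM0 : 0 ≤ M := Finset.sum_nonneg fun _ _ => norm_nonneg _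
  have hMb : ∀ φ ∈ F₀, ‖φ‖ ≤ M := fun φ hφ =>
    Finset.single_le_sum (f := fun ψ => ‖ψ‖) (fun _ _ => norm_nonneg _) hφ
  have hM1 : (0:ℝ) < M + 1 := by linarith
  set δ : ℝ := min (min (a / 2) ε) (min (δ₀ * a / (4 * (M + 1))) (ε * a / 8)) with hδ_def
  have hδ0 : 0 < δ := by
    have p3 : 0 < δ₀ * a / (4 * (M + 1)) := by positivity
    have p4 : 0 < ε * a / 8 := by positivity
    exact lt_min (lt_min (by positivity) hε) (lt_min p3 p4)
  have hδa2 : δ ≤ a / 2 := le_trans (min_le_left _ _) (min_le_left _ _)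
  have hδδ₀ : δ ≤ δ₀ * a / (4 * (M + 1)) := le_trans (min_le_right _ _) (min_le_left _ _)
  have hδε8 : δ ≤ ε * a / 8 := le_trans (min_le_right _ _) (min_le_right _ _)
  refine ⟨F₀, δ, hδ0, le_trans (min_le_left _ _) (min_le_right _ _), ?_⟩
  · intro u hu1 hul huu hφu
    have hu0 : a / 2 < ‖u‖ := by linarith
    have hupos : 0 < ‖u‖ := by linarith
    set u' : X := ‖u‖⁻¹ • u with hu'_def
    have hu'mem : u' ∈ {w ∈ Metric.closedBall (0 : X) 1 |
        ∀ φ ∈ F₀, |φ w - φ (a⁻¹ • x)| < δ₀} := by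
      constructor
      · rw [Metric.mem_closedBall, dist_zero_right, hu'_def, norm_smul, Real.norm_eq_abs,
          abs_of_pos (inv_pos.2 hupos), inv_mul_cancel₀ (ne_of_gt hupos)]
      · intro φ hφ
        have hφb := hMb φ hφ
        have e1 : φ u' - φ (a⁻¹ • x) = ‖u‖⁻¹ * (φ u - φ x) + (‖u‖⁻¹ - a⁻¹) * φ x := by
          rw [hu'_def, map_smul, map_smul, smul_eq_mul, smul_eq_mul]
          ring
        have hbd1 : ‖u‖⁻¹ ≤ 2 / a := by
          have h1 : ‖u‖⁻¹ ≤ (a / 2)⁻¹ := by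
            apply inv_anti₀ (by positivity) (by linarith)
          calc ‖u‖⁻¹ ≤ (a / 2)⁻¹ := h1
            _ = 2 / a := by rw [inv_div]
        have hdiffeq : ‖u‖⁻¹ - a⁻¹ = (a - ‖u‖) / (‖u‖ * a) := by field_simp
        have habs : |a - ‖u‖| ≤ δ := by
          rw [abs_le]; constructor <;> linarith
        have hbd2 : |‖u‖⁻¹ - a⁻¹| ≤ δ * (2 / (a * a)) := by
          rw [hdiffeq, abs_div, abs_of_pos (by positivity : (0:ℝ) < ‖u‖ * a)]
          rw [div_le_iff₀ (by positivity)]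
          have h1 : a / 2 * a ≤ ‖u‖ * a := by
            apply mul_le_mul_of_nonneg_right (le_of_lt hu0) ha.le
          calc |a - ‖u‖| ≤ δ := habs
            _ ≤ δ * (2 / (a * a)) * (a / 2 * a) := by
                rw [mul_assoc, div_mul_eq_mul_div, div_mul_eq_mul_div]
                field_simp
                exact le_rfl
            _ ≤ δ * (2 / (a * a)) * (‖u‖ * a) := by
                apply mul_le_mul_of_nonneg_left h1 (by positivity)
        have hφx : |φ x| ≤ M * a := by
          calc |φ x| = ‖φ x‖ := (Real.norm_eq_abs _).symm
            _ ≤ ‖φ‖ * ‖x‖ := φ.le_opNorm _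
            _ ≤ M * a := by rw [hxa]; exact mul_le_mul_of_nonneg_right hφb ha.le
        have hfinal : |φ u' - φ (a⁻¹ • x)| ≤ 2 / a * δ + δ * (2 / (a * a)) * (M * a) := by
          rw [e1]
          refine le_trans (abs_add_le _ _) ?_
          gcongr
          · rw [abs_mul, abs_of_pos (inv_pos.2 hupos)]
            refine mul_le_mul hbd1 (le_of_lt (hφu φ hφ)) (abs_nonneg _) (by positivity)
          · rw [abs_mul]
            exact mul_le_mul hbd2 hφx (abs_nonneg _) (by positivity)
        have hδ₀half : 2 / a * δ + δ * (2 / (a * a)) * (M * a) < δ₀ := by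
          have key : 2 / a * δ + δ * (2 / (a * a)) * (M * a) = δ * (2 * (M + 1)) / a := by
            field_simp
            ring
          rw [key]
          rw [div_lt_iff₀ ha]
          calc δ * (2 * (M + 1)) ≤ (δ₀ * a / (4 * (M + 1))) * (2 * (M + 1)) := by
                apply mul_le_mul_of_nonneg_right hδδ₀ (by positivity)
            _ = δ₀ * a / 2 := by field_simp; ring
            _ < δ₀ * a := by nlinarith
        exact lt_of_le_of_lt hfinal hδ₀half
    have hu'CX : u' ∈ CX := hsub hu'mem
    rw [hCX_def] at hu'CX
    obtain ⟨q, hq, hqsum⟩ := (mem_setSum_iff' _ _ _).1 hu'CX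
    have hqi : ∀ i, ∃ p ∈ ballSlice X (gg i) (β i), μ i • p = q i := by
      intro i
      exact Set.mem_smul_set.1 (hq i (Finset.mem_univ i))
    choose p hp hpq using hqi
    set uu : Fin n → X := fun i => if lam i = 0 then 0 else (‖u‖ / lam i) • q i with huu_def
    refine ⟨uu, ?_, ?_, ?_⟩
    · have : ∀ i ∈ Finset.univ, lam i • uu i = ‖u‖ • q i := by
        intro i _
        rw [huu_def]
        by_cases hli : lam i = 0
        · simp only [if_pos hli, hli, zero_smul]
          have : μ i = 0 := by simp [hμ_def, hli]
          rw [← hpq i, this, zero_smul, smul_zero]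
        · simp only [if_neg hli]
          rw [smul_smul]
          congr 1
          field_simp
      rw [Finset.sum_congr rfl this, ← Finset.smul_sum, hqsum, hu'_def, smul_smul,
        mul_inv_cancel₀ (ne_of_gt hupos), one_smul]
    · intro i hli
      rw [huu_def]; simp [hli]
    · intro i hli
      have hlin : lam i ≠ 0 := ne_of_gt hli
      have hqi_eq : q i = μ i • p i := (hpq i).symm
      have hslice := mem_ballSlice_iff'.1 (hp i)
      have huueq : uu i = (‖u‖ / a * ‖xv i‖) • p i := by
        rw [huu_def]
        simp only [if_neg hlin]
        rw [hqi_eq, smul_smul, hμ_def]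
        congr 1
        field_simp
      constructor
      · rw [huueq, norm_smul, Real.norm_eq_abs, abs_of_nonneg (by positivity)]
        calc ‖u‖ / a * ‖xv i‖ * ‖p i‖ ≤ ‖u‖ / a * ‖xv i‖ * 1 := by
              apply mul_le_mul_of_nonneg_left hslice.1 (by positivity)
          _ = ‖u‖ / a * ‖xv i‖ := mul_one _
      · have hkey2 := hkey i (p i) hslice.1 hslice.2
        have hguu : g i (uu i) = (‖u‖ / a) * (‖xv i‖ * g i (p i)) := by
          rw [huueq, map_smul, smul_eq_mul]
          ring
        have hτpos : 0 < ‖u‖ / a := by positivity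
        have hτ1 : |‖u‖ / a - 1| ≤ ε / 8 := by
          have : ‖u‖ / a - 1 = (‖u‖ - a) / a := by field_simp
          rw [this, abs_div, abs_of_pos ha, div_le_iff₀ ha]
          have h8 : |‖u‖ - a| ≤ δ := by rw [abs_le]; constructor <;> linarith
          calc |‖u‖ - a| ≤ δ := h8
            _ ≤ ε * a / 8 := hδε8
            _ = ε / 8 * a := by ring
        have hBabs : |g i (xv i) - ε / 2| ≤ 3 / 2 := by
          have h1 : |g i (xv i)| ≤ 1 := by
            calc |g i (xv i)| = ‖g i (xv i)‖ := (Real.norm_eq_abs _).symm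
              _ ≤ ‖g i‖ * ‖xv i‖ := (g i).le_opNorm _
              _ ≤ 1 * 1 := mul_le_mul (hg i) (hxv i) (norm_nonneg _) zero_le_one
              _ = 1 := one_mul _
          rw [abs_le] at h1 ⊢
          constructor <;> [linarith; linarith]
        rw [hguu]
        rw [abs_le] at hτ1 hBabs
        nlinarith [mul_lt_mul_of_pos_left hkey2 hτpos]

lemma arith_t_bound (u v X Y xv yv δ : ℝ) (hxv0 : 0 ≤ xv) (hyv0 : 0 ≤ yv)
    (hX : 0 < X) (hY : 0 < Y) (hxy : X + Y = 1) (hxyv : xv + yv ≤ 1)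
    (hxv1 : xv ≤ 1) (hyv1 : yv ≤ 1) (hu : u < X + δ) (hv : v < Y + δ)
    (hu0 : 0 ≤ u) (hv0 : 0 ≤ v) (hδ : 0 ≤ δ) :
    u / X * xv + v / Y * yv ≤ 1 + δ / (X * Y) := by
  have hXY : 0 < X * Y := mul_pos hX hY
  have key : (u / X * xv + v / Y * yv) * (X * Y) ≤ (1 + δ / (X * Y)) * (X * Y) := by
    have e1 : (u / X * xv + v / Y * yv) * (X * Y) = u * (xv * Y) + v * (yv * X) := by
      field_simp
    have e2 : (1 + δ / (X * Y)) * (X * Y) = X * Y + δ := by field_simp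
    rw [e1, e2]
    have s1 : u * (xv * Y) ≤ (X + δ) * (xv * Y) :=
      mul_le_mul_of_nonneg_right hu.le (by positivity)
    have s2 : v * (yv * X) ≤ (Y + δ) * (yv * X) :=
      mul_le_mul_of_nonneg_right hv.le (by positivity)
    have s3 : X * Y * (xv + yv) ≤ X * Y * 1 := mul_le_mul_of_nonneg_left hxyv hXY.le
    have s4 : xv * Y ≤ 1 * Y := mul_le_mul_of_nonneg_right hxv1 hY.le
    have s5 : yv * X ≤ 1 * X := mul_le_mul_of_nonneg_right hyv1 hX.le
    nlinarith [hδ]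
  exact le_of_mul_le_mul_right key hXY


set_option maxHeartbeats 8000000 in
/-- The property that norm-one elements of convex combinations of
slices of the closed unit ball are relative-weak interior points of these
combinations passes to the `1`-sum `X ⊕₁ Y`. -/
theorem normOneCCSInteriorProp_one_sum
    {X Y : Type*} [NormedAddCommGroup X] [NormedSpace ℝ X] [CompleteSpace X]
    [NormedAddCommGroup Y] [NormedSpace ℝ Y] [CompleteSpace Y]
    (hX : NormOneCCSInteriorProp X) (hY : NormOneCCSInteriorProp Y) :
    NormOneCCSInteriorProp (WithLp 1 (X × Y)) := by
  classical
  intro C hC z hzC hz1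
  obtain ⟨n, f, α, lam, hn, hf1, hα, hlam0, hlam1, hCeq⟩ := hC
  subst hCeq
  -- infrastructure
  set eqv := WithLp.prodContinuousLinearEquiv 1 ℝ X Y with heqv
  set inX : X →L[ℝ] WithLp 1 (X × Y) :=
    (eqv.symm : X × Y →L[ℝ] WithLp 1 (X × Y)).comp (ContinuousLinearMap.inl ℝ X Y) with hinX
  set inY : Y →L[ℝ] WithLp 1 (X × Y) :=
    (eqv.symm : X × Y →L[ℝ] WithLp 1 (X × Y)).comp (ContinuousLinearMap.inr ℝ X Y) with hinY
  set pxL : WithLp 1 (X × Y) →L[ℝ] X :=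
    (ContinuousLinearMap.fst ℝ X Y).comp (eqv : WithLp 1 (X × Y) →L[ℝ] X × Y) with hpxL
  set pyL : WithLp 1 (X × Y) →L[ℝ] Y :=
    (ContinuousLinearMap.snd ℝ X Y).comp (eqv : WithLp 1 (X × Y) →L[ℝ] X × Y) with hpyL
  have hpx : ∀ w : WithLp 1 (X × Y), pxL w = w.fst := fun _ => rfl
  have hpy : ∀ w : WithLp 1 (X × Y), pyL w = w.snd := fun _ => rfl
  have hXfst : ∀ x : X, (inX x).fst = x := fun _ => rfl
  have hXsnd : ∀ x : X, (inX x).snd = 0 := fun _ => rfl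
  have hYfst : ∀ y : Y, (inY y).fst = 0 := fun _ => rfl
  have hYsnd : ∀ y : Y, (inY y).snd = y := fun _ => rfl
  have hnormZ : ∀ w : WithLp 1 (X × Y), ‖w‖ = ‖w.fst‖ + ‖w.snd‖ := by
    intro w
    rw [WithLp.prod_norm_eq_add (by norm_num)]
    norm_num
  have hnormX : ∀ x : X, ‖inX x‖ = ‖x‖ := by
    intro x
    rw [hnormZ, hXfst, hXsnd, norm_zero, add_zero]
  have hnormY : ∀ y : Y, ‖inY y‖ = ‖y‖ := by
    intro y
    rw [hnormZ, hYfst, hYsnd, norm_zero, zero_add]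
  have hsplit : ∀ w : WithLp 1 (X × Y), inX w.fst + inY w.snd = w := by
    intro w
    have h : inX w.fst + inY w.snd = eqv.symm ((w.fst, 0) + (0, w.snd)) := by
      rw [map_add]; rfl
    rw [h, Prod.mk_add_mk, add_zero, zero_add]
    rfl
  -- extract slice decomposition of z
  obtain ⟨sfun, hsfun, hssum⟩ := (mem_setSum_iff' _ _ _).1 hzC
  have hsvexists : ∀ i, ∃ p ∈ ballSlice (WithLp 1 (X × Y)) (f i) (α i), lam i • p = sfun i :=
    fun i => Set.mem_smul_set.1 (hsfun i (Finset.mem_univ i))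
  choose sv hsv hsveq using hsvexists
  have hzsum : ∑ i, lam i • sv i = z := by
    rw [Finset.sum_congr rfl fun i _ => hsveq i, hssum]
  have hsb : ∀ i, ‖sv i‖ ≤ 1 := fun i => (mem_ballSlice_iff'.1 (hsv i)).1
  have hsf : ∀ i, 1 - α i < f i (sv i) := fun i => (mem_ballSlice_iff'.1 (hsv i)).2
  set xv : Fin n → X := fun i => (sv i).fst with hxv_def
  set yv : Fin n → Y := fun i => (sv i).snd with hyv_def
  have hxyv : ∀ i, ‖xv i‖ + ‖yv i‖ ≤ 1 := fun i => by
    rw [← hnormZ]; exact hsb i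
  have hxv1 : ∀ i, ‖xv i‖ ≤ 1 := fun i => by have := hxyv i; have := norm_nonneg (yv i); linarith
  have hyv1 : ∀ i, ‖yv i‖ ≤ 1 := fun i => by have := hxyv i; have := norm_nonneg (xv i); linarith
  set x : X := z.fst with hx_def
  set y : Y := z.snd with hy_def
  have hxsum : ∑ i, lam i • xv i = x := by
    rw [hx_def, ← hpx z, ← hzsum, map_sum]
    exact Finset.sum_congr rfl fun i _ => by rw [map_smul, hpx]
  have hysum : ∑ i, lam i • yv i = y := by
    rw [hy_def, ← hpy z, ← hzsum, map_sum]
    exact Finset.sum_congr rfl fun i _ => by rw [map_smul, hpy]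
  have hxy1 : ‖x‖ + ‖y‖ = 1 := by rw [← hnormZ, hz1]
  have hfsplit : ∀ i, f i (sv i) = (f i) (inX (xv i)) + (f i) (inY (yv i)) := by
    intro i
    rw [← map_add, hsplit]
  -- norm equalities
  have hAle : ‖x‖ ≤ ∑ i, lam i * ‖xv i‖ := by
    rw [← hxsum]
    refine le_trans (norm_sum_le _ _) (le_of_eq (Finset.sum_congr rfl fun i _ => ?_))
    rw [norm_smul, Real.norm_eq_abs, abs_of_nonneg (hlam0 i)]
  have hBle : ‖y‖ ≤ ∑ i, lam i * ‖yv i‖ := by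
    rw [← hysum]
    refine le_trans (norm_sum_le _ _) (le_of_eq (Finset.sum_congr rfl fun i _ => ?_))
    rw [norm_smul, Real.norm_eq_abs, abs_of_nonneg (hlam0 i)]
  have hABle : (∑ i, lam i * ‖xv i‖) + ∑ i, lam i * ‖yv i‖ ≤ 1 := by
    rw [← Finset.sum_add_distrib, ← hlam1]
    refine Finset.sum_le_sum fun i _ => ?_
    rw [← mul_add]
    calc lam i * (‖xv i‖ + ‖yv i‖) ≤ lam i * 1 :=
          mul_le_mul_of_nonneg_left (hxyv i) (hlam0 i)
      _ = lam i := mul_one _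
  have hA : ∑ i, lam i * ‖xv i‖ = ‖x‖ := by linarith
  have hB : ∑ i, lam i * ‖yv i‖ = ‖y‖ := by linarith
  -- slack and minimal weight
  have hfinNE : Nonempty (Fin n) := Fin.pos_iff_nonempty.1 hn
  set γ : ℝ := Finset.univ.inf' Finset.univ_nonempty (fun i => f i (sv i) - (1 - α i)) with hγ_def
  have hγpos : 0 < γ := by
    rw [hγ_def, Finset.lt_inf'_iff]
    intro i _
    have := hsf i
    linarith
  have hγle : ∀ i, γ ≤ f i (sv i) - (1 - α i) := fun i =>
    Finset.inf'_le _ (Finset.mem_univ i)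
  set ε : ℝ := min γ 1 / 8 with hε_def
  have hε : 0 < ε := by
    rw [hε_def]
    have : 0 < min γ 1 := lt_min hγpos one_pos
    linarith
  have hε8γ : 8 * ε ≤ γ := by
    rw [hε_def]
    have : min γ 1 ≤ γ := min_le_left _ _
    linarith
  have hε1 : ε ≤ 1 := by
    rw [hε_def]
    have : min γ 1 ≤ 1 := min_le_right _ _
    linarith
  set c : ℝ := Finset.univ.inf' Finset.univ_nonempty
      (fun i => if lam i ≤ 0 then 1 else lam i) with hc_def
  have hc : 0 < c := by
    rw [hc_def, Finset.lt_inf'_iff]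
    intro i _
    by_cases h : lam i ≤ 0
    · simp [h]
    · simp [h]
      linarith [lt_of_not_ge h]
  have hcl : ∀ i, 0 < lam i → c ≤ lam i := by
    intro i hi
    have h : c ≤ (if lam i ≤ 0 then 1 else lam i) :=
      Finset.inf'_le _ (Finset.mem_univ i)
    rwa [if_neg (not_le.2 hi)] at h
  have hlamle1 : ∀ i, lam i ≤ 1 := by
    intro i
    rw [← hlam1]
    exact Finset.single_le_sum (f := lam) (fun j _ => hlam0 j) (Finset.mem_univ i)
  have hc1 : c ≤ 1 := by
    obtain ⟨i⟩ := hfinNE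
    refine le_trans (Finset.inf'_le _ (Finset.mem_univ i)) ?_
    by_cases h : lam i ≤ 0 <;> simp [h, hlamle1 i]
  clear_value γ ε c
  -- assembly helper
  have assemble : ∀ w : WithLp 1 (X × Y),
      (∃ w' : Fin n → WithLp 1 (X × Y), ∑ i, lam i • w' i = w ∧
        ∀ i, 0 < lam i → ‖w' i‖ ≤ 1 ∧ 1 - α i < f i (w' i)) →
      w ∈ ∑ i, lam i • ballSlice (WithLp 1 (X × Y)) (f i) (α i) := by
    rintro w ⟨w', hw'sum, hw'⟩
    refine (mem_setSum_iff' _ _ _).2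
      ⟨fun i => lam i • (if h : 0 < lam i then w' i else sv i), fun i _ => ?_, ?_⟩
    · by_cases h : 0 < lam i
      · simp only [dif_pos h]
        exact Set.smul_mem_smul_set (mem_ballSlice_iff'.2 (hw' i h))
      · simp only [dif_neg h]
        exact Set.smul_mem_smul_set (hsv i)
    · rw [← hw'sum]
      refine Finset.sum_congr rfl fun i _ => ?_
      show lam i • (if h : 0 < lam i then w' i else sv i) = lam i • w' i
      by_cases h : 0 < lam i
      · rw [dif_pos h]
      · have hz0 : lam i = 0 := le_antisymm (not_lt.1 h) (hlam0 i)
        rw [hz0, zero_smul, zero_smul]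
  -- case split on ‖x‖, ‖y‖
  rcases eq_or_lt_of_le (norm_nonneg x) with hax | hax
  · -- ‖x‖ = 0
    have hax0 : ‖x‖ = 0 := hax.symm
    have hby1 : ‖y‖ = 1 := by linarith only [hxy1, hax0]
    have hby : (0:ℝ) < ‖y‖ := by rw [hby1]; norm_num
    have hy0 : y ≠ 0 := by rw [← norm_pos_iff]; exact hby
    have hxvz : ∀ i, 0 < lam i → xv i = 0 := by
      intro i hli
      have hsum0 : ∑ j, lam j * ‖xv j‖ = 0 := by rw [hA, hax0]
      have h := (Finset.sum_eq_zero_iff_of_nonneg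
        (fun j _ => mul_nonneg (hlam0 j) (norm_nonneg _))).1 hsum0 i (Finset.mem_univ i)
      rcases mul_eq_zero.1 h with h' | h'
      · exact absurd h' (ne_of_gt hli)
      · exact norm_eq_zero.1 h'
    set gY : Fin n → StrongDual ℝ Y := fun i => (f i).comp inY with hgY_def
    have hgY1 : ∀ i, ‖gY i‖ ≤ 1 := by
      intro i
      refine ContinuousLinearMap.opNorm_le_bound _ zero_le_one fun v => ?_
      rw [one_mul]
      calc ‖gY i v‖ ≤ ‖f i‖ * ‖inY v‖ := (f i).le_opNorm _
        _ = ‖v‖ := by rw [hf1 i, one_mul, hnormY]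
    obtain ⟨FY, δY, hδY0, hδYε, hdecY⟩ :=
      oneSideDecomp' hY hn lam hlam0 yv gY hgY1 hyv1 hysum hby hB rfl ε hε hε1
    obtain ⟨ys, hys1, hysy0⟩ := exists_dual_vector ℝ y (norm_ne_zero_iff.2 hy0)
    have hysy : ys y = ‖y‖ := by exact_mod_cast hysy0
    set F : Finset (StrongDual ℝ (WithLp 1 (X × Y))) :=
      (FY.image fun φ => φ.comp pyL) ∪ {ys.comp pyL} with hF_def
    set δ : ℝ := min δY (ε * c) with hδ_def
    have hδ0 : 0 < δ := lt_min hδY0 (mul_pos hε hc)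
    have hδδY : δ ≤ δY := min_le_left _ _
    have hδεc : δ ≤ ε * c := min_le_right _ _
    clear_value δ
    refine ⟨F, δ, hδ0, ?_⟩
    rintro w ⟨hwball, hwF⟩
    have hw1 : ‖w‖ ≤ 1 := by
      rwa [Metric.mem_closedBall, dist_zero_right] at hwball
    have huv : ‖w.fst‖ + ‖w.snd‖ ≤ 1 := by rw [← hnormZ]; exact hw1
    have hwFY : ∀ φ ∈ FY, |φ w.snd - φ y| < δ := by
      intro φ hφ
      have hmem : φ.comp pyL ∈ F := by
        rw [hF_def]
        exact Finset.mem_union_left _ (Finset.mem_image_of_mem _ hφ)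
      simpa [hpx, hpy] using hwF _ hmem
    have hysw : |ys w.snd - ys y| < δ := by
      have hmem : ys.comp pyL ∈ F := by
        rw [hF_def]
        exact Finset.mem_union_right _ (by simp)
      simpa [hpx, hpy] using hwF _ hmem
    have hysub : ∀ v : Y, ys v ≤ ‖v‖ := by
      intro v
      calc ys v ≤ |ys v| := le_abs_self _
        _ = ‖ys v‖ := (Real.norm_eq_abs _).symm
        _ ≤ ‖ys‖ * ‖v‖ := ys.le_opNorm _
        _ = ‖v‖ := by rw [hys1, one_mul]
    have hvl : ‖y‖ - δ < ‖w.snd‖ := by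
      have h1 := (abs_lt.1 hysw).1
      rw [hysy] at h1
      have h2 := hysub w.snd
      linarith only [h1, h2]
    have hvsnd1 : ‖w.snd‖ ≤ 1 := by linarith only [huv, norm_nonneg w.fst]
    have hvu : ‖w.snd‖ < ‖y‖ + δ := by linarith only [hvsnd1, hby1, hδ0]
    have hunorm : ‖w.fst‖ < δ := by linarith only [huv, hvl, hby1]
    obtain ⟨vv, hvvsum, hvv0, hvvbnd⟩ :=
      hdecY w.snd hvsnd1 (by linarith only [hvl, hδδY]) (by linarith only [hvu, hδδY])
        (fun φ hφ => lt_of_lt_of_le (hwFY φ hφ) hδδY)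
    set wv : Fin n → WithLp 1 (X × Y) := fun i => inY (vv i) with hwv_def
    set t : Fin n → ℝ := fun i => ‖w.snd‖ / ‖y‖ * ‖yv i‖ with ht_def
    have ht0 : ∀ i, 0 ≤ t i := by
      intro i
      rw [ht_def]
      positivity
    have hti1 : ∀ i, t i ≤ 1 := by
      intro i
      have h := mul_le_mul hvsnd1 (hyv1 i) (norm_nonneg _) zero_le_one
      show ‖w.snd‖ / ‖y‖ * ‖yv i‖ ≤ 1
      rw [hby1, div_one]
      linarith only [h]
    have hwt : ∀ i, ‖wv i‖ ≤ t i := by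
      intro i
      by_cases hli : 0 < lam i
      · obtain ⟨hvb, -⟩ := hvvbnd i hli
        rw [hwv_def]
        show ‖inY (vv i)‖ ≤ _
        rw [hnormY, ht_def]
        exact hvb
      · have hz0 : lam i = 0 := le_antisymm (not_lt.1 hli) (hlam0 i)
        rw [hwv_def]
        show ‖inY (vv i)‖ ≤ _
        rw [hnormY, hvv0 i hz0, norm_zero]
        exact ht0 i
    set ρ : WithLp 1 (X × Y) := inX w.fst with hρ_def
    have hρn : ‖ρ‖ = ‖w.fst‖ := hnormX _
    have hsumt : ∑ i, lam i * t i + ‖ρ‖ ≤ 1 := by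
      have h : ∑ i, lam i * t i = ‖w.snd‖ / ‖y‖ * ∑ i, lam i * ‖yv i‖ := by
        rw [Finset.mul_sum]
        exact Finset.sum_congr rfl fun i _ => by rw [ht_def]; ring
      rw [h, hB, div_mul_cancel₀ _ (ne_of_gt hby), hρn]
      linarith only [huv]
    have hti1' := hti1
    clear_value t
    have hfwv : ∀ i, 0 < lam i → 1 - α i + 4 * ε < f i (wv i) := by
      intro i hli
      obtain ⟨-, hgv⟩ := hvvbnd i hli
      have hval : f i (wv i) = gY i (vv i) := rfl
      have hsv_val : f i (sv i) = f i (inX (xv i)) + gY i (yv i) := hfsplit i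
      have hfx0 : f i (inX (xv i)) = 0 := by rw [hxvz i hli, map_zero, map_zero]
      have h1 := hγle i
      rw [hval]
      linarith only [hgv, hsv_val, hfx0, h1, hε8γ, hε]
    have htup : ∀ i, t i ≤ 1 + 4 * ε / 4 := fun i => by linarith only [hti1 i, hε]
    have hEs : ‖ρ‖ + ∑ i, lam i * max (t i - 1) 0 ≤ 4 * ε * c / 4 := by
      have hmz : ∀ i ∈ Finset.univ, lam i * max (t i - 1) 0 = 0 := fun i _ => by
        rw [max_eq_right (by linarith only [hti1 i]), mul_zero]
      rw [Finset.sum_congr rfl hmz, Finset.sum_const_zero, add_zero, hρn]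
      calc ‖w.fst‖ ≤ δ := hunorm.le
        _ ≤ ε * c := hδεc
        _ = 4 * ε * c / 4 := by ring
    obtain ⟨w', hw'sum, hw'⟩ :=
      redistribute' lam hlam0 hlam1 wv t f α ρ (4 * ε) c (by linarith only [hε]) hc hcl
        ht0 hwt hsumt (fun i => le_of_eq (hf1 i)) hfwv htup hEs
    refine assemble w ⟨w', ?_, hw'⟩
    rw [hw'sum]
    have h : ∑ i, lam i • wv i = inY (∑ i, lam i • vv i) := by
      rw [map_sum]
      refine Finset.sum_congr rfl fun i _ => ?_
      rw [hwv_def]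
      show lam i • inY (vv i) = _
      rw [map_smul]
    rw [h, hvvsum, hρ_def, add_comm]
    exact hsplit w
  · rcases eq_or_lt_of_le (norm_nonneg y) with hby | hby
    · -- ‖y‖ = 0
      have hby0 : ‖y‖ = 0 := hby.symm
      have hax1 : ‖x‖ = 1 := by linarith only [hxy1, hby0]
      have hx0 : x ≠ 0 := by rw [← norm_pos_iff]; exact hax
      have hyvz : ∀ i, 0 < lam i → yv i = 0 := by
        intro i hli
        have hsum0 : ∑ j, lam j * ‖yv j‖ = 0 := by rw [hB, hby0]
        have h := (Finset.sum_eq_zero_iff_of_nonneg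
          (fun j _ => mul_nonneg (hlam0 j) (norm_nonneg _))).1 hsum0 i (Finset.mem_univ i)
        rcases mul_eq_zero.1 h with h' | h'
        · exact absurd h' (ne_of_gt hli)
        · exact norm_eq_zero.1 h'
      set gX : Fin n → StrongDual ℝ X := fun i => (f i).comp inX with hgX_def
      have hgX1 : ∀ i, ‖gX i‖ ≤ 1 := by
        intro i
        refine ContinuousLinearMap.opNorm_le_bound _ zero_le_one fun u => ?_
        rw [one_mul]
        calc ‖gX i u‖ ≤ ‖f i‖ * ‖inX u‖ := (f i).le_opNorm _
          _ = ‖u‖ := by rw [hf1 i, one_mul, hnormX]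
      obtain ⟨FX, δX, hδX0, hδXε, hdecX⟩ :=
        oneSideDecomp' hX hn lam hlam0 xv gX hgX1 hxv1 hxsum hax hA rfl ε hε hε1
      obtain ⟨xs, hxs1, hxsx0⟩ := exists_dual_vector ℝ x (norm_ne_zero_iff.2 hx0)
      have hxsx : xs x = ‖x‖ := by exact_mod_cast hxsx0
      set F : Finset (StrongDual ℝ (WithLp 1 (X × Y))) :=
        (FX.image fun φ => φ.comp pxL) ∪ {xs.comp pxL} with hF_def
      set δ : ℝ := min δX (ε * c) with hδ_def
      have hδ0 : 0 < δ := lt_min hδX0 (mul_pos hε hc)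
      have hδδX : δ ≤ δX := min_le_left _ _
      have hδεc : δ ≤ ε * c := min_le_right _ _
      clear_value δ
      refine ⟨F, δ, hδ0, ?_⟩
      rintro w ⟨hwball, hwF⟩
      have hw1 : ‖w‖ ≤ 1 := by
        rwa [Metric.mem_closedBall, dist_zero_right] at hwball
      have huv : ‖w.fst‖ + ‖w.snd‖ ≤ 1 := by rw [← hnormZ]; exact hw1
      have hwFX : ∀ φ ∈ FX, |φ w.fst - φ x| < δ := by
        intro φ hφ
        have hmem : φ.comp pxL ∈ F := by
          rw [hF_def]
          exact Finset.mem_union_left _ (Finset.mem_image_of_mem _ hφ)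
        simpa [hpx, hpy] using hwF _ hmem
      have hxsw : |xs w.fst - xs x| < δ := by
        have hmem : xs.comp pxL ∈ F := by
          rw [hF_def]
          exact Finset.mem_union_right _ (by simp)
        simpa [hpx, hpy] using hwF _ hmem
      have hxsub : ∀ u : X, xs u ≤ ‖u‖ := by
        intro u
        calc xs u ≤ |xs u| := le_abs_self _
          _ = ‖xs u‖ := (Real.norm_eq_abs _).symm
          _ ≤ ‖xs‖ * ‖u‖ := xs.le_opNorm _
          _ = ‖u‖ := by rw [hxs1, one_mul]
      have hul : ‖x‖ - δ < ‖w.fst‖ := by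
        have h1 := (abs_lt.1 hxsw).1
        rw [hxsx] at h1
        have h2 := hxsub w.fst
        linarith only [h1, h2]
      have hufst1 : ‖w.fst‖ ≤ 1 := by linarith only [huv, norm_nonneg w.snd]
      have huu : ‖w.fst‖ < ‖x‖ + δ := by linarith only [hufst1, hax1, hδ0]
      have hvnorm : ‖w.snd‖ < δ := by linarith only [huv, hul, hax1]
      obtain ⟨uu, huusum, huu0, huubnd⟩ :=
        hdecX w.fst hufst1 (by linarith only [hul, hδδX]) (by linarith only [huu, hδδX])
          (fun φ hφ => lt_of_lt_of_le (hwFX φ hφ) hδδX)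
      set wv : Fin n → WithLp 1 (X × Y) := fun i => inX (uu i) with hwv_def
      set t : Fin n → ℝ := fun i => ‖w.fst‖ / ‖x‖ * ‖xv i‖ with ht_def
      have ht0 : ∀ i, 0 ≤ t i := by
        intro i
        rw [ht_def]
        positivity
      have hti1 : ∀ i, t i ≤ 1 := by
        intro i
        have h := mul_le_mul hufst1 (hxv1 i) (norm_nonneg _) zero_le_one
        show ‖w.fst‖ / ‖x‖ * ‖xv i‖ ≤ 1
        rw [hax1, div_one]
        linarith only [h]
      have hwt : ∀ i, ‖wv i‖ ≤ t i := by
        intro i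
        by_cases hli : 0 < lam i
        · obtain ⟨hub, -⟩ := huubnd i hli
          rw [hwv_def]
          show ‖inX (uu i)‖ ≤ _
          rw [hnormX, ht_def]
          exact hub
        · have hz0 : lam i = 0 := le_antisymm (not_lt.1 hli) (hlam0 i)
          rw [hwv_def]
          show ‖inX (uu i)‖ ≤ _
          rw [hnormX, huu0 i hz0, norm_zero]
          exact ht0 i
      set ρ : WithLp 1 (X × Y) := inY w.snd with hρ_def
      have hρn : ‖ρ‖ = ‖w.snd‖ := hnormY _
      have hsumt : ∑ i, lam i * t i + ‖ρ‖ ≤ 1 := by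
        have h : ∑ i, lam i * t i = ‖w.fst‖ / ‖x‖ * ∑ i, lam i * ‖xv i‖ := by
          rw [Finset.mul_sum]
          exact Finset.sum_congr rfl fun i _ => by rw [ht_def]; ring
        rw [h, hA, div_mul_cancel₀ _ (ne_of_gt hax), hρn]
        linarith only [huv]
      clear_value t
      have hfwv : ∀ i, 0 < lam i → 1 - α i + 4 * ε < f i (wv i) := by
        intro i hli
        obtain ⟨-, hgu⟩ := huubnd i hli
        have hval : f i (wv i) = gX i (uu i) := rfl
        have hsv_val : f i (sv i) = gX i (xv i) + f i (inY (yv i)) := hfsplit i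
        have hfy0 : f i (inY (yv i)) = 0 := by rw [hyvz i hli, map_zero, map_zero]
        have h1 := hγle i
        rw [hval]
        linarith only [hgu, hsv_val, hfy0, h1, hε8γ, hε]
      have htup : ∀ i, t i ≤ 1 + 4 * ε / 4 := fun i => by linarith only [hti1 i, hε]
      have hEs : ‖ρ‖ + ∑ i, lam i * max (t i - 1) 0 ≤ 4 * ε * c / 4 := by
        have hmz : ∀ i ∈ Finset.univ, lam i * max (t i - 1) 0 = 0 := fun i _ => by
          rw [max_eq_right (by linarith only [hti1 i]), mul_zero]
        rw [Finset.sum_congr rfl hmz, Finset.sum_const_zero, add_zero, hρn]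
        calc ‖w.snd‖ ≤ δ := hvnorm.le
          _ ≤ ε * c := hδεc
          _ = 4 * ε * c / 4 := by ring
      obtain ⟨w', hw'sum, hw'⟩ :=
        redistribute' lam hlam0 hlam1 wv t f α ρ (4 * ε) c (by linarith only [hε]) hc hcl
          ht0 hwt hsumt (fun i => le_of_eq (hf1 i)) hfwv htup hEs
      refine assemble w ⟨w', ?_, hw'⟩
      rw [hw'sum]
      have h : ∑ i, lam i • wv i = inX (∑ i, lam i • uu i) := by
        rw [map_sum]
        refine Finset.sum_congr rfl fun i _ => ?_
        rw [hwv_def]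
        show lam i • inX (uu i) = _
        rw [map_smul]
      rw [h, huusum, hρ_def]
      exact hsplit w
    · -- main case
      set gX : Fin n → StrongDual ℝ X := fun i => (f i).comp inX with hgX_def
      set gY : Fin n → StrongDual ℝ Y := fun i => (f i).comp inY with hgY_def
      have hgX1 : ∀ i, ‖gX i‖ ≤ 1 := by
        intro i
        refine ContinuousLinearMap.opNorm_le_bound _ zero_le_one fun u => ?_
        rw [one_mul]
        calc ‖gX i u‖ ≤ ‖f i‖ * ‖inX u‖ := (f i).le_opNorm _
          _ = ‖u‖ := by rw [hf1 i, one_mul, hnormX]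
      have hgY1 : ∀ i, ‖gY i‖ ≤ 1 := by
        intro i
        refine ContinuousLinearMap.opNorm_le_bound _ zero_le_one fun u => ?_
        rw [one_mul]
        calc ‖gY i u‖ ≤ ‖f i‖ * ‖inY u‖ := (f i).le_opNorm _
          _ = ‖u‖ := by rw [hf1 i, one_mul, hnormY]
      obtain ⟨FX, δX, hδX0, hδXε, hdecX⟩ :=
        oneSideDecomp' hX hn lam hlam0 xv gX hgX1 hxv1 hxsum hax hA rfl ε hε hε1
      obtain ⟨FY, δY, hδY0, hδYε, hdecY⟩ :=
        oneSideDecomp' hY hn lam hlam0 yv gY hgY1 hyv1 hysum hby hB rfl ε hε hε1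
      have hx0 : x ≠ 0 := by rw [← norm_pos_iff]; exact hax
      have hy0 : y ≠ 0 := by rw [← norm_pos_iff]; exact hby
      obtain ⟨xs, hxs1, hxsx0⟩ := exists_dual_vector ℝ x (norm_ne_zero_iff.2 hx0)
      obtain ⟨ys, hys1, hysy0⟩ := exists_dual_vector ℝ y (norm_ne_zero_iff.2 hy0)
      have hxsx : xs x = ‖x‖ := by exact_mod_cast hxsx0
      have hysy : ys y = ‖y‖ := by exact_mod_cast hysy0
      set F : Finset (StrongDual ℝ (WithLp 1 (X × Y))) :=
        ((FX.image fun φ => φ.comp pxL) ∪ (FY.image fun φ => φ.comp pyL)) ∪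
          {xs.comp pxL, ys.comp pyL} with hF_def
      set δ : ℝ := min (min δX δY) (ε * c * (‖x‖ * ‖y‖)) with hδ_def
      have hXY : 0 < ‖x‖ * ‖y‖ := mul_pos hax hby
      have hδ0 : 0 < δ := lt_min (lt_min hδX0 hδY0) (mul_pos (mul_pos hε hc) hXY)
      have hδδX : δ ≤ δX := le_trans (min_le_left _ _) (min_le_left _ _)
      have hδδY : δ ≤ δY := le_trans (min_le_left _ _) (min_le_right _ _)
      have hδxyc : δ ≤ ε * c * (‖x‖ * ‖y‖) := min_le_right _ _
      clear_value δ
      refine ⟨F, δ, hδ0, ?_⟩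
      rintro w ⟨hwball, hwF⟩
      have hw1 : ‖w‖ ≤ 1 := by
        rwa [Metric.mem_closedBall, dist_zero_right] at hwball
      have huv : ‖w.fst‖ + ‖w.snd‖ ≤ 1 := by rw [← hnormZ]; exact hw1
      have hwFX : ∀ φ ∈ FX, |φ w.fst - φ x| < δ := by
        intro φ hφ
        have hmem : φ.comp pxL ∈ F := by
          rw [hF_def]
          exact Finset.mem_union_left _
            (Finset.mem_union_left _ (Finset.mem_image_of_mem _ hφ))
        have h := hwF _ hmem
        simpa [hpx, hpy] using h
      have hwFY : ∀ φ ∈ FY, |φ w.snd - φ y| < δ := by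
        intro φ hφ
        have hmem : φ.comp pyL ∈ F := by
          rw [hF_def]
          exact Finset.mem_union_left _
            (Finset.mem_union_right _ (Finset.mem_image_of_mem _ hφ))
        have h := hwF _ hmem
        simpa [hpx, hpy] using h
      have hxsw : |xs w.fst - xs x| < δ := by
        have hmem : xs.comp pxL ∈ F := by
          rw [hF_def]
          refine Finset.mem_union_right _ ?_
          simp
        simpa [hpx, hpy] using hwF _ hmem
      have hysw : |ys w.snd - ys y| < δ := by
        have hmem : ys.comp pyL ∈ F := by
          rw [hF_def]
          refine Finset.mem_union_right _ ?_
          simp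
        simpa [hpx, hpy] using hwF _ hmem
      have hxsub : ∀ u : X, xs u ≤ ‖u‖ := by
        intro u
        calc xs u ≤ |xs u| := le_abs_self _
          _ = ‖xs u‖ := (Real.norm_eq_abs _).symm
          _ ≤ ‖xs‖ * ‖u‖ := xs.le_opNorm _
          _ = ‖u‖ := by rw [hxs1, one_mul]
      have hysub : ∀ v : Y, ys v ≤ ‖v‖ := by
        intro v
        calc ys v ≤ |ys v| := le_abs_self _
          _ = ‖ys v‖ := (Real.norm_eq_abs _).symm
          _ ≤ ‖ys‖ * ‖v‖ := ys.le_opNorm _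
          _ = ‖v‖ := by rw [hys1, one_mul]
      have hul : ‖x‖ - δ < ‖w.fst‖ := by
        have h1 := (abs_lt.1 hxsw).1
        rw [hxsx] at h1
        have h2 := hxsub w.fst
        linarith only [h1, h2]
      have hvl : ‖y‖ - δ < ‖w.snd‖ := by
        have h1 := (abs_lt.1 hysw).1
        rw [hysy] at h1
        have h2 := hysub w.snd
        linarith only [h1, h2]
      have huu : ‖w.fst‖ < ‖x‖ + δ := by linarith only [hxy1, huv, hvl]
      have hvu : ‖w.snd‖ < ‖y‖ + δ := by linarith only [hxy1, huv, hul]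
      have hufst1 : ‖w.fst‖ ≤ 1 := by linarith only [huv, norm_nonneg w.snd]
      have hvsnd1 : ‖w.snd‖ ≤ 1 := by linarith only [huv, norm_nonneg w.fst]
      obtain ⟨uu, huusum, huu0, huubnd⟩ :=
        hdecX w.fst hufst1 (by linarith only [hul, hδδX]) (by linarith only [huu, hδδX])
          (fun φ hφ => lt_of_lt_of_le (hwFX φ hφ) hδδX)
      obtain ⟨vv, hvvsum, hvv0, hvvbnd⟩ :=
        hdecY w.snd hvsnd1 (by linarith only [hvl, hδδY]) (by linarith only [hvu, hδδY])
          (fun φ hφ => lt_of_lt_of_le (hwFY φ hφ) hδδY)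
      set wv : Fin n → WithLp 1 (X × Y) := fun i => inX (uu i) + inY (vv i) with hwv_def
      set t : Fin n → ℝ := fun i =>
        ‖w.fst‖ / ‖x‖ * ‖xv i‖ + ‖w.snd‖ / ‖y‖ * ‖yv i‖ with ht_def
      have ht0 : ∀ i, 0 ≤ t i := by
        intro i
        rw [ht_def]
        positivity
      have hwvnorm : ∀ i, ‖wv i‖ = ‖uu i‖ + ‖vv i‖ := by
        intro i
        rw [hwv_def]
        show ‖inX (uu i) + inY (vv i)‖ = _
        rw [hnormZ]
        congr 1
        · rw [WithLp.add_fst, hXfst, hYfst, add_zero]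
        · rw [WithLp.add_snd, hXsnd, hYsnd, zero_add]
      have hwt : ∀ i, ‖wv i‖ ≤ t i := by
        intro i
        by_cases hli : 0 < lam i
        · obtain ⟨hub, -⟩ := huubnd i hli
          obtain ⟨hvb, -⟩ := hvvbnd i hli
          rw [hwvnorm i, ht_def]
          exact add_le_add hub hvb
        · have hz0 : lam i = 0 := le_antisymm (not_lt.1 hli) (hlam0 i)
          rw [hwvnorm i, huu0 i hz0, hvv0 i hz0, norm_zero, norm_zero, add_zero]
          exact ht0 i
      have hsumt : ∑ i, lam i * t i + ‖(0 : WithLp 1 (X × Y))‖ ≤ 1 := by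
        rw [norm_zero, add_zero]
        have h : ∑ i, lam i * t i
            = ‖w.fst‖ / ‖x‖ * (∑ i, lam i * ‖xv i‖)
              + ‖w.snd‖ / ‖y‖ * (∑ i, lam i * ‖yv i‖) := by
          rw [Finset.mul_sum, Finset.mul_sum, ← Finset.sum_add_distrib]
          exact Finset.sum_congr rfl fun i _ => by rw [ht_def]; ring
        rw [h, hA, hB, div_mul_cancel₀ _ (ne_of_gt hax), div_mul_cancel₀ _ (ne_of_gt hby)]
        exact huv
      have hti : ∀ i, t i ≤ 1 + δ / (‖x‖ * ‖y‖) := by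
        intro i
        rw [ht_def]
        exact arith_t_bound _ _ _ _ _ _ _ (norm_nonneg _) (norm_nonneg _) hax hby hxy1
          (hxyv i) (hxv1 i) (hyv1 i) huu hvu (norm_nonneg _) (norm_nonneg _) hδ0.le
      clear_value t
      have hfwv : ∀ i, 0 < lam i → 1 - α i + 4 * ε < f i (wv i) := by
        intro i hli
        obtain ⟨-, hgu⟩ := huubnd i hli
        obtain ⟨-, hgv⟩ := hvvbnd i hli
        have hval : f i (wv i) = gX i (uu i) + gY i (vv i) := by
          rw [hwv_def]
          show f i (inX (uu i) + inY (vv i)) = _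
          rw [map_add]
          rfl
        have hsv_val : f i (sv i) = gX i (xv i) + gY i (yv i) := hfsplit i
        have h1 := hγle i
        rw [hval]
        linarith only [hgu, hgv, hsv_val, h1, hε8γ, hε]
      have hδε' : δ / (‖x‖ * ‖y‖) ≤ ε * c := by
        rw [div_le_iff₀ hXY]
        linarith only [hδxyc]
      have hεcε : ε * c ≤ ε := by
        calc ε * c ≤ ε * 1 := mul_le_mul_of_nonneg_left hc1 hε.le
          _ = ε := mul_one _
      have htup : ∀ i, t i ≤ 1 + 4 * ε / 4 := by
        intro i
        have h1 := hti i
        have h2 : 4 * ε / 4 = ε := by ring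
        rw [h2]
        linarith only [h1, hδε', hεcε]  -- t i ≤ 1 + ε
      have hEs : ‖(0 : WithLp 1 (X × Y))‖ + ∑ i, lam i * max (t i - 1) 0
          ≤ 4 * ε * c / 4 := by
        rw [norm_zero, zero_add]
        have hmax : ∀ i, max (t i - 1) 0 ≤ δ / (‖x‖ * ‖y‖) := by
          intro i
          apply max_le _ (by positivity)
          linarith only [hti i]
        calc ∑ i, lam i * max (t i - 1) 0
            ≤ ∑ i, lam i * (δ / (‖x‖ * ‖y‖)) :=
              Finset.sum_le_sum fun i _ =>
                mul_le_mul_of_nonneg_left (hmax i) (hlam0 i)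
          _ = δ / (‖x‖ * ‖y‖) := by rw [← Finset.sum_mul, hlam1, one_mul]
          _ ≤ ε * c := hδε'
          _ = 4 * ε * c / 4 := by ring
      obtain ⟨w', hw'sum, hw'⟩ :=
        redistribute' lam hlam0 hlam1 wv t f α 0 (4 * ε) c (by positivity) hc hcl
          ht0 hwt hsumt (fun i => le_of_eq (hf1 i)) hfwv htup hEs
      refine assemble w ⟨w', ?_, hw'⟩
      rw [hw'sum, add_zero]
      have h : ∑ i, lam i • wv i
          = inX (∑ i, lam i • uu i) + inY (∑ i, lam i • vv i) := by
        rw [map_sum, map_sum, ← Finset.sum_add_distrib]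
        refine Finset.sum_congr rfl fun i _ => ?_
        rw [hwv_def]
        show lam i • (inX (uu i) + inY (vv i)) = _
        rw [smul_add, map_smul, map_smul]
      rw [h, huusum, hvvsum, hsplit]
end
end

section
/- Let X and Y be infinite-dimensional Banach spaces each having the property that every finite convex combination of slices of the closed unit ball is relatively weakly open in the closed unit ball. Then every finite convex combination of slices of the closed unit ball of X ⊕₁ Y has nonempty interior in the relative weak topology of the closed unit ball of X ⊕₁ Y. -/
open scoped Pointwise

noncomputable section

section Aux

variable {Z : Type*} [NormedAddCommGroup Z] [NormedSpace ℝ Z]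

lemma mem_ballSlice' {f : StrongDual ℝ Z} {α : ℝ} {z : Z} :
    z ∈ ballSlice Z f α ↔ ‖z‖ ≤ 1 ∧ 1 - α < f z := by
  simp [ballSlice, Metric.mem_closedBall, dist_zero_right]

lemma ballSlice_nonempty' {f : StrongDual ℝ Z} {α : ℝ} (hf : ‖f‖ = 1) (hα : 0 < α) :
    (ballSlice Z f α).Nonempty := by
  rcases le_or_gt α 1 with h1 | h1
  · have hlt : 1 - α < ‖f‖ := by rw [hf]; linarith
    obtain ⟨x, hx1, hx2⟩ := ContinuousLinearMap.exists_lt_apply_of_lt_opNorm f hlt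
    rcases le_or_gt 0 (f x) with hfx | hfx
    · exact ⟨x, mem_ballSlice'.mpr ⟨hx1.le, by rwa [Real.norm_eq_abs, abs_of_nonneg hfx] at hx2⟩⟩
    · refine ⟨-x, mem_ballSlice'.mpr ⟨by simpa using hx1.le, ?_⟩⟩
      rw [map_neg]
      rwa [Real.norm_eq_abs, abs_of_neg hfx] at hx2
  · exact ⟨0, mem_ballSlice'.mpr ⟨by simp, by simp; linarith⟩⟩

lemma mem_ccs_iff' {n : ℕ} (lam : Fin n → ℝ) (S : Fin n → Set Z) (w : Z) :
    (w ∈ ∑ i, lam i • S i) ↔ ∃ zf : Fin n → Z, (∀ i, zf i ∈ S i) ∧ ∑ i, lam i • zf i = w := by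
  rw [Set.mem_fintype_sum]
  constructor
  · rintro ⟨k, hk, hsum⟩
    choose zf h1 h2 using fun i => Set.mem_smul_set.mp (hk i)
    exact ⟨zf, h1, by rw [Finset.sum_congr rfl fun i _ => h2 i]; exact hsum⟩
  · rintro ⟨zf, h1, h2⟩
    exact ⟨fun i => lam i • zf i, fun i => Set.smul_mem_smul_set (h1 i), h2⟩

lemma ccs_subset_ball' {n : ℕ} {lam : Fin n → ℝ} {f : Fin n → StrongDual ℝ Z}
    {α : Fin n → ℝ} (hlam : ∀ i, 0 ≤ lam i) (hlam1 : (∑ i, lam i) = 1) :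
    (∑ i, lam i • ballSlice Z (f i) (α i)) ⊆ Metric.closedBall 0 1 := by
  intro w hw
  obtain ⟨zf, h1, h2⟩ := (mem_ccs_iff' lam _ w).mp hw
  rw [Metric.mem_closedBall, dist_zero_right, ← h2]
  calc ‖∑ i, lam i • zf i‖ ≤ ∑ i, ‖lam i • zf i‖ := norm_sum_le _ _
  _ ≤ ∑ i, lam i := by
      apply Finset.sum_le_sum
      intro i _
      rw [norm_smul, Real.norm_eq_abs, abs_of_nonneg (hlam i)]
      exact mul_le_of_le_one_right (hlam i) (mem_ballSlice'.mp (h1 i)).1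
  _ = 1 := hlam1

lemma exists_perp_norm_one (hinf : ¬ FiniteDimensional ℝ Z) (F : Finset (StrongDual ℝ Z)) :
    ∃ v : Z, ‖v‖ = 1 ∧ ∀ f ∈ F, f v = 0 := by
  have hinj : ¬ ∀ v : Z, (∀ f ∈ F, f v = 0) → v = 0 := by
    intro hker
    apply hinf
    let L : Z →ₗ[ℝ] (F → ℝ) := LinearMap.pi (fun f => (f : StrongDual ℝ Z).toLinearMap)
    have : Function.Injective L := by
      rw [← LinearMap.ker_eq_bot, LinearMap.ker_eq_bot']
      intro v hv
      exact hker v fun f hf => by simpa [L] using congrFun hv ⟨f, hf⟩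
    exact Module.Finite.of_injective L this
  push_neg at hinj
  obtain ⟨v, hv, hv0⟩ := hinj
  refine ⟨‖v‖⁻¹ • v, ?_, fun f hf => by rw [map_smul]; simp [hv f hf]⟩
  rw [norm_smul, norm_inv, norm_norm]
  exact inv_mul_cancel₀ (norm_ne_zero_iff.mpr hv0)

lemma exists_norm_one_add (z v : Z) (hz : ‖z‖ ≤ 1) (hv : ‖v‖ = 1) :
    ∃ t : ℝ, 0 ≤ t ∧ ‖z + t • v‖ = 1 := by
  have hc : ContinuousOn (fun t : ℝ => ‖z + t • v‖) (Set.Icc 0 2) := by fun_prop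
  have h0 : ‖z + (0:ℝ) • v‖ ≤ 1 := by simpa using hz
  have h2 : 1 ≤ ‖z + (2:ℝ) • v‖ := by
    have h2v : ‖(2:ℝ) • v‖ = 2 := by rw [norm_smul, hv]; norm_num
    have hge : ‖(2:ℝ)•v‖ - ‖z‖ ≤ ‖z + (2:ℝ)•v‖ := by
      calc ‖(2:ℝ)•v‖ - ‖z‖ = ‖(2:ℝ)•v‖ - ‖-z‖ := by simp
      _ ≤ ‖(2:ℝ)•v - -z‖ := norm_sub_norm_le _ _
      _ = ‖z + (2:ℝ)•v‖ := by rw [sub_neg_eq_add, add_comm]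
    linarith [h2v ▸ hge]
  obtain ⟨t, ht, h⟩ := intermediate_value_Icc (by norm_num : (0:ℝ) ≤ 2) hc (Set.mem_Icc.mpr ⟨h0, h2⟩)
  exact ⟨t, ht.1, h⟩

lemma exists_norm_one_mem (hinf : ¬ FiniteDimensional ℝ Z) {C : Set Z}
    (hC : RelWeaklyOpen Z C) (hne : C.Nonempty) (hball : C ⊆ Metric.closedBall 0 1) :
    ∃ x ∈ C, ‖x‖ = 1 := by
  obtain ⟨z, hz⟩ := hne
  obtain ⟨F, δ, hδ, hsub⟩ := hC z hz
  obtain ⟨v, hv1, hv0⟩ := exists_perp_norm_one hinf F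
  have hzb : ‖z‖ ≤ 1 := by simpa [Metric.mem_closedBall, dist_zero_right] using hball hz
  obtain ⟨t, _, ht⟩ := exists_norm_one_add z v hzb hv1
  refine ⟨z + t • v, hsub ⟨?_, ?_⟩, ht⟩
  · simpa [Metric.mem_closedBall, dist_zero_right] using ht.le
  · intro f hf
    simp [map_add, map_smul, hv0 f hf, hδ]

/-- All the data needed from one of the two summands: a norm-one point of a convex
combination of slices, a decomposition of it, a norming functional, and weak-openness data. -/
lemma side_data (hinf : ¬ FiniteDimensional ℝ Z) (hP1 : PropP1 Z) {n : ℕ}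
    (G : Fin n → StrongDual ℝ Z) (β μ : Fin n → ℝ) (hn : 0 < n)
    (hG : ∀ i, ‖G i‖ = 1) (hβ : ∀ i, 0 < β i) (hμ : ∀ i, 0 ≤ μ i) (hμ1 : (∑ i, μ i) = 1) :
    ∃ (xb : Z) (xd : Fin n → Z) (Fx : Finset (StrongDual ℝ Z)) (δx : ℝ)
      (gh : StrongDual ℝ Z),
      ‖xb‖ = 1 ∧ (∀ i, xd i ∈ ballSlice Z (G i) (β i)) ∧ (∑ i, μ i • xd i) = xb ∧ 0 < δx ∧
      (∀ m : Z, ‖m‖ ≤ 1 → (∀ g ∈ Fx, |g m - g xb| < δx) →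
        ∃ x' : Fin n → Z, (∀ i, x' i ∈ ballSlice Z (G i) (β i)) ∧ (∑ i, μ i • x' i) = m) ∧
      ‖gh‖ = 1 ∧ gh xb = 1 := by
  set D := ∑ i, μ i • ballSlice Z (G i) (β i) with hD
  have hDccs : IsCCS Z D := ⟨n, G, β, μ, hn, hG, hβ, hμ, hμ1, rfl⟩
  have hDball : D ⊆ Metric.closedBall 0 1 := ccs_subset_ball' hμ hμ1
  have hDne : D.Nonempty := by
    have hsl := fun i => ballSlice_nonempty' (Z := Z) (hG i) (hβ i)
    choose s hs using hsl
    exact ⟨∑ i, μ i • s i, (mem_ccs_iff' μ _ _).mpr ⟨s, hs, rfl⟩⟩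
  obtain ⟨xb, hxbD, hxbnorm⟩ := exists_norm_one_mem hinf (hP1 D hDccs) hDne hDball
  obtain ⟨Fx, δx, hδx, hsub⟩ := hP1 D hDccs xb hxbD
  obtain ⟨xd, hxd, hxdsum⟩ := (mem_ccs_iff' μ _ xb).mp hxbD
  obtain ⟨gh, hgh1, hghxb⟩ := exists_dual_vector ℝ xb (by rw [← norm_ne_zero_iff, hxbnorm]; norm_num)
  refine ⟨xb, xd, Fx, δx, gh, hxbnorm, hxd, hxdsum, hδx, ?_, hgh1, by rw [hghxb, hxbnorm]; norm_num⟩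
  intro m hm hclose
  have : m ∈ D := hsub ⟨by simpa [Metric.mem_closedBall, dist_zero_right] using hm, hclose⟩
  exact (mem_ccs_iff' μ _ m).mp this

end Aux

section Prod1

variable {X Y : Type*} [NormedAddCommGroup X] [NormedSpace ℝ X]
  [NormedAddCommGroup Y] [NormedSpace ℝ Y]

/-- Constructor for elements of `X ⊕₁ Y`. -/
def mk1 (x : X) (y : Y) : WithLp 1 (X × Y) := (WithLp.equiv 1 (X × Y)).symm (x, y)

@[simp] lemma mk1_fst (x : X) (y : Y) : (mk1 x y).fst = x := rfl
@[simp] lemma mk1_snd (x : X) (y : Y) : (mk1 x y).snd = y := rfl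

lemma mk1_ext {a b : WithLp 1 (X × Y)} (h1 : a.fst = b.fst) (h2 : a.snd = b.snd) : a = b :=
  (WithLp.equiv 1 (X × Y)).injective (Prod.ext h1 h2)

lemma norm1_eq (a : WithLp 1 (X × Y)) : ‖a‖ = ‖a.fst‖ + ‖a.snd‖ := by
  rw [WithLp.prod_norm_eq_add (by norm_num)]; norm_num

lemma norm1_mk1 (x : X) (y : Y) : ‖(mk1 x y : WithLp 1 (X × Y))‖ = ‖x‖ + ‖y‖ := by
  rw [norm1_eq]; simp

def projXL : WithLp 1 (X × Y) →L[ℝ] X :=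
  (ContinuousLinearMap.fst ℝ X Y).comp
    (WithLp.prodContinuousLinearEquiv 1 ℝ X Y).toContinuousLinearMap

def projYL : WithLp 1 (X × Y) →L[ℝ] Y :=
  (ContinuousLinearMap.snd ℝ X Y).comp
    (WithLp.prodContinuousLinearEquiv 1 ℝ X Y).toContinuousLinearMap

@[simp] lemma projXL_apply (a : WithLp 1 (X × Y)) : projXL a = a.fst := rfl
@[simp] lemma projYL_apply (a : WithLp 1 (X × Y)) : projYL a = a.snd := rfl

def inXL : X →L[ℝ] WithLp 1 (X × Y) :=
  ((WithLp.prodContinuousLinearEquiv 1 ℝ X Y).symm).toContinuousLinearMap.comp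
    (ContinuousLinearMap.inl ℝ X Y)

def inYL : Y →L[ℝ] WithLp 1 (X × Y) :=
  ((WithLp.prodContinuousLinearEquiv 1 ℝ X Y).symm).toContinuousLinearMap.comp
    (ContinuousLinearMap.inr ℝ X Y)

@[simp] lemma inXL_apply (x : X) : (inXL x : WithLp 1 (X × Y)) = mk1 x 0 := rfl
@[simp] lemma inYL_apply (y : Y) : (inYL y : WithLp 1 (X × Y)) = mk1 0 y := rfl

lemma mk1_decomp (a : WithLp 1 (X × Y)) : a = mk1 a.fst 0 + mk1 0 a.snd := by
  apply mk1_ext <;> simp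

lemma dual_apply (f : StrongDual ℝ (WithLp 1 (X × Y))) (a : WithLp 1 (X × Y)) :
    f a = (f.comp inXL) a.fst + (f.comp inYL) a.snd := by
  conv_lhs => rw [mk1_decomp a]
  rw [map_add]
  rfl

lemma dual_apply_mk1 (f : StrongDual ℝ (WithLp 1 (X × Y))) (x : X) (y : Y) :
    f (mk1 x y) = (f.comp inXL) x + (f.comp inYL) y := by
  rw [dual_apply]; simp

lemma norm_comp_inXL_le (f : StrongDual ℝ (WithLp 1 (X × Y))) :
    ‖f.comp (inXL (X := X) (Y := Y))‖ ≤ ‖f‖ := by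
  apply ContinuousLinearMap.opNorm_le_bound _ (norm_nonneg f)
  intro x
  calc ‖f (inXL x)‖ ≤ ‖f‖ * ‖(inXL x : WithLp 1 (X × Y))‖ := f.le_opNorm _
  _ = ‖f‖ * ‖x‖ := by rw [inXL_apply, norm1_mk1]; simp

lemma norm_comp_inYL_le (f : StrongDual ℝ (WithLp 1 (X × Y))) :
    ‖f.comp (inYL (X := X) (Y := Y))‖ ≤ ‖f‖ := by
  apply ContinuousLinearMap.opNorm_le_bound _ (norm_nonneg f)
  intro y
  calc ‖f (inYL y)‖ ≤ ‖f‖ * ‖(inYL y : WithLp 1 (X × Y))‖ := f.le_opNorm _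
  _ = ‖f‖ * ‖y‖ := by rw [inYL_apply, norm1_mk1]; simp

lemma dual_norm_le_max (f : StrongDual ℝ (WithLp 1 (X × Y))) :
    ‖f‖ ≤ max ‖f.comp (inXL (X := X) (Y := Y))‖ ‖f.comp (inYL (X := X) (Y := Y))‖ := by
  apply ContinuousLinearMap.opNorm_le_bound _ (le_max_iff.mpr (Or.inl (norm_nonneg _)))
  intro a
  rw [dual_apply f a, norm1_eq]
  calc ‖(f.comp inXL) a.fst + (f.comp inYL) a.snd‖
      ≤ ‖(f.comp inXL) a.fst‖ + ‖(f.comp inYL) a.snd‖ := norm_add_le _ _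
  _ ≤ ‖f.comp inXL‖ * ‖a.fst‖ + ‖f.comp inYL‖ * ‖a.snd‖ := by
      gcongr <;> exact ContinuousLinearMap.le_opNorm _ _
  _ ≤ (max ‖f.comp (inXL (X := X) (Y := Y))‖ ‖f.comp (inYL (X := X) (Y := Y))‖)
        * (‖a.fst‖ + ‖a.snd‖) := by
      rw [mul_add]; gcongr <;> [exact le_max_left _ _; exact le_max_right _ _]

lemma fst_sum {ι : Type*} (s : Finset ι) (F : ι → WithLp 1 (X × Y)) :
    (∑ i ∈ s, F i).fst = ∑ i ∈ s, (F i).fst := by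
  exact map_sum (projXL (X := X) (Y := Y)) F s

lemma snd_sum {ι : Type*} (s : Finset ι) (F : ι → WithLp 1 (X × Y)) :
    (∑ i ∈ s, F i).snd = ∑ i ∈ s, (F i).snd := by
  exact map_sum (projYL (X := X) (Y := Y)) F s

end Prod1

section MoreAux

variable {Z : Type*} [NormedAddCommGroup Z] [NormedSpace ℝ Z]

lemma nontrivial_of_infdim (hinf : ¬ FiniteDimensional ℝ Z) : Nontrivial Z := by
  by_contra hn
  rw [not_nontrivial_iff_subsingleton] at hn
  exact hinf inferInstance

lemma exists_dual_norm_one (hinf : ¬ FiniteDimensional ℝ Z) :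
    ∃ g : StrongDual ℝ Z, ‖g‖ = 1 := by
  have := nontrivial_of_infdim hinf
  obtain ⟨x, hx⟩ := exists_ne (0 : Z)
  obtain ⟨g, hg, _⟩ := exists_dual_vector ℝ x (norm_ne_zero_iff.mpr hx)
  exact ⟨g, hg⟩

lemma filtered_sum_eq {E : Type*} [AddCommGroup E] [Module ℝ E] {n : ℕ}
    (P : Fin n → Prop) [DecidablePred P] (lam : Fin n → ℝ) {lamA : ℝ} (hlamA : lamA ≠ 0)
    (x' : Fin n → E) {m : E} (hm : (∑ i, (if P i then lam i / lamA else 0) • x' i) = m) :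
    ∑ i ∈ Finset.univ.filter P, lam i • x' i = lamA • m := by
  rw [← hm, Finset.smul_sum, Finset.sum_filter]
  apply Finset.sum_congr rfl
  intro i _
  by_cases h : P i
  · simp only [h, if_true, smul_smul]
    congr 1
    field_simp
  · simp [h]

end MoreAux

set_option maxHeartbeats 1600000 in
/-- If both infinite-dimensional Banach spaces `X` and `Y` have the
property that every finite convex combination of slices of the closed unit ball is
relatively weakly open, then every finite convex combination of slices of the closed
unit ball of `X ⊕₁ Y` has nonempty interior in the relative weak topology of the
closed unit ball of `X ⊕₁ Y`. -/
theorem propP2_one_sum_of_propP1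
    {X Y : Type*} [NormedAddCommGroup X] [NormedSpace ℝ X] [CompleteSpace X]
    [NormedAddCommGroup Y] [NormedSpace ℝ Y] [CompleteSpace Y]
    (hXinf : ¬ FiniteDimensional ℝ X) (hYinf : ¬ FiniteDimensional ℝ Y)
    (hX : PropP1 X) (hY : PropP1 Y) :
    PropP2 (WithLp 1 (X × Y)) := by
  classical
  intro C hC
  obtain ⟨n, f, α, lam, hn, hf, hα, hlam, hlam1, hCeq⟩ := hC
  have hnefin : (Finset.univ : Finset (Fin n)).Nonempty := ⟨⟨0, hn⟩, Finset.mem_univ _⟩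
  obtain ⟨g, hgdef⟩ : ∃ g : Fin n → StrongDual ℝ X, g = fun i => (f i).comp inXL :=
    ⟨_, rfl⟩
  obtain ⟨h, hhdef⟩ : ∃ h : Fin n → StrongDual ℝ Y, h = fun i => (f i).comp inYL :=
    ⟨_, rfl⟩
  have hgapply : ∀ i (x : X), ((f i).comp inXL) x = g i x := fun i x => by rw [hgdef]
  have hhapply : ∀ i (y : Y), ((f i).comp inYL) y = h i y := fun i y => by rw [hhdef]
  have hg_le : ∀ i, ‖g i‖ ≤ 1 := fun i => by
    rw [hgdef]; exact (hf i) ▸ norm_comp_inXL_le (f i)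
  have hh_le : ∀ i, ‖h i‖ ≤ 1 := fun i => by
    rw [hhdef]; exact (hf i) ▸ norm_comp_inYL_le (f i)
  have hgh1 : ∀ i, ‖g i‖ = 1 ∨ ‖h i‖ = 1 := by
    intro i
    have hm := dual_norm_le_max (f i)
    rw [hf i] at hm
    rw [hgdef, hhdef]
    dsimp only
    rcases le_max_iff.mp hm with hc | hc
    · exact Or.inl (le_antisymm (hf i ▸ norm_comp_inXL_le (f i)) hc)
    · exact Or.inr (le_antisymm (hf i ▸ norm_comp_inYL_le (f i)) hc)
  obtain ⟨A, hAdef⟩ : ∃ A : Finset (Fin n), A = Finset.univ.filter (fun i => ‖g i‖ = 1) :=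
    ⟨_, rfl⟩
  have hmemA : ∀ i, i ∈ A ↔ ‖g i‖ = 1 := by intro i; simp [hAdef]
  have hPh : ∀ i, i ∉ A → ‖h i‖ = 1 := fun i hi =>
    (hgh1 i).resolve_left (fun hgi => hi ((hmemA i).mpr hgi))
  obtain ⟨lamA, hlamAdef⟩ : ∃ l : ℝ, l = ∑ i ∈ Finset.univ.filter (· ∈ A), lam i := ⟨_, rfl⟩
  obtain ⟨lamB, hlamBdef⟩ : ∃ l : ℝ, l = ∑ i ∈ Finset.univ.filter (· ∉ A), lam i := ⟨_, rfl⟩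
  have hAB : lamA + lamB = 1 := by
    rw [hlamAdef, hlamBdef, Finset.sum_filter_add_sum_filter_not]
    exact hlam1
  have hlamA0 : 0 ≤ lamA := hlamAdef ▸ Finset.sum_nonneg fun i _ => hlam i
  have hlamB0 : 0 ≤ lamB := hlamBdef ▸ Finset.sum_nonneg fun i _ => hlam i
  obtain ⟨β, hβdef⟩ : ∃ β : Fin n → ℝ, β = fun i => α i / 4 := ⟨_, rfl⟩
  have hβ : ∀ i, 0 < β i := fun i => by rw [hβdef]; dsimp only; linarith [hα i]
  have hβa : ∀ i, β i = α i / 4 := fun i => by rw [hβdef]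
  obtain ⟨αmin, hαmindef⟩ : ∃ a : ℝ, a = Finset.univ.inf' hnefin α := ⟨_, rfl⟩
  have hαmin0 : 0 < αmin := by
    rw [hαmindef, Finset.lt_inf'_iff]
    exact fun i _ => hα i
  have hαmin_le : ∀ i, αmin ≤ α i := fun i =>
    hαmindef ▸ Finset.inf'_le _ (Finset.mem_univ i)
  have hsl := fun i => ballSlice_nonempty' (Z := WithLp 1 (X × Y)) (hf i) (hα i)
  choose sd hsd using hsl
  rcases eq_or_lt_of_le hlamB0 with hB0 | hBpos
  · -- all the mass is on the X side
    have hlamA1 : lamA = 1 := by linarith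
    have hlamAne : lamA ≠ 0 := by rw [hlamA1]; norm_num
    have hlam0 : ∀ i ∈ Finset.univ.filter (· ∉ A), lam i = 0 := by
      intro i hi
      refine (Finset.sum_eq_zero_iff_of_nonneg (fun j _ => hlam j)).mp ?_ i hi
      rw [← hlamBdef]; exact hB0.symm
    obtain ⟨g₀, hg₀⟩ := exists_dual_norm_one hXinf
    obtain ⟨G, hGdef⟩ : ∃ G : Fin n → StrongDual ℝ X,
        G = fun i => if i ∈ A then g i else g₀ := ⟨_, rfl⟩
    obtain ⟨μ, hμdef⟩ : ∃ μ : Fin n → ℝ, μ = fun i => if i ∈ A then lam i / lamA else 0 :=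
      ⟨_, rfl⟩
    have hGA : ∀ i, i ∈ A → G i = g i := fun i hi => by rw [hGdef]; simp [hi]
    have hG : ∀ i, ‖G i‖ = 1 := by
      intro i
      by_cases hi : i ∈ A
      · rw [hGA i hi]; exact (hmemA i).mp hi
      · rw [hGdef]; simp only [hi, if_false]; exact hg₀
    have hμ0 : ∀ i, 0 ≤ μ i := by
      intro i
      rw [hμdef]
      by_cases hi : i ∈ A <;> simp only [hi, if_true, if_false, le_refl]
      · exact div_nonneg (hlam i) hlamA0
    have hμ1 : (∑ i, μ i) = 1 := by
      rw [hμdef]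
      simp only
      rw [← Finset.sum_filter, ← Finset.sum_div, ← hlamAdef, hlamA1]
      norm_num
    obtain ⟨xb, xd, FX, δX, gh, hxb1, hxd, hxdsum, hδX, hFX, hghn, hghxb⟩ :=
      side_data hXinf hX G β μ hn hG hβ hμ0 hμ1
    obtain ⟨MX, hMXdef⟩ : ∃ m : ℝ, m = ∑ g' ∈ FX, ‖g'‖ := ⟨_, rfl⟩
    have hMX0 : 0 ≤ MX := hMXdef ▸ Finset.sum_nonneg fun _ _ => norm_nonneg _
    have hMXle : ∀ g' ∈ FX, ‖g'‖ ≤ MX := fun g' hg' => hMXdef ▸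
      Finset.single_le_sum (f := fun g'' => ‖g''‖) (fun _ _ => norm_nonneg _) hg'
    obtain ⟨δ, hδdef⟩ : ∃ d : ℝ, d = min (min (1/4) ((3/16) * αmin)) (δX / (2*MX + 1)) :=
      ⟨_, rfl⟩
    have hδpos : 0 < δ := by
      rw [hδdef]
      apply lt_min (lt_min (by norm_num) (by linarith))
      exact div_pos hδX (by linarith)
    have hδ1 : δ ≤ 1/4 := hδdef ▸ le_trans (min_le_left _ _) (min_le_left _ _)
    have hδ2 : δ ≤ (3/16) * αmin := hδdef ▸ le_trans (min_le_left _ _) (min_le_right _ _)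
    have hδ3 : δ * (2*MX + 1) ≤ δX := by
      have h9 : δ ≤ δX / (2*MX + 1) := hδdef ▸ min_le_right _ _
      calc δ * (2*MX+1) ≤ (δX / (2*MX + 1)) * (2*MX+1) :=
            mul_le_mul_of_nonneg_right h9 (by linarith)
      _ = δX := by field_simp
    obtain ⟨z, hzdef⟩ : ∃ z : WithLp 1 (X × Y), z = mk1 (lamA • xb) 0 := ⟨_, rfl⟩
    obtain ⟨Fs, hFsdef⟩ : ∃ F : Finset (StrongDual ℝ (WithLp 1 (X × Y))),
        F = insert (gh.comp projXL) (FX.image (fun g' => g'.comp projXL)) := ⟨_, rfl⟩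
    refine ⟨z, ?_, Fs, δ, hδpos, ?_⟩
    · -- z ∈ C
      rw [hCeq]
      apply (mem_ccs_iff' _ _ _).mpr
      refine ⟨fun i => if i ∈ A then mk1 (xd i) 0 else sd i, ?_, ?_⟩
      · intro i
        by_cases hi : i ∈ A
        · simp only [hi, if_true]
          have hxdi := mem_ballSlice'.mp (hxd i)
          rw [hGA i hi] at hxdi
          apply mem_ballSlice'.mpr
          constructor
          · rw [norm1_mk1]; simpa using hxdi.1
          · rw [dual_apply_mk1, map_zero, add_zero, hgapply]
            have h7 : 1 - α i < 1 - β i := by rw [hβa i]; linarith [hα i]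
            exact lt_trans h7 hxdi.2
        · simp only [hi, if_false]
          exact hsd i
      · have hxdsum' : (∑ i, (if i ∈ A then lam i / lamA else 0) • xd i) = xb := by
          rw [← hxdsum, hμdef]
        have h1 : ∑ i ∈ Finset.univ.filter (· ∈ A), lam i • xd i = lamA • xb :=
          filtered_sum_eq (· ∈ A) lam hlamAne xd hxdsum'
        apply mk1_ext
        · rw [fst_sum]
          simp only [WithLp.smul_fst, apply_ite (WithLp.fst : WithLp 1 (X × Y) → X), mk1_fst,
            smul_ite]
          rw [Finset.sum_ite, h1]
          have h2 : ∑ i ∈ Finset.univ.filter (fun i => ¬ i ∈ A), lam i • (sd i).fst = 0 :=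
            Finset.sum_eq_zero fun i hi => by rw [hlam0 i hi, zero_smul]
          rw [h2, add_zero, hzdef, mk1_fst]
        · rw [snd_sum]
          simp only [WithLp.smul_snd, apply_ite (WithLp.snd : WithLp 1 (X × Y) → Y), mk1_snd,
            smul_ite, smul_zero]
          rw [Finset.sum_ite]
          have h2 : ∑ i ∈ Finset.univ.filter (fun i => ¬ i ∈ A), lam i • (sd i).snd = 0 :=
            Finset.sum_eq_zero fun i hi => by rw [hlam0 i hi, zero_smul]
          rw [h2]
          simp [hzdef]
    · -- relative weak interior
      rintro w ⟨hwb, hwf⟩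
      have hwb' : ‖w‖ ≤ 1 := mem_closedBall_zero_iff.mp hwb
      have hnsum : ‖w.fst‖ + ‖w.snd‖ ≤ 1 := by rw [← norm1_eq]; exact hwb'
      have hgw := hwf _ (hFsdef ▸ Finset.mem_insert_self (gh.comp projXL) _)
      simp only [ContinuousLinearMap.comp_apply, projXL_apply, hzdef, mk1_fst, map_smul,
        smul_eq_mul, hghxb, mul_one, hlamA1] at hgw
      have hghu : gh w.fst ≤ ‖w.fst‖ := by
        calc gh w.fst ≤ |gh w.fst| := le_abs_self _
        _ ≤ ‖gh‖ * ‖w.fst‖ := by rw [← Real.norm_eq_abs]; exact gh.le_opNorm _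
        _ = ‖w.fst‖ := by rw [hghn, one_mul]
      have hu_lb : 1 - δ < ‖w.fst‖ := by
        have := abs_lt.mp hgw; linarith
      have hv_ub : ‖w.snd‖ < δ := by linarith
      have hc0 : (0:ℝ) ≤ ‖w.snd‖ := norm_nonneg _
      have h1c : (0:ℝ) < 1 - ‖w.snd‖ := by
        have := lt_of_lt_of_le hv_ub hδ1; linarith
      obtain ⟨mX, hmXdef⟩ : ∃ m : X, m = (1-‖w.snd‖)⁻¹ • w.fst := ⟨_, rfl⟩
      have hmX_norm : ‖mX‖ ≤ 1 := by
        rw [hmXdef, norm_smul, Real.norm_eq_abs, abs_of_pos (inv_pos.mpr h1c)]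
        have h2 : ‖w.fst‖ ≤ 1 - ‖w.snd‖ := by linarith
        calc (1-‖w.snd‖)⁻¹ * ‖w.fst‖ ≤ (1-‖w.snd‖)⁻¹ * (1-‖w.snd‖) :=
              mul_le_mul_of_nonneg_left h2 (le_of_lt (inv_pos.mpr h1c))
        _ = 1 := inv_mul_cancel₀ (ne_of_gt h1c)
      have hmX_close : ∀ g' ∈ FX, |g' mX - g' xb| < δX := by
        intro g' hg'
        have hg'w := hwf _ (hFsdef ▸ Finset.mem_insert_of_mem (Finset.mem_image_of_mem
          (fun g'' : StrongDual ℝ X => g''.comp projXL) hg'))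
        simp only [ContinuousLinearMap.comp_apply, projXL_apply, hzdef, mk1_fst, map_smul,
          smul_eq_mul, hlamA1, one_mul] at hg'w
        have hg'M : ‖g'‖ ≤ MX := hMXle g' hg'
        have hgu_abs : |g' w.fst| ≤ MX := by
          calc |g' w.fst| ≤ ‖g'‖ * ‖w.fst‖ := by rw [← Real.norm_eq_abs]; exact g'.le_opNorm _
          _ ≤ MX * 1 := mul_le_mul hg'M (by linarith) (norm_nonneg _) hMX0
          _ = MX := mul_one MX
        have hval : g' mX = (1-‖w.snd‖)⁻¹ * g' w.fst := by rw [hmXdef, map_smul, smul_eq_mul]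
        have hfar : |g' mX - g' w.fst| ≤ 2 * δ * MX := by
          rw [hval]
          have he : (1-‖w.snd‖)⁻¹ * g' w.fst - g' w.fst = ((1-‖w.snd‖)⁻¹ - 1) * g' w.fst := by
            ring
          rw [he, abs_mul]
          have hinv1 : (1-‖w.snd‖)⁻¹ - 1 = ‖w.snd‖/(1-‖w.snd‖) := by field_simp; ring
          have hinvnn : 0 ≤ (1-‖w.snd‖)⁻¹ - 1 := by rw [hinv1]; positivity
          have hinvle : (1-‖w.snd‖)⁻¹ - 1 ≤ 2*δ := by
            rw [hinv1, div_le_iff₀ h1c]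
            have k : 2*δ*(3/4) ≤ 2*δ*(1-‖w.snd‖) :=
              mul_le_mul_of_nonneg_left (by linarith [lt_of_lt_of_le hv_ub hδ1])
                (by linarith : (0:ℝ) ≤ 2*δ)
            linarith [k, hv_ub]
          rw [abs_of_nonneg hinvnn]
          calc ((1-‖w.snd‖)⁻¹ - 1) * |g' w.fst| ≤ (2*δ) * MX :=
                mul_le_mul hinvle hgu_abs (abs_nonneg _) (by linarith)
          _ = 2*δ*MX := by ring
        calc |g' mX - g' xb| ≤ |g' mX - g' w.fst| + |g' w.fst - g' xb| := abs_sub_le _ _ _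
        _ < 2*δ*MX + δ := by linarith
        _ ≤ δX := by
              have h10 : δ*(2*MX+1) = 2*δ*MX + δ := by ring
              linarith [hδ3, h10]
      obtain ⟨x', hx', hx'sum⟩ := hFX mX hmX_norm hmX_close
      rw [hCeq]
      apply (mem_ccs_iff' _ _ _).mpr
      refine ⟨fun i => if i ∈ A then mk1 ((1-‖w.snd‖) • x' i) w.snd else sd i, ?_, ?_⟩
      · intro i
        by_cases hi : i ∈ A
        · simp only [hi, if_true]
          have hxi := mem_ballSlice'.mp (hx' i)
          rw [hGA i hi] at hxi
          apply mem_ballSlice'.mpr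
          constructor
          · rw [norm1_mk1, norm_smul, Real.norm_eq_abs, abs_of_pos h1c]
            have k := mul_le_mul_of_nonneg_left hxi.1 (le_of_lt h1c)
            linarith [k]
          · rw [dual_apply_mk1, hgapply, hhapply, map_smul, smul_eq_mul]
            have hhv : -(‖w.snd‖) ≤ h i w.snd := by
              have h5 : |h i w.snd| ≤ ‖w.snd‖ := by
                calc |h i w.snd| ≤ ‖h i‖ * ‖w.snd‖ := by
                      rw [← Real.norm_eq_abs]; exact (h i).le_opNorm _
                _ ≤ 1 * ‖w.snd‖ := mul_le_mul (hh_le i) le_rfl (norm_nonneg _) zero_le_one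
                _ = ‖w.snd‖ := one_mul _
              linarith [neg_abs_le (h i w.snd)]
            have hg'x : 1 - α i / 4 < g i (x' i) := by
              have h8 := hxi.2; rw [hβa i] at h8; exact h8
            have hcb : ‖w.snd‖ ≤ (3/16) * α i := by
              have h6 : (3/16) * αmin ≤ (3/16) * α i := by linarith [hαmin_le i]
              linarith [hv_ub, hδ2]
            have k1 : (1-‖w.snd‖) * (1 - α i / 4) < (1-‖w.snd‖) * g i (x' i) :=
              mul_lt_mul_of_pos_left hg'x h1c
            have k2 : 0 ≤ ‖w.snd‖ * α i := mul_nonneg hc0 (le_of_lt (hα i))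
            have k3 : (1-‖w.snd‖) * (1 - α i/4) = 1 - α i/4 - ‖w.snd‖ + ‖w.snd‖*α i/4 := by
              ring
            linarith [k1, k2, k3, hcb, hhv, hα i]
        · simp only [hi, if_false]
          exact hsd i
      · have hx'sum' : (∑ i, (if i ∈ A then lam i / lamA else 0) • x' i) = mX := by
          rw [← hx'sum, hμdef]
        have h1 : ∑ i ∈ Finset.univ.filter (· ∈ A), lam i • x' i = lamA • mX :=
          filtered_sum_eq (· ∈ A) lam hlamAne x' hx'sum'
        apply mk1_ext
        · rw [fst_sum]
          simp only [WithLp.smul_fst, apply_ite (WithLp.fst : WithLp 1 (X × Y) → X), mk1_fst,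
            smul_ite]
          rw [Finset.sum_ite]
          have h2 : ∑ i ∈ Finset.univ.filter (fun i => ¬ i ∈ A), lam i • (sd i).fst = 0 :=
            Finset.sum_eq_zero fun i hi => by rw [hlam0 i hi, zero_smul]
          rw [h2, add_zero]
          have h3 : ∑ i ∈ Finset.univ.filter (· ∈ A), lam i • ((1-‖w.snd‖) • x' i)
              = (1-‖w.snd‖) • ∑ i ∈ Finset.univ.filter (· ∈ A), lam i • x' i := by
            rw [Finset.smul_sum]; exact Finset.sum_congr rfl fun i _ => smul_comm _ _ _
          rw [h3, h1, hlamA1, one_smul, hmXdef, smul_smul,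
            mul_inv_cancel₀ (ne_of_gt h1c), one_smul]
        · rw [snd_sum]
          simp only [WithLp.smul_snd, apply_ite (WithLp.snd : WithLp 1 (X × Y) → Y), mk1_snd,
            smul_ite]
          rw [Finset.sum_ite]
          have h2 : ∑ i ∈ Finset.univ.filter (fun i => ¬ i ∈ A), lam i • (sd i).snd = 0 :=
            Finset.sum_eq_zero fun i hi => by rw [hlam0 i hi, zero_smul]
          rw [h2, add_zero, ← Finset.sum_smul, ← hlamAdef, hlamA1, one_smul]
  · rcases eq_or_lt_of_le hlamA0 with hA0 | hApos
    · -- all the mass is on the Y side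
      have hlamB1 : lamB = 1 := by linarith
      have hlamBne : lamB ≠ 0 := by rw [hlamB1]; norm_num
      have hlam0 : ∀ i ∈ Finset.univ.filter (fun i => ¬ i ∉ A), lam i = 0 := by
        intro i hi
        have hiA : i ∈ A := not_not.mp (Finset.mem_filter.mp hi).2
        refine (Finset.sum_eq_zero_iff_of_nonneg (fun j _ => hlam j)).mp ?_ i
          (Finset.mem_filter.mpr ⟨Finset.mem_univ i, hiA⟩)
        rw [← hlamAdef]; exact hA0.symm
      obtain ⟨h₀, hh₀⟩ := exists_dual_norm_one hYinf
      obtain ⟨H, hHdef⟩ : ∃ H : Fin n → StrongDual ℝ Y,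
          H = fun i => if i ∉ A then h i else h₀ := ⟨_, rfl⟩
      obtain ⟨μ, hμdef⟩ : ∃ μ : Fin n → ℝ, μ = fun i => if i ∉ A then lam i / lamB else 0 :=
        ⟨_, rfl⟩
      have hHA : ∀ i, i ∉ A → H i = h i := fun i hi => by rw [hHdef]; simp [hi]
      have hH : ∀ i, ‖H i‖ = 1 := by
        intro i
        by_cases hi : i ∉ A
        · rw [hHA i hi]; exact hPh i hi
        · rw [hHdef]; simp only [hi, if_false]; exact hh₀
      have hμ0 : ∀ i, 0 ≤ μ i := by
        intro i
        rw [hμdef]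
        by_cases hi : i ∉ A <;> simp only [hi, if_true, if_false, le_refl]
        · exact div_nonneg (hlam i) hlamB0
      have hμ1 : (∑ i, μ i) = 1 := by
        rw [hμdef]
        simp only
        rw [← Finset.sum_filter, ← Finset.sum_div, ← hlamBdef, hlamB1]
        norm_num
      obtain ⟨yb, yd, FY, δY, ghY, hyb1, hyd, hydsum, hδY, hFY, hghn, hghyb⟩ :=
        side_data hYinf hY H β μ hn hH hβ hμ0 hμ1
      obtain ⟨MY, hMYdef⟩ : ∃ m : ℝ, m = ∑ h' ∈ FY, ‖h'‖ := ⟨_, rfl⟩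
      have hMY0 : 0 ≤ MY := hMYdef ▸ Finset.sum_nonneg fun _ _ => norm_nonneg _
      have hMYle : ∀ h' ∈ FY, ‖h'‖ ≤ MY := fun h' hh' => hMYdef ▸
        Finset.single_le_sum (f := fun h'' => ‖h''‖) (fun _ _ => norm_nonneg _) hh'
      obtain ⟨δ, hδdef⟩ : ∃ d : ℝ, d = min (min (1/4) ((3/16) * αmin)) (δY / (2*MY + 1)) :=
        ⟨_, rfl⟩
      have hδpos : 0 < δ := by
        rw [hδdef]
        apply lt_min (lt_min (by norm_num) (by linarith))
        exact div_pos hδY (by linarith)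
      have hδ1 : δ ≤ 1/4 := hδdef ▸ le_trans (min_le_left _ _) (min_le_left _ _)
      have hδ2 : δ ≤ (3/16) * αmin := hδdef ▸ le_trans (min_le_left _ _) (min_le_right _ _)
      have hδ3 : δ * (2*MY + 1) ≤ δY := by
        have h9 : δ ≤ δY / (2*MY + 1) := hδdef ▸ min_le_right _ _
        calc δ * (2*MY+1) ≤ (δY / (2*MY + 1)) * (2*MY+1) :=
              mul_le_mul_of_nonneg_right h9 (by linarith)
        _ = δY := by field_simp
      obtain ⟨z, hzdef⟩ : ∃ z : WithLp 1 (X × Y), z = mk1 0 (lamB • yb) := ⟨_, rfl⟩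
      obtain ⟨Fs, hFsdef⟩ : ∃ F : Finset (StrongDual ℝ (WithLp 1 (X × Y))),
          F = insert (ghY.comp projYL) (FY.image (fun h' => h'.comp projYL)) := ⟨_, rfl⟩
      refine ⟨z, ?_, Fs, δ, hδpos, ?_⟩
      · -- z ∈ C
        rw [hCeq]
        apply (mem_ccs_iff' _ _ _).mpr
        refine ⟨fun i => if i ∉ A then mk1 0 (yd i) else sd i, ?_, ?_⟩
        · intro i
          dsimp only
          by_cases hi : i ∉ A
          · rw [if_pos hi]
            have hydi := mem_ballSlice'.mp (hyd i)
            rw [hHA i hi] at hydi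
            apply mem_ballSlice'.mpr
            constructor
            · rw [norm1_mk1]; simpa using hydi.1
            · rw [dual_apply_mk1, map_zero, zero_add, hhapply]
              have h7 : 1 - α i < 1 - β i := by rw [hβa i]; linarith [hα i]
              exact lt_trans h7 hydi.2
          · rw [if_neg hi]
            exact hsd i
        · have hydsum' : (∑ i, (if i ∉ A then lam i / lamB else 0) • yd i) = yb := by
            rw [← hydsum, hμdef]
          have h1 : ∑ i ∈ Finset.univ.filter (· ∉ A), lam i • yd i = lamB • yb :=
            filtered_sum_eq (· ∉ A) lam hlamBne yd hydsum'
          apply mk1_ext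
          · rw [fst_sum]
            simp only [WithLp.smul_fst, apply_ite (WithLp.fst : WithLp 1 (X × Y) → X), mk1_fst,
              smul_ite, smul_zero]
            rw [Finset.sum_ite]
            have h2 : ∑ i ∈ Finset.univ.filter (fun i => ¬ i ∉ A), lam i • (sd i).fst = 0 :=
              Finset.sum_eq_zero fun i hi => by rw [hlam0 i hi, zero_smul]
            rw [h2]
            simp [hzdef]
          · rw [snd_sum]
            simp only [WithLp.smul_snd, apply_ite (WithLp.snd : WithLp 1 (X × Y) → Y), mk1_snd,
              smul_ite]
            rw [Finset.sum_ite, h1]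
            have h2 : ∑ i ∈ Finset.univ.filter (fun i => ¬ i ∉ A), lam i • (sd i).snd = 0 :=
              Finset.sum_eq_zero fun i hi => by rw [hlam0 i hi, zero_smul]
            rw [h2, add_zero, hzdef, mk1_snd]
      · -- relative weak interior
        rintro w ⟨hwb, hwf⟩
        have hwb' : ‖w‖ ≤ 1 := mem_closedBall_zero_iff.mp hwb
        have hnsum : ‖w.fst‖ + ‖w.snd‖ ≤ 1 := by rw [← norm1_eq]; exact hwb'
        have hgw := hwf _ (hFsdef ▸ Finset.mem_insert_self (ghY.comp projYL) _)
        simp only [ContinuousLinearMap.comp_apply, projYL_apply, hzdef, mk1_snd, map_smul,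
          smul_eq_mul, hghyb, mul_one, hlamB1] at hgw
        have hghu : ghY w.snd ≤ ‖w.snd‖ := by
          calc ghY w.snd ≤ |ghY w.snd| := le_abs_self _
          _ ≤ ‖ghY‖ * ‖w.snd‖ := by rw [← Real.norm_eq_abs]; exact ghY.le_opNorm _
          _ = ‖w.snd‖ := by rw [hghn, one_mul]
        have hu_lb : 1 - δ < ‖w.snd‖ := by
          have := abs_lt.mp hgw; linarith
        have hv_ub : ‖w.fst‖ < δ := by linarith
        have hc0 : (0:ℝ) ≤ ‖w.fst‖ := norm_nonneg _
        have h1c : (0:ℝ) < 1 - ‖w.fst‖ := by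
          have := lt_of_lt_of_le hv_ub hδ1; linarith
        obtain ⟨mY, hmYdef⟩ : ∃ m : Y, m = (1-‖w.fst‖)⁻¹ • w.snd := ⟨_, rfl⟩
        have hmY_norm : ‖mY‖ ≤ 1 := by
          rw [hmYdef, norm_smul, Real.norm_eq_abs, abs_of_pos (inv_pos.mpr h1c)]
          have h2 : ‖w.snd‖ ≤ 1 - ‖w.fst‖ := by linarith
          calc (1-‖w.fst‖)⁻¹ * ‖w.snd‖ ≤ (1-‖w.fst‖)⁻¹ * (1-‖w.fst‖) :=
                mul_le_mul_of_nonneg_left h2 (le_of_lt (inv_pos.mpr h1c))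
          _ = 1 := inv_mul_cancel₀ (ne_of_gt h1c)
        have hmY_close : ∀ h' ∈ FY, |h' mY - h' yb| < δY := by
          intro h' hh'
          have hg'w := hwf _ (hFsdef ▸ Finset.mem_insert_of_mem (Finset.mem_image_of_mem
            (fun h'' : StrongDual ℝ Y => h''.comp projYL) hh'))
          simp only [ContinuousLinearMap.comp_apply, projYL_apply, hzdef, mk1_snd, map_smul,
            smul_eq_mul, hlamB1, one_mul] at hg'w
          have hg'M : ‖h'‖ ≤ MY := hMYle h' hh'
          have hgu_abs : |h' w.snd| ≤ MY := by
            calc |h' w.snd| ≤ ‖h'‖ * ‖w.snd‖ := by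
                  rw [← Real.norm_eq_abs]; exact h'.le_opNorm _
            _ ≤ MY * 1 := mul_le_mul hg'M (by linarith) (norm_nonneg _) hMY0
            _ = MY := mul_one MY
          have hval : h' mY = (1-‖w.fst‖)⁻¹ * h' w.snd := by rw [hmYdef, map_smul, smul_eq_mul]
          have hfar : |h' mY - h' w.snd| ≤ 2 * δ * MY := by
            rw [hval]
            have he : (1-‖w.fst‖)⁻¹ * h' w.snd - h' w.snd
                = ((1-‖w.fst‖)⁻¹ - 1) * h' w.snd := by ring
            rw [he, abs_mul]
            have hinv1 : (1-‖w.fst‖)⁻¹ - 1 = ‖w.fst‖/(1-‖w.fst‖) := by field_simp; ring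
            have hinvnn : 0 ≤ (1-‖w.fst‖)⁻¹ - 1 := by rw [hinv1]; positivity
            have hinvle : (1-‖w.fst‖)⁻¹ - 1 ≤ 2*δ := by
              rw [hinv1, div_le_iff₀ h1c]
              have k : 2*δ*(3/4) ≤ 2*δ*(1-‖w.fst‖) :=
                mul_le_mul_of_nonneg_left (by linarith [lt_of_lt_of_le hv_ub hδ1])
                  (by linarith : (0:ℝ) ≤ 2*δ)
              linarith [k, hv_ub]
            rw [abs_of_nonneg hinvnn]
            calc ((1-‖w.fst‖)⁻¹ - 1) * |h' w.snd| ≤ (2*δ) * MY :=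
                  mul_le_mul hinvle hgu_abs (abs_nonneg _) (by linarith)
            _ = 2*δ*MY := by ring
          calc |h' mY - h' yb| ≤ |h' mY - h' w.snd| + |h' w.snd - h' yb| := abs_sub_le _ _ _
          _ < 2*δ*MY + δ := by linarith
          _ ≤ δY := by
                have h10 : δ*(2*MY+1) = 2*δ*MY + δ := by ring
                linarith [hδ3, h10]
        obtain ⟨y', hy', hy'sum⟩ := hFY mY hmY_norm hmY_close
        rw [hCeq]
        apply (mem_ccs_iff' _ _ _).mpr
        refine ⟨fun i => if i ∉ A then mk1 w.fst ((1-‖w.fst‖) • y' i) else sd i, ?_, ?_⟩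
        · intro i
          dsimp only
          by_cases hi : i ∉ A
          · rw [if_pos hi]
            have hyi := mem_ballSlice'.mp (hy' i)
            rw [hHA i hi] at hyi
            apply mem_ballSlice'.mpr
            constructor
            · rw [norm1_mk1, norm_smul, Real.norm_eq_abs, abs_of_pos h1c]
              have k := mul_le_mul_of_nonneg_left hyi.1 (le_of_lt h1c)
              linarith [k]
            · rw [dual_apply_mk1, hgapply, hhapply, map_smul, smul_eq_mul]
              have hhv : -(‖w.fst‖) ≤ g i w.fst := by
                have h5 : |g i w.fst| ≤ ‖w.fst‖ := by
                  calc |g i w.fst| ≤ ‖g i‖ * ‖w.fst‖ := by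
                        rw [← Real.norm_eq_abs]; exact (g i).le_opNorm _
                  _ ≤ 1 * ‖w.fst‖ := mul_le_mul (hg_le i) le_rfl (norm_nonneg _) zero_le_one
                  _ = ‖w.fst‖ := one_mul _
                linarith [neg_abs_le (g i w.fst)]
              have hg'x : 1 - α i / 4 < h i (y' i) := by
                have h8 := hyi.2; rw [hβa i] at h8; exact h8
              have hcb : ‖w.fst‖ ≤ (3/16) * α i := by
                have h6 : (3/16) * αmin ≤ (3/16) * α i := by linarith [hαmin_le i]
                linarith [hv_ub, hδ2]
              have k1 : (1-‖w.fst‖) * (1 - α i / 4) < (1-‖w.fst‖) * h i (y' i) :=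
                mul_lt_mul_of_pos_left hg'x h1c
              have k2 : 0 ≤ ‖w.fst‖ * α i := mul_nonneg hc0 (le_of_lt (hα i))
              have k3 : (1-‖w.fst‖) * (1 - α i/4) = 1 - α i/4 - ‖w.fst‖ + ‖w.fst‖*α i/4 := by
                ring
              linarith [k1, k2, k3, hcb, hhv, hα i]
          · rw [if_neg hi]
            exact hsd i
        · have hy'sum' : (∑ i, (if i ∉ A then lam i / lamB else 0) • y' i) = mY := by
            rw [← hy'sum, hμdef]
          have h1 : ∑ i ∈ Finset.univ.filter (· ∉ A), lam i • y' i = lamB • mY :=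
            filtered_sum_eq (· ∉ A) lam hlamBne y' hy'sum'
          apply mk1_ext
          · rw [fst_sum]
            simp only [WithLp.smul_fst, apply_ite (WithLp.fst : WithLp 1 (X × Y) → X), mk1_fst,
              smul_ite]
            rw [Finset.sum_ite]
            have h2 : ∑ i ∈ Finset.univ.filter (fun i => ¬ i ∉ A), lam i • (sd i).fst = 0 :=
              Finset.sum_eq_zero fun i hi => by rw [hlam0 i hi, zero_smul]
            rw [h2, add_zero, ← Finset.sum_smul, ← hlamBdef, hlamB1, one_smul]
          · rw [snd_sum]
            simp only [WithLp.smul_snd, apply_ite (WithLp.snd : WithLp 1 (X × Y) → Y), mk1_snd,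
              smul_ite]
            rw [Finset.sum_ite]
            have h2 : ∑ i ∈ Finset.univ.filter (fun i => ¬ i ∉ A), lam i • (sd i).snd = 0 :=
              Finset.sum_eq_zero fun i hi => by rw [hlam0 i hi, zero_smul]
            rw [h2, add_zero]
            have h3 : ∑ i ∈ Finset.univ.filter (· ∉ A), lam i • ((1-‖w.fst‖) • y' i)
                = (1-‖w.fst‖) • ∑ i ∈ Finset.univ.filter (· ∉ A), lam i • y' i := by
              rw [Finset.smul_sum]; exact Finset.sum_congr rfl fun i _ => smul_comm _ _ _
            rw [h3, h1, hlamB1, one_smul, hmYdef, smul_smul,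
              mul_inv_cancel₀ (ne_of_gt h1c), one_smul]
    · -- general case : mass on both sides
      have hlamAne : lamA ≠ 0 := ne_of_gt hApos
      have hlamBne : lamB ≠ 0 := ne_of_gt hBpos
      obtain ⟨g₀, hg₀⟩ := exists_dual_norm_one hXinf
      obtain ⟨h₀, hh₀⟩ := exists_dual_norm_one hYinf
      obtain ⟨G, hGdef⟩ : ∃ G : Fin n → StrongDual ℝ X,
          G = fun i => if i ∈ A then g i else g₀ := ⟨_, rfl⟩
      obtain ⟨H, hHdef⟩ : ∃ H : Fin n → StrongDual ℝ Y,
          H = fun i => if i ∉ A then h i else h₀ := ⟨_, rfl⟩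
      obtain ⟨μ, hμdef⟩ : ∃ μ : Fin n → ℝ, μ = fun i => if i ∈ A then lam i / lamA else 0 :=
        ⟨_, rfl⟩
      obtain ⟨ν, hνdef⟩ : ∃ ν : Fin n → ℝ, ν = fun i => if i ∉ A then lam i / lamB else 0 :=
        ⟨_, rfl⟩
      have hGA : ∀ i, i ∈ A → G i = g i := fun i hi => by rw [hGdef]; simp [hi]
      have hHA : ∀ i, i ∉ A → H i = h i := fun i hi => by rw [hHdef]; simp [hi]
      have hG : ∀ i, ‖G i‖ = 1 := by
        intro i
        by_cases hi : i ∈ A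
        · rw [hGA i hi]; exact (hmemA i).mp hi
        · rw [hGdef]; simp only [hi, if_false]; exact hg₀
      have hH : ∀ i, ‖H i‖ = 1 := by
        intro i
        by_cases hi : i ∉ A
        · rw [hHA i hi]; exact hPh i hi
        · rw [hHdef]; simp only [hi, if_false]; exact hh₀
      have hμ0 : ∀ i, 0 ≤ μ i := by
        intro i
        rw [hμdef]
        by_cases hi : i ∈ A <;> simp only [hi, if_true, if_false, le_refl]
        · exact div_nonneg (hlam i) hlamA0
      have hν0 : ∀ i, 0 ≤ ν i := by
        intro i
        rw [hνdef]
        by_cases hi : i ∉ A <;> simp only [hi, if_true, if_false, le_refl]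
        · exact div_nonneg (hlam i) hlamB0
      have hμ1 : (∑ i, μ i) = 1 := by
        rw [hμdef]
        simp only
        rw [← Finset.sum_filter, ← Finset.sum_div, ← hlamAdef]
        field_simp
      have hν1 : (∑ i, ν i) = 1 := by
        rw [hνdef]
        simp only
        rw [← Finset.sum_filter, ← Finset.sum_div, ← hlamBdef]
        field_simp
      obtain ⟨xb, xd, FX, δX, ghX, hxb1, hxd, hxdsum, hδX, hFX, hghXn, hghXxb⟩ :=
        side_data hXinf hX G β μ hn hG hβ hμ0 hμ1
      obtain ⟨yb, yd, FY, δY, ghY, hyb1, hyd, hydsum, hδY, hFY, hghYn, hghYyb⟩ :=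
        side_data hYinf hY H β ν hn hH hβ hν0 hν1
      obtain ⟨MX, hMXdef⟩ : ∃ m : ℝ, m = ∑ g' ∈ FX, ‖g'‖ := ⟨_, rfl⟩
      have hMX0 : 0 ≤ MX := hMXdef ▸ Finset.sum_nonneg fun _ _ => norm_nonneg _
      have hMXle : ∀ g' ∈ FX, ‖g'‖ ≤ MX := fun g' hg' => hMXdef ▸
        Finset.single_le_sum (f := fun g'' => ‖g''‖) (fun _ _ => norm_nonneg _) hg'
      obtain ⟨MY, hMYdef⟩ : ∃ m : ℝ, m = ∑ h' ∈ FY, ‖h'‖ := ⟨_, rfl⟩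
      have hMY0 : 0 ≤ MY := hMYdef ▸ Finset.sum_nonneg fun _ _ => norm_nonneg _
      have hMYle : ∀ h' ∈ FY, ‖h'‖ ≤ MY := fun h' hh' => hMYdef ▸
        Finset.single_le_sum (f := fun h'' => ‖h''‖) (fun _ _ => norm_nonneg _) hh'
      obtain ⟨δ, hδdef⟩ : ∃ d : ℝ,
          d = min (min (min (lamA/4) (lamB/4)) (min ((3/16)*lamA*αmin) ((3/16)*lamB*αmin)))
            (min (δX*lamA/(4*MX+1)) (δY*lamB/(4*MY+1))) := ⟨_, rfl⟩
      have hδpos : 0 < δ := by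
        rw [hδdef]
        apply lt_min (lt_min (lt_min (by linarith) (by linarith)) (lt_min ?_ ?_))
          (lt_min ?_ ?_)
        · have := mul_pos hApos hαmin0; linarith
        · have := mul_pos hBpos hαmin0; linarith
        · exact div_pos (mul_pos hδX hApos) (by linarith)
        · exact div_pos (mul_pos hδY hBpos) (by linarith)
      have hδA : δ ≤ lamA/4 := hδdef ▸ le_trans (min_le_left _ _)
        (le_trans (min_le_left _ _) (min_le_left _ _))
      have hδB : δ ≤ lamB/4 := hδdef ▸ le_trans (min_le_left _ _)
        (le_trans (min_le_left _ _) (min_le_right _ _))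
      have hδaX : δ ≤ (3/16)*lamA*αmin := hδdef ▸ le_trans (min_le_left _ _)
        (le_trans (min_le_right _ _) (min_le_left _ _))
      have hδaY : δ ≤ (3/16)*lamB*αmin := hδdef ▸ le_trans (min_le_left _ _)
        (le_trans (min_le_right _ _) (min_le_right _ _))
      have hδ4X : δ * (4*MX+1) ≤ δX * lamA := by
        have h9 : δ ≤ δX*lamA/(4*MX+1) := hδdef ▸ le_trans (min_le_right _ _) (min_le_left _ _)
        calc δ * (4*MX+1) ≤ (δX*lamA/(4*MX+1)) * (4*MX+1) :=
              mul_le_mul_of_nonneg_right h9 (by linarith)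
        _ = δX*lamA := by field_simp
      have hδ4Y : δ * (4*MY+1) ≤ δY * lamB := by
        have h9 : δ ≤ δY*lamB/(4*MY+1) := hδdef ▸ le_trans (min_le_right _ _) (min_le_right _ _)
        calc δ * (4*MY+1) ≤ (δY*lamB/(4*MY+1)) * (4*MY+1) :=
              mul_le_mul_of_nonneg_right h9 (by linarith)
        _ = δY*lamB := by field_simp
      obtain ⟨z, hzdef⟩ : ∃ z : WithLp 1 (X × Y), z = mk1 (lamA • xb) (lamB • yb) := ⟨_, rfl⟩
      obtain ⟨Fs, hFsdef⟩ : ∃ F : Finset (StrongDual ℝ (WithLp 1 (X × Y))),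
          F = insert (ghX.comp projXL) (insert (ghY.comp projYL)
            ((FX.image (fun g' => g'.comp projXL)) ∪ (FY.image (fun h' => h'.comp projYL)))) :=
        ⟨_, rfl⟩
      refine ⟨z, ?_, Fs, δ, hδpos, ?_⟩
      · -- z ∈ C
        rw [hCeq]
        apply (mem_ccs_iff' _ _ _).mpr
        refine ⟨fun i => if i ∈ A then mk1 (xd i) 0 else mk1 0 (yd i), ?_, ?_⟩
        · intro i
          dsimp only
          by_cases hi : i ∈ A
          · rw [if_pos hi]
            have hxdi := mem_ballSlice'.mp (hxd i)
            rw [hGA i hi] at hxdi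
            apply mem_ballSlice'.mpr
            constructor
            · rw [norm1_mk1]; simpa using hxdi.1
            · rw [dual_apply_mk1, map_zero, add_zero, hgapply]
              have h7 : 1 - α i < 1 - β i := by rw [hβa i]; linarith [hα i]
              exact lt_trans h7 hxdi.2
          · rw [if_neg hi]
            have hydi := mem_ballSlice'.mp (hyd i)
            rw [hHA i hi] at hydi
            apply mem_ballSlice'.mpr
            constructor
            · rw [norm1_mk1]; simpa using hydi.1
            · rw [dual_apply_mk1, map_zero, zero_add, hhapply]
              have h7 : 1 - α i < 1 - β i := by rw [hβa i]; linarith [hα i]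
              exact lt_trans h7 hydi.2
        · have hxdsum' : (∑ i, (if i ∈ A then lam i / lamA else 0) • xd i) = xb := by
            rw [← hxdsum, hμdef]
          have h1X : ∑ i ∈ Finset.univ.filter (· ∈ A), lam i • xd i = lamA • xb :=
            filtered_sum_eq (· ∈ A) lam hlamAne xd hxdsum'
          have hydsum' : (∑ i, (if i ∉ A then lam i / lamB else 0) • yd i) = yb := by
            rw [← hydsum, hνdef]
          have h1Y : ∑ i ∈ Finset.univ.filter (· ∉ A), lam i • yd i = lamB • yb :=
            filtered_sum_eq (· ∉ A) lam hlamBne yd hydsum'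
          apply mk1_ext
          · rw [fst_sum]
            simp only [WithLp.smul_fst, apply_ite (WithLp.fst : WithLp 1 (X × Y) → X), mk1_fst,
              smul_ite, smul_zero]
            rw [Finset.sum_ite, h1X, Finset.sum_const_zero, add_zero, hzdef, mk1_fst]
          · rw [snd_sum]
            simp only [WithLp.smul_snd, apply_ite (WithLp.snd : WithLp 1 (X × Y) → Y), mk1_snd,
              smul_ite, smul_zero]
            rw [Finset.sum_ite, Finset.sum_const_zero, zero_add, h1Y, hzdef, mk1_snd]
      · -- relative weak interior
        rintro w ⟨hwb, hwf⟩
        have hwb' : ‖w‖ ≤ 1 := mem_closedBall_zero_iff.mp hwb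
        have hnsum : ‖w.fst‖ + ‖w.snd‖ ≤ 1 := by rw [← norm1_eq]; exact hwb'
        have hgwX := hwf _ (hFsdef ▸ Finset.mem_insert_self (ghX.comp projXL) _)
        simp only [ContinuousLinearMap.comp_apply, projXL_apply, hzdef, mk1_fst, map_smul,
          smul_eq_mul, hghXxb, mul_one] at hgwX
        have hgwY := hwf _ (hFsdef ▸ Finset.mem_insert_of_mem
          (Finset.mem_insert_self (ghY.comp projYL) _))
        simp only [ContinuousLinearMap.comp_apply, projYL_apply, hzdef, mk1_snd, map_smul,
          smul_eq_mul, hghYyb, mul_one] at hgwY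
        have hghuX : ghX w.fst ≤ ‖w.fst‖ := by
          calc ghX w.fst ≤ |ghX w.fst| := le_abs_self _
          _ ≤ ‖ghX‖ * ‖w.fst‖ := by rw [← Real.norm_eq_abs]; exact ghX.le_opNorm _
          _ = ‖w.fst‖ := by rw [hghXn, one_mul]
        have hghuY : ghY w.snd ≤ ‖w.snd‖ := by
          calc ghY w.snd ≤ |ghY w.snd| := le_abs_self _
          _ ≤ ‖ghY‖ * ‖w.snd‖ := by rw [← Real.norm_eq_abs]; exact ghY.le_opNorm _
          _ = ‖w.snd‖ := by rw [hghYn, one_mul]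
        have hu_lb : lamA - δ < ‖w.fst‖ := by
          have := abs_lt.mp hgwX; linarith
        have hv_lb : lamB - δ < ‖w.snd‖ := by
          have := abs_lt.mp hgwY; linarith
        have hu_ub : ‖w.fst‖ < lamA + δ := by linarith
        have hv_ub : ‖w.snd‖ < lamB + δ := by linarith
        have hnu0 : 0 < ‖w.fst‖ := by linarith
        have hnv0 : 0 < ‖w.snd‖ := by linarith
        obtain ⟨c, hcdef⟩ : ∃ c : ℝ, c = (max (‖w.fst‖ - lamA) 0 + δ)/lamB := ⟨_, rfl⟩
        obtain ⟨d, hddef⟩ : ∃ d : ℝ, d = (max (‖w.snd‖ - lamB) 0 + δ)/lamA := ⟨_, rfl⟩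
        have hmaxX_ub : max (‖w.fst‖ - lamA) 0 ≤ δ := max_le (by linarith) hδpos.le
        have hmaxY_ub : max (‖w.snd‖ - lamB) 0 ≤ δ := max_le (by linarith) hδpos.le
        have hmaxX0 : 0 ≤ max (‖w.fst‖ - lamA) 0 := le_max_right _ _
        have hmaxY0 : 0 ≤ max (‖w.snd‖ - lamB) 0 := le_max_right _ _
        have hcB : lamB * c = max (‖w.fst‖ - lamA) 0 + δ := by
          rw [hcdef]; field_simp
        have hdA : lamA * d = max (‖w.snd‖ - lamB) 0 + δ := by
          rw [hddef]; field_simp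
        have hc_pos : 0 < c := by
          rw [hcdef]; exact div_pos (by linarith) hBpos
        have hd_pos : 0 < d := by
          rw [hddef]; exact div_pos (by linarith) hApos
        have hc_half : c ≤ 1/2 := by
          have h2 : lamB * c ≤ lamB * (1/2) := by rw [hcB]; linarith
          exact le_of_mul_le_mul_left h2 hBpos
        have hd_half : d ≤ 1/2 := by
          have h2 : lamA * d ≤ lamA * (1/2) := by rw [hdA]; linarith
          exact le_of_mul_le_mul_left h2 hApos
        have h1c : (0:ℝ) < 1 - c := by linarith
        have h1d : (0:ℝ) < 1 - d := by linarith
        obtain ⟨sX, hsXdef⟩ : ∃ s : ℝ, s = ‖w.fst‖ - lamB * c := ⟨_, rfl⟩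
        obtain ⟨sY, hsYdef⟩ : ∃ s : ℝ, s = ‖w.snd‖ - lamA * d := ⟨_, rfl⟩
        have hsX_lb : lamA - 3*δ ≤ sX := by rw [hsXdef, hcB]; linarith
        have hsY_lb : lamB - 3*δ ≤ sY := by rw [hsYdef, hdA]; linarith
        have hsX_pos : 0 < sX := by linarith
        have hsY_pos : 0 < sY := by linarith
        have hkeyX : max (‖w.snd‖ - lamB) 0 ≤ max (‖w.fst‖ - lamA) 0 - (‖w.fst‖ - lamA) := by
          rcases le_total (‖w.snd‖ - lamB) 0 with hy | hy
          · rw [max_eq_right hy]; linarith [le_max_left (‖w.fst‖-lamA) 0]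
          · rw [max_eq_left hy]
            have hx : ‖w.fst‖ - lamA ≤ 0 := by linarith
            rw [max_eq_right hx]; linarith
        have hkeyY : max (‖w.fst‖ - lamA) 0 ≤ max (‖w.snd‖ - lamB) 0 - (‖w.snd‖ - lamB) := by
          rcases le_total (‖w.fst‖ - lamA) 0 with hy | hy
          · rw [max_eq_right hy]; linarith [le_max_left (‖w.snd‖-lamB) 0]
          · rw [max_eq_left hy]
            have hx : ‖w.snd‖ - lamB ≤ 0 := by linarith
            rw [max_eq_right hx]; linarith
        have hsX_ub : sX ≤ (1-d)*lamA := by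
          have e : (1-d)*lamA = lamA - lamA*d := by ring
          rw [hsXdef, hcB, e, hdA]
          linarith [hkeyX]
        have hsY_ub : sY ≤ (1-c)*lamB := by
          have e : (1-c)*lamB = lamB - lamB*c := by ring
          rw [hsYdef, hdA, e, hcB]
          linarith [hkeyY]
        have hdenX : (0:ℝ) < (1-d)*lamA := mul_pos h1d hApos
        have hdenY : (0:ℝ) < (1-c)*lamB := mul_pos h1c hBpos
        obtain ⟨mX, hmXdef⟩ : ∃ m : X, m = (sX / ((1-d)*lamA*‖w.fst‖)) • w.fst := ⟨_, rfl⟩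
        obtain ⟨mY, hmYdef⟩ : ∃ m : Y, m = (sY / ((1-c)*lamB*‖w.snd‖)) • w.snd := ⟨_, rfl⟩
        have hmX_norm : ‖mX‖ ≤ 1 := by
          rw [hmXdef, norm_smul, Real.norm_eq_abs,
            abs_of_nonneg (le_of_lt (div_pos hsX_pos (mul_pos hdenX hnu0)))]
          have e : sX / ((1-d)*lamA*‖w.fst‖) * ‖w.fst‖ = sX / ((1-d)*lamA) := by
            have hne1 : ((1-d)*lamA) ≠ 0 := ne_of_gt hdenX
            have hne2 : ‖w.fst‖ ≠ 0 := ne_of_gt hnu0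
            field_simp
          rw [e, div_le_one hdenX]
          exact hsX_ub
        have hmY_norm : ‖mY‖ ≤ 1 := by
          rw [hmYdef, norm_smul, Real.norm_eq_abs,
            abs_of_nonneg (le_of_lt (div_pos hsY_pos (mul_pos hdenY hnv0)))]
          have e : sY / ((1-c)*lamB*‖w.snd‖) * ‖w.snd‖ = sY / ((1-c)*lamB) := by
            have hne1 : ((1-c)*lamB) ≠ 0 := ne_of_gt hdenY
            have hne2 : ‖w.snd‖ ≠ 0 := ne_of_gt hnv0
            field_simp
          rw [e, div_le_one hdenY]
          exact hsY_ub
        have hmX_close : ∀ g' ∈ FX, |g' mX - g' xb| < δX := by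
          intro g' hg'
          have hmem : g'.comp projXL ∈ Fs := by
            rw [hFsdef]
            exact Finset.mem_insert_of_mem (Finset.mem_insert_of_mem
              (Finset.mem_union_left _ (Finset.mem_image_of_mem _ hg')))
          have hg'w := hwf _ hmem
          simp only [ContinuousLinearMap.comp_apply, projXL_apply, hzdef, mk1_fst, map_smul,
            smul_eq_mul] at hg'w
          have hg'M : ‖g'‖ ≤ MX := hMXle g' hg'
          have hg'0 : (0:ℝ) ≤ ‖g'‖ := norm_nonneg _
          have habs : |g' w.fst| ≤ ‖g'‖ * ‖w.fst‖ := by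
            rw [← Real.norm_eq_abs]; exact g'.le_opNorm _
          have ht_ub : sX / ((1-d)*lamA) ≤ 1 := by rw [div_le_one hdenX]; exact hsX_ub
          have ht_lb : 1 - 3*δ/lamA ≤ sX / ((1-d)*lamA) := by
            rw [le_div_iff₀ hdenX]
            have e1 : (1 - 3*δ/lamA) * ((1-d)*lamA) = (1-d)*(lamA - 3*δ) := by
              field_simp
            rw [e1]
            have h2 : (1-d)*(lamA - 3*δ) ≤ 1*(lamA - 3*δ) :=
              mul_le_mul_of_nonneg_right (by linarith) (by linarith)
            linarith
          have key1 : |g' mX - g' w.fst / lamA| ≤ (4*δ/lamA) * ‖g'‖ := by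
            have hval : g' mX = (sX / ((1-d)*lamA*‖w.fst‖)) * g' w.fst := by
              rw [hmXdef, map_smul, smul_eq_mul]
            rw [hval]
            have e2 : (sX / ((1-d)*lamA*‖w.fst‖)) * g' w.fst - g' w.fst / lamA
                = ((sX / ((1-d)*lamA*‖w.fst‖)) - 1/lamA) * g' w.fst := by ring
            rw [e2, abs_mul]
            have e3 : ((sX / ((1-d)*lamA*‖w.fst‖)) - 1/lamA) * ‖w.fst‖
                = sX/((1-d)*lamA) - ‖w.fst‖/lamA := by
              field_simp
            have e3abs : |(sX / ((1-d)*lamA*‖w.fst‖)) - 1/lamA| * ‖w.fst‖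
                = |sX/((1-d)*lamA) - ‖w.fst‖/lamA| := by
              rw [← e3, abs_mul, abs_norm]
            have e4 : |sX/((1-d)*lamA) - ‖w.fst‖/lamA| ≤ 4*δ/lamA := by
              have hδdiv : (0:ℝ) ≤ 3*δ/lamA := div_nonneg (by linarith) hlamA0
              have b1 : |sX/((1-d)*lamA) - 1| ≤ 3*δ/lamA := by
                rw [abs_le]
                constructor
                · linarith [ht_lb]
                · linarith [ht_ub]
              have b2 : |‖w.fst‖/lamA - 1| ≤ δ/lamA := by
                have e5 : ‖w.fst‖/lamA - 1 = (‖w.fst‖ - lamA)/lamA := by field_simp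
                rw [e5, abs_div, abs_of_pos hApos]
                have h6 : |‖w.fst‖ - lamA| ≤ δ := abs_le.mpr ⟨by linarith, by linarith⟩
                gcongr
              calc |sX/((1-d)*lamA) - ‖w.fst‖/lamA|
                  ≤ |sX/((1-d)*lamA) - 1| + |1 - ‖w.fst‖/lamA| := abs_sub_le _ 1 _
              _ = |sX/((1-d)*lamA) - 1| + |‖w.fst‖/lamA - 1| := by rw [abs_sub_comm 1]
              _ ≤ 3*δ/lamA + δ/lamA := add_le_add b1 b2
              _ = 4*δ/lamA := by ring
            calc |(sX / ((1-d)*lamA*‖w.fst‖)) - 1/lamA| * |g' w.fst|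
                ≤ |(sX / ((1-d)*lamA*‖w.fst‖)) - 1/lamA| * (‖g'‖ * ‖w.fst‖) :=
                  mul_le_mul_of_nonneg_left habs (abs_nonneg _)
            _ = (|(sX / ((1-d)*lamA*‖w.fst‖)) - 1/lamA| * ‖w.fst‖) * ‖g'‖ := by ring
            _ = |sX/((1-d)*lamA) - ‖w.fst‖/lamA| * ‖g'‖ := by rw [e3abs]
            _ ≤ (4*δ/lamA) * ‖g'‖ := mul_le_mul_of_nonneg_right e4 hg'0
          have key2 : |g' w.fst / lamA - g' xb| < δ/lamA := by
            have e5 : g' w.fst/lamA - g' xb = (g' w.fst - lamA * g' xb)/lamA := by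
              field_simp
            rw [e5, abs_div, abs_of_pos hApos]
            gcongr
          have key3 : (4*δ/lamA) * ‖g'‖ + δ/lamA ≤ δX := by
            have e6 : (4*δ/lamA) * ‖g'‖ + δ/lamA = δ*(4*‖g'‖+1)/lamA := by ring
            rw [e6, div_le_iff₀ hApos]
            have h2 : δ*(4*‖g'‖+1) ≤ δ*(4*MX+1) :=
              mul_le_mul_of_nonneg_left (by linarith) hδpos.le
            linarith [hδ4X]
          calc |g' mX - g' xb| ≤ |g' mX - g' w.fst/lamA| + |g' w.fst/lamA - g' xb| :=
                abs_sub_le _ _ _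
          _ < (4*δ/lamA) * ‖g'‖ + δ/lamA := by linarith [key1, key2]
          _ ≤ δX := key3
        have hmY_close : ∀ h' ∈ FY, |h' mY - h' yb| < δY := by
          intro h' hh'
          have hmem : h'.comp projYL ∈ Fs := by
            rw [hFsdef]
            exact Finset.mem_insert_of_mem (Finset.mem_insert_of_mem
              (Finset.mem_union_right _ (Finset.mem_image_of_mem _ hh')))
          have hg'w := hwf _ hmem
          simp only [ContinuousLinearMap.comp_apply, projYL_apply, hzdef, mk1_snd, map_smul,
            smul_eq_mul] at hg'w
          have hg'M : ‖h'‖ ≤ MY := hMYle h' hh'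
          have hg'0 : (0:ℝ) ≤ ‖h'‖ := norm_nonneg _
          have habs : |h' w.snd| ≤ ‖h'‖ * ‖w.snd‖ := by
            rw [← Real.norm_eq_abs]; exact h'.le_opNorm _
          have ht_ub : sY / ((1-c)*lamB) ≤ 1 := by rw [div_le_one hdenY]; exact hsY_ub
          have ht_lb : 1 - 3*δ/lamB ≤ sY / ((1-c)*lamB) := by
            rw [le_div_iff₀ hdenY]
            have e1 : (1 - 3*δ/lamB) * ((1-c)*lamB) = (1-c)*(lamB - 3*δ) := by
              field_simp
            rw [e1]
            have h2 : (1-c)*(lamB - 3*δ) ≤ 1*(lamB - 3*δ) :=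
              mul_le_mul_of_nonneg_right (by linarith) (by linarith)
            linarith
          have key1 : |h' mY - h' w.snd / lamB| ≤ (4*δ/lamB) * ‖h'‖ := by
            have hval : h' mY = (sY / ((1-c)*lamB*‖w.snd‖)) * h' w.snd := by
              rw [hmYdef, map_smul, smul_eq_mul]
            rw [hval]
            have e2 : (sY / ((1-c)*lamB*‖w.snd‖)) * h' w.snd - h' w.snd / lamB
                = ((sY / ((1-c)*lamB*‖w.snd‖)) - 1/lamB) * h' w.snd := by ring
            rw [e2, abs_mul]
            have e3 : ((sY / ((1-c)*lamB*‖w.snd‖)) - 1/lamB) * ‖w.snd‖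
                = sY/((1-c)*lamB) - ‖w.snd‖/lamB := by
              field_simp
            have e3abs : |(sY / ((1-c)*lamB*‖w.snd‖)) - 1/lamB| * ‖w.snd‖
                = |sY/((1-c)*lamB) - ‖w.snd‖/lamB| := by
              rw [← e3, abs_mul, abs_norm]
            have e4 : |sY/((1-c)*lamB) - ‖w.snd‖/lamB| ≤ 4*δ/lamB := by
              have hδdiv : (0:ℝ) ≤ 3*δ/lamB := div_nonneg (by linarith) hlamB0
              have b1 : |sY/((1-c)*lamB) - 1| ≤ 3*δ/lamB := by
                rw [abs_le]
                constructor
                · linarith [ht_lb]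
                · linarith [ht_ub]
              have b2 : |‖w.snd‖/lamB - 1| ≤ δ/lamB := by
                have e5 : ‖w.snd‖/lamB - 1 = (‖w.snd‖ - lamB)/lamB := by field_simp
                rw [e5, abs_div, abs_of_pos hBpos]
                have h6 : |‖w.snd‖ - lamB| ≤ δ := abs_le.mpr ⟨by linarith, by linarith⟩
                gcongr
              calc |sY/((1-c)*lamB) - ‖w.snd‖/lamB|
                  ≤ |sY/((1-c)*lamB) - 1| + |1 - ‖w.snd‖/lamB| := abs_sub_le _ 1 _
              _ = |sY/((1-c)*lamB) - 1| + |‖w.snd‖/lamB - 1| := by rw [abs_sub_comm 1]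
              _ ≤ 3*δ/lamB + δ/lamB := add_le_add b1 b2
              _ = 4*δ/lamB := by ring
            calc |(sY / ((1-c)*lamB*‖w.snd‖)) - 1/lamB| * |h' w.snd|
                ≤ |(sY / ((1-c)*lamB*‖w.snd‖)) - 1/lamB| * (‖h'‖ * ‖w.snd‖) :=
                  mul_le_mul_of_nonneg_left habs (abs_nonneg _)
            _ = (|(sY / ((1-c)*lamB*‖w.snd‖)) - 1/lamB| * ‖w.snd‖) * ‖h'‖ := by ring
            _ = |sY/((1-c)*lamB) - ‖w.snd‖/lamB| * ‖h'‖ := by rw [e3abs]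
            _ ≤ (4*δ/lamB) * ‖h'‖ := mul_le_mul_of_nonneg_right e4 hg'0
          have key2 : |h' w.snd / lamB - h' yb| < δ/lamB := by
            have e5 : h' w.snd/lamB - h' yb = (h' w.snd - lamB * h' yb)/lamB := by
              field_simp
            rw [e5, abs_div, abs_of_pos hBpos]
            gcongr
          have key3 : (4*δ/lamB) * ‖h'‖ + δ/lamB ≤ δY := by
            have e6 : (4*δ/lamB) * ‖h'‖ + δ/lamB = δ*(4*‖h'‖+1)/lamB := by ring
            rw [e6, div_le_iff₀ hBpos]
            have h2 : δ*(4*‖h'‖+1) ≤ δ*(4*MY+1) :=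
              mul_le_mul_of_nonneg_left (by linarith) hδpos.le
            linarith [hδ4Y]
          calc |h' mY - h' yb| ≤ |h' mY - h' w.snd/lamB| + |h' w.snd/lamB - h' yb| :=
                abs_sub_le _ _ _
          _ < (4*δ/lamB) * ‖h'‖ + δ/lamB := by linarith [key1, key2]
          _ ≤ δY := key3
        obtain ⟨x', hx', hx'sum⟩ := hFX mX hmX_norm hmX_close
        obtain ⟨y', hy', hy'sum⟩ := hFY mY hmY_norm hmY_close
        have hd_cb : ∀ i, d ≤ (3/8) * α i := by
          intro i
          have h2 : lamA * d ≤ lamA * ((3/8)*αmin) := by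
            rw [hdA]
            have : lamA * ((3/8)*αmin) = 2 * ((3/16)*lamA*αmin) := by ring
            rw [this]
            linarith [hδaX, hmaxY_ub]
          have h3 : d ≤ (3/8)*αmin := le_of_mul_le_mul_left h2 hApos
          have h4 : (3/8)*αmin ≤ (3/8)*α i := by linarith [hαmin_le i]
          linarith
        have hc_cb : ∀ i, c ≤ (3/8) * α i := by
          intro i
          have h2 : lamB * c ≤ lamB * ((3/8)*αmin) := by
            rw [hcB]
            have : lamB * ((3/8)*αmin) = 2 * ((3/16)*lamB*αmin) := by ring
            rw [this]
            linarith [hδaY, hmaxX_ub]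
          have h3 : c ≤ (3/8)*αmin := le_of_mul_le_mul_left h2 hBpos
          have h4 : (3/8)*αmin ≤ (3/8)*α i := by linarith [hαmin_le i]
          linarith
        rw [hCeq]
        apply (mem_ccs_iff' _ _ _).mpr
        refine ⟨fun i => if i ∈ A then mk1 ((1-d) • x' i) ((d * ‖w.snd‖⁻¹) • w.snd)
          else mk1 ((c * ‖w.fst‖⁻¹) • w.fst) ((1-c) • y' i), ?_, ?_⟩
        · intro i
          dsimp only
          by_cases hi : i ∈ A
          · rw [if_pos hi]
            have hxi := mem_ballSlice'.mp (hx' i)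
            rw [hGA i hi] at hxi
            have hdn : 0 ≤ d * ‖w.snd‖⁻¹ := mul_nonneg hd_pos.le (inv_nonneg.mpr hnv0.le)
            apply mem_ballSlice'.mpr
            constructor
            · rw [norm1_mk1, norm_smul, norm_smul, Real.norm_eq_abs, Real.norm_eq_abs,
                abs_of_pos h1d, abs_of_nonneg hdn]
              have e7 : d * ‖w.snd‖⁻¹ * ‖w.snd‖ = d := by field_simp
              rw [e7]
              have k := mul_le_mul_of_nonneg_left hxi.1 h1d.le
              linarith [k]
            · rw [dual_apply_mk1, hgapply, hhapply, map_smul, map_smul, smul_eq_mul,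
                smul_eq_mul]
              have hhv : -(‖w.snd‖) ≤ h i w.snd := by
                have h5 : |h i w.snd| ≤ ‖w.snd‖ := by
                  calc |h i w.snd| ≤ ‖h i‖ * ‖w.snd‖ := by
                        rw [← Real.norm_eq_abs]; exact (h i).le_opNorm _
                  _ ≤ 1 * ‖w.snd‖ := mul_le_mul (hh_le i) le_rfl (norm_nonneg _) zero_le_one
                  _ = ‖w.snd‖ := one_mul _
                linarith [neg_abs_le (h i w.snd)]
              have ht2 : -d ≤ (d * ‖w.snd‖⁻¹) * h i w.snd := by
                have k := mul_le_mul_of_nonneg_left hhv hdn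
                have e8 : d * ‖w.snd‖⁻¹ * -‖w.snd‖ = -d := by field_simp
                rw [e8] at k
                exact k
              have hg'x : 1 - α i / 4 < g i (x' i) := by
                have h8 := hxi.2; rw [hβa i] at h8; exact h8
              have k1 : (1-d) * (1 - α i / 4) < (1-d) * g i (x' i) :=
                mul_lt_mul_of_pos_left hg'x h1d
              have k2 : 0 ≤ d * α i := mul_nonneg hd_pos.le (hα i).le
              have k3 : (1-d) * (1 - α i/4) = 1 - α i/4 - d + d*α i/4 := by ring
              linarith [k1, k2, k3, hd_cb i, ht2, hα i]
          · rw [if_neg hi]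
            have hyi := mem_ballSlice'.mp (hy' i)
            rw [hHA i hi] at hyi
            have hcn : 0 ≤ c * ‖w.fst‖⁻¹ := mul_nonneg hc_pos.le (inv_nonneg.mpr hnu0.le)
            apply mem_ballSlice'.mpr
            constructor
            · rw [norm1_mk1, norm_smul, norm_smul, Real.norm_eq_abs, Real.norm_eq_abs,
                abs_of_pos h1c, abs_of_nonneg hcn]
              have e7 : c * ‖w.fst‖⁻¹ * ‖w.fst‖ = c := by field_simp
              rw [e7]
              have k := mul_le_mul_of_nonneg_left hyi.1 h1c.le
              linarith [k]
            · rw [dual_apply_mk1, hgapply, hhapply, map_smul, map_smul, smul_eq_mul,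
                smul_eq_mul]
              have hhv : -(‖w.fst‖) ≤ g i w.fst := by
                have h5 : |g i w.fst| ≤ ‖w.fst‖ := by
                  calc |g i w.fst| ≤ ‖g i‖ * ‖w.fst‖ := by
                        rw [← Real.norm_eq_abs]; exact (g i).le_opNorm _
                  _ ≤ 1 * ‖w.fst‖ := mul_le_mul (hg_le i) le_rfl (norm_nonneg _) zero_le_one
                  _ = ‖w.fst‖ := one_mul _
                linarith [neg_abs_le (g i w.fst)]
              have ht2 : -c ≤ (c * ‖w.fst‖⁻¹) * g i w.fst := by
                have k := mul_le_mul_of_nonneg_left hhv hcn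
                have e8 : c * ‖w.fst‖⁻¹ * -‖w.fst‖ = -c := by field_simp
                rw [e8] at k
                exact k
              have hg'x : 1 - α i / 4 < h i (y' i) := by
                have h8 := hyi.2; rw [hβa i] at h8; exact h8
              have k1 : (1-c) * (1 - α i / 4) < (1-c) * h i (y' i) :=
                mul_lt_mul_of_pos_left hg'x h1c
              have k2 : 0 ≤ c * α i := mul_nonneg hc_pos.le (hα i).le
              have k3 : (1-c) * (1 - α i/4) = 1 - α i/4 - c + c*α i/4 := by ring
              linarith [k1, k2, k3, hc_cb i, ht2, hα i]
        · have hx'sum' : (∑ i, (if i ∈ A then lam i / lamA else 0) • x' i) = mX := by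
            rw [← hx'sum, hμdef]
          have h1X : ∑ i ∈ Finset.univ.filter (· ∈ A), lam i • x' i = lamA • mX :=
            filtered_sum_eq (· ∈ A) lam hlamAne x' hx'sum'
          have hy'sum' : (∑ i, (if i ∉ A then lam i / lamB else 0) • y' i) = mY := by
            rw [← hy'sum, hνdef]
          have h1Y : ∑ i ∈ Finset.univ.filter (· ∉ A), lam i • y' i = lamB • mY :=
            filtered_sum_eq (· ∉ A) lam hlamBne y' hy'sum'
          apply mk1_ext
          · rw [fst_sum]
            simp only [WithLp.smul_fst, apply_ite (WithLp.fst : WithLp 1 (X × Y) → X), mk1_fst,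
              smul_ite]
            rw [Finset.sum_ite]
            have e9 : ∑ i ∈ Finset.univ.filter (· ∈ A), lam i • ((1-d) • x' i)
                = (1-d) • (lamA • mX) := by
              rw [← h1X, Finset.smul_sum]
              exact Finset.sum_congr rfl fun i _ => smul_comm _ _ _
            have e10 : ∑ i ∈ Finset.univ.filter (fun i => ¬ i ∈ A),
                lam i • ((c * ‖w.fst‖⁻¹) • w.fst) = lamB • ((c * ‖w.fst‖⁻¹) • w.fst) := by
              rw [← Finset.sum_smul, ← hlamBdef]
            rw [e9, e10, hmXdef]
            simp only [smul_smul]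
            rw [← add_smul]
            have hcoef : (1-d) * (lamA * (sX / ((1-d)*lamA*‖w.fst‖))) + lamB * (c * ‖w.fst‖⁻¹)
                = 1 := by
              rw [hsXdef]
              field_simp
              ring
            rw [hcoef, one_smul]
          · rw [snd_sum]
            simp only [WithLp.smul_snd, apply_ite (WithLp.snd : WithLp 1 (X × Y) → Y), mk1_snd,
              smul_ite]
            rw [Finset.sum_ite]
            have e9 : ∑ i ∈ Finset.univ.filter (fun i => ¬ i ∈ A), lam i • ((1-c) • y' i)
                = (1-c) • (lamB • mY) := by
              rw [← h1Y, Finset.smul_sum]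
              exact Finset.sum_congr rfl fun i _ => smul_comm _ _ _
            have e10 : ∑ i ∈ Finset.univ.filter (· ∈ A),
                lam i • ((d * ‖w.snd‖⁻¹) • w.snd) = lamA • ((d * ‖w.snd‖⁻¹) • w.snd) := by
              rw [← Finset.sum_smul, ← hlamAdef]
            rw [e9, e10, hmYdef]
            simp only [smul_smul]
            rw [← add_smul]
            have hcoef : lamA * (d * ‖w.snd‖⁻¹) + (1-c) * (lamB * (sY / ((1-c)*lamB*‖w.snd‖)))
                = 1 := by
              rw [hsYdef]
              field_simp
              ring
            rw [hcoef, one_smul]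
end
end
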